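/- arXiv:math/0702407 — 7 statements merged into one kernel-verified Lean document; each statement's English description precedes it below -/
import Mathlib

section
/- Let G be a totally disconnected metrizable locally compact group and Γ a subgroup of Aut(G). Suppose τ₁, τ₂, …, τₙ ∈ Aut(G) are distal automorphisms such that for every j = 1, 2, …, n the commutator condition [τ_j, ⟨Γ ∪ {τ₁,…,τ_{j−1}}⟩] ⊆ ⟨Γ ∪ {τ₁,…,τ_{j−1}}⟩ holds. Then for every compact open subgroup U of G invariant under Γ there exists a compact open subgroup V ⊆ U invariant under the subgroup ⟨Γ ∪ {τ₁,…,τₙ}⟩ of Aut(G). -/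
set_option linter.unusedSectionVars false


open Filter Topology MeasureTheory Pointwise

section AutDefs
variable (G : Type*) [Group G] [TopologicalSpace G]

/-- The group of topological (bicontinuous) automorphisms of `G`,
as a subgroup of the abstract automorphism group `MulAut G`. -/
def TopAut : Subgroup (MulAut G) where
  carrier := {γ : MulAut G | Continuous ⇑γ ∧ Continuous ⇑γ.symm}
  one_mem' := ⟨continuous_id, continuous_id⟩
  mul_mem' := fun ha hb => ⟨ha.1.comp hb.1, hb.2.comp ha.2⟩
  inv_mem' := fun ha => ⟨ha.2, ha.1⟩

variable {G}

/-- A subgroup `Γ` of the automorphism group acts distally on `G` : for every `x ≠ 1`,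
the identity is not in the closure of the orbit `Γ x`. -/
def IsDistalAutGroup (Γ : Subgroup ↥(TopAut G)) : Prop :=
  ∀ x : G, x ≠ 1 → (1 : G) ∉ closure {y : G | ∃ γ ∈ Γ, (γ : MulAut G) x = y}

/-- A topological automorphism is distal if the cyclic group it generates acts distally. -/
def IsDistalAut (τ : ↥(TopAut G)) : Prop := IsDistalAutGroup (Subgroup.zpowers τ)

/-- The contraction subgroup of an automorphism:
points whose forward orbit converges to the identity. -/
def ContractionAut (τ : ↥(TopAut G)) : Set G :=
  {x : G | Tendsto (fun n : ℕ => ((τ ^ n : ↥(TopAut G)) : MulAut G) x) atTop (nhds 1)}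

/-- A subgroup of the automorphism group is equicontinuous if `G` admits a
neighbourhood base at the identity consisting of invariant neighbourhoods. -/
def IsEquicontinuousAutGroup (Γ : Subgroup ↥(TopAut G)) : Prop :=
  ∀ U ∈ nhds (1 : G), ∃ V ∈ nhds (1 : G), V ⊆ U ∧ ∀ γ ∈ Γ, (γ : MulAut G) '' V = V

end AutDefs

section Aux
variable {G : Type*} [Group G] [TopologicalSpace G] [IsTopologicalGroup G]

private def aut (σ : ↥(TopAut G)) : G → G := ⇑(σ : MulAut G)

private lemma aut_cont (σ : ↥(TopAut G)) : Continuous (aut σ) := σ.2.1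

private lemma aut_mul (σ δ : ↥(TopAut G)) : aut (σ * δ) = aut σ ∘ aut δ := by
  show ⇑((↑(σ * δ) : MulAut G)) = _
  rw [Subgroup.coe_mul, MulAut.coe_mul]; rfl

private lemma aut_pow (σ : ↥(TopAut G)) (k : ℕ) : aut (σ ^ k) = (aut σ)^[k] := by
  induction k with
  | zero =>
    show ⇑((↑(σ ^ 0) : MulAut G)) = _
    simp [Function.iterate_zero, MulAut.coe_one]
  | succ k ih =>
    rw [pow_succ, aut_mul, ih, Function.iterate_succ]

private lemma aut_inv_aut (σ : ↥(TopAut G)) (x : G) : aut σ⁻¹ (aut σ x) = x := by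
  exact MulAut.inv_apply_self G (σ : MulAut G) x

private lemma aut_aut_inv (σ : ↥(TopAut G)) (x : G) : aut σ (aut σ⁻¹ x) = x := by
  exact MulAut.apply_inv_self G (σ : MulAut G) x

private lemma aut_map_mul (σ : ↥(TopAut G)) (a b : G) :
    aut σ (a * b) = aut σ a * aut σ b := map_mul (↑σ : MulAut G) a b

private lemma aut_map_inv (σ : ↥(TopAut G)) (a : G) :
    aut σ a⁻¹ = (aut σ a)⁻¹ := map_inv (↑σ : MulAut G) a

private lemma aut_map_one (σ : ↥(TopAut G)) : aut σ 1 = 1 := map_one (↑σ : MulAut G)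

private lemma distal_inv {σ : ↥(TopAut G)} (h : IsDistalAut σ) : IsDistalAut σ⁻¹ := by
  unfold IsDistalAut IsDistalAutGroup at *
  rw [Subgroup.zpowers_inv]
  exact h

end Aux

section Ellis
variable {G : Type*} [Group G] [TopologicalSpace G] [IsTopologicalGroup G] [T2Space G]

set_option maxHeartbeats 1600000 in
private lemma ellis (σ : ↥(TopAut G)) (hσ : IsDistalAut σ) {C : Set G} (hC : IsCompact C)
    {z : G} (hz : ∀ k : ℕ, (aut σ⁻¹)^[k] z ∈ C) :
    ∀ k : ℕ, (aut σ⁻¹)^[k] (aut σ z) ∈ C := by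
  set f : G → G := aut σ⁻¹ with hf_def
  have hf : Continuous f := aut_cont _
  set D : Set G := ⋂ k : ℕ, f^[k] ⁻¹' C with hD_def
  have hmemD : ∀ x : G, x ∈ D ↔ ∀ k : ℕ, f^[k] x ∈ C := fun x => Set.mem_iInter
  have hDclosed : IsClosed D :=
    isClosed_iInter fun k => hC.isClosed.preimage (hf.iterate k)
  have hDC : D ⊆ C := fun x hx => by simpa using (hmemD x).1 hx 0
  have hDcomp : IsCompact D := hC.of_isClosed_subset hDclosed hDC
  have hzD : z ∈ D := (hmemD z).2 hz
  have hfD : ∀ x ∈ D, f x ∈ D := by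
    intro x hx
    refine (hmemD _).2 fun k => ?_
    rw [← Function.iterate_succ_apply]
    exact (hmemD x).1 hx (k + 1)
  haveI : CompactSpace ↥D := isCompact_iff_compactSpace.mp hDcomp
  set F : ↥D → ↥D := fun x => ⟨f ↑x, hfD _ x.2⟩ with hF_def
  have hFcont : Continuous F := (hf.comp continuous_subtype_val).subtype_mk _
  have hFcoe : ∀ (k : ℕ) (x : ↥D), (↑(F^[k] x) : G) = f^[k] ↑x := by
    intro k
    induction k with
    | zero => intro x; rfl
    | succ k ih =>
      intro x
      rw [Function.iterate_succ_apply', Function.iterate_succ_apply']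
      show f ↑(F^[k] x) = _
      rw [ih]
  letI mulInst : Mul (↥D → ↥D) := ⟨fun a b => a ∘ b⟩
  letI : Semigroup (↥D → ↥D) := { mulInst with mul_assoc := fun _ _ _ => rfl }
  have hmul_left : ∀ r : ↥D → ↥D, Continuous (· * r) :=
    fun r => continuous_pi fun x => continuous_apply (r x)
  set S : ℕ → Set (↥D → ↥D) := fun m => {g | ∃ k, m ≤ k ∧ g = F^[k]} with hS_def
  set E : ℕ → Set (↥D → ↥D) := fun m => closure (S m) with hE_def
  have hSmem : ∀ m, F^[m] ∈ S m := fun m => ⟨m, le_rfl, rfl⟩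
  have hEmono : ∀ m, E (m + 1) ⊆ E m :=
    fun m => closure_mono fun g ⟨k, hk, hgk⟩ => ⟨k, (Nat.le_succ m).trans hk, hgk⟩
  have hFiterCont : ∀ a : ℕ, Continuous (F^[a]) := fun a => hFcont.iterate a
  have hstep1 : ∀ (a : ℕ) (q : ↥D → ↥D), q ∈ E 0 → F^[a] * q ∈ E a := by
    intro a q hq
    have hL : Continuous fun r : ↥D → ↥D => F^[a] * r :=
      continuous_pi fun x => (hFiterCont a).comp (continuous_apply x)
    have h2 : (fun r : ↥D → ↥D => F^[a] * r) '' S 0 ⊆ S a := by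
      rintro - ⟨g, ⟨b, -, rfl⟩, rfl⟩
      exact ⟨a + b, Nat.le_add_right a b, by rw [Function.iterate_add]; rfl⟩
    exact (closure_mono h2)
      ((image_closure_subset_closure_image hL) (Set.mem_image_of_mem _ hq))
  have hstep2 : ∀ (m : ℕ) (p q : ↥D → ↥D), p ∈ E m → q ∈ E 0 → p * q ∈ E m := by
    intro m p q hp hq
    have hR : Continuous fun r : ↥D → ↥D => r * q := hmul_left q
    have h2 : (fun r : ↥D → ↥D => r * q) '' S m ⊆ E m := by
      rintro - ⟨g, ⟨k, hk, rfl⟩, rfl⟩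
      refine (closure_mono ?_) (hstep1 k q hq)
      rintro x ⟨k', hk', hx⟩
      exact ⟨k', hk.trans hk', hx⟩
    exact closure_minimal h2 isClosed_closure
      ((image_closure_subset_closure_image hR) (Set.mem_image_of_mem _ hp))
  set s : Set (↥D → ↥D) := ⋂ m, E m with hs_def
  have hsnemp : s.Nonempty :=
    IsCompact.nonempty_iInter_of_sequence_nonempty_isCompact_isClosed E hEmono
      (fun m => ⟨F^[m], subset_closure (hSmem m)⟩)
      isClosed_closure.isCompact (fun m => isClosed_closure)
  have hscomp : IsCompact s := (isClosed_iInter fun m => isClosed_closure).isCompact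
  have hsmul : ∀ x ∈ s, ∀ y ∈ s, x * y ∈ s := fun x hx y hy =>
    Set.mem_iInter.2 fun m => hstep2 m x y (Set.mem_iInter.1 hx m) (Set.mem_iInter.1 hy 0)
  obtain ⟨u, hus, huu⟩ :=
    exists_idempotent_in_compact_subsemigroup hmul_left s hsnemp hscomp hsmul
  -- injectivity of u from distality
  have hinj : ∀ x y : ↥D, u x = u y → x = y := by
    intro x y hxy
    by_contra hne
    have hp : (↑x : G) * (↑y : G)⁻¹ ≠ 1 := by
      intro h
      exact hne (Subtype.ext (by rwa [mul_inv_eq_one] at h))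
    apply hσ _ hp
    rw [mem_closure_iff]
    intro W hWopen hW1
    have hcc : ((↑(u x) : G), (↑(u x) : G)) ∈ (fun p : G × G => p.1 * p.2⁻¹) ⁻¹' W := by
      simpa using hW1
    have hPo : IsOpen ((fun p : G × G => p.1 * p.2⁻¹) ⁻¹' W) :=
      hWopen.preimage (continuous_fst.mul continuous_snd.inv)
    obtain ⟨B₁, B₂, hB₁, hB₂, hcB₁, hcB₂, hBsub⟩ := isOpen_prod_iff.1 hPo _ _ hcc
    have hcont_x : Continuous fun g : ↥D → ↥D => (↑(g x) : G) :=
      continuous_subtype_val.comp (continuous_apply x)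
    have hcont_y : Continuous fun g : ↥D → ↥D => (↑(g y) : G) :=
      continuous_subtype_val.comp (continuous_apply y)
    have hO : IsOpen {g : ↥D → ↥D | (↑(g x) : G) ∈ B₁ ∧ (↑(g y) : G) ∈ B₂} :=
      (hB₁.preimage hcont_x).inter (hB₂.preimage hcont_y)
    have huO : u ∈ {g : ↥D → ↥D | (↑(g x) : G) ∈ B₁ ∧ (↑(g y) : G) ∈ B₂} := by
      refine ⟨hcB₁, ?_⟩
      rw [← hxy]
      exact hcB₂
    obtain ⟨g, hgO, k, -, rfl⟩ :=
      (mem_closure_iff.1 (Set.mem_iInter.1 hus 0)) _ hO huO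
    refine ⟨f^[k] ↑x * (f^[k] ↑y)⁻¹, ?_, ?_⟩
    · exact hBsub (show (f^[k] ↑x, f^[k] (↑y : G)) ∈ B₁ ×ˢ B₂ from
        ⟨by rw [← hFcoe k x]; exact hgO.1, by rw [← hFcoe k y]; exact hgO.2⟩)
    · refine ⟨σ⁻¹ ^ k, Subgroup.pow_mem _ (Subgroup.inv_mem _ (Subgroup.mem_zpowers σ)) k, ?_⟩
      show aut (σ⁻¹ ^ k) (↑x * (↑y : G)⁻¹) = _
      have hmm : aut (σ⁻¹ ^ k) (↑x * (↑y : G)⁻¹)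
          = aut (σ⁻¹ ^ k) ↑x * (aut (σ⁻¹ ^ k) ↑y)⁻¹ := by
        rw [aut_map_mul, aut_map_inv]
      rw [hmm, aut_pow, ← hf_def]
  have hid : ∀ x : ↥D, u x = x := fun x => hinj _ _ (congrFun huu x)
  -- recurrence and conclusion
  suffices hmem : aut σ z ∈ D by
    intro k; exact (hmemD _).1 hmem k
  set T : Set G := {w | ∃ k, 1 ≤ k ∧ w = f^[k] z} with hT_def
  have hzcl : z ∈ closure T := by
    rw [mem_closure_iff]
    intro W hWopen hzW
    have hO : IsOpen {g : ↥D → ↥D | (↑(g ⟨z, hzD⟩) : G) ∈ W} :=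
      hWopen.preimage (continuous_subtype_val.comp (continuous_apply _))
    have huO : u ∈ {g : ↥D → ↥D | (↑(g ⟨z, hzD⟩) : G) ∈ W} := by
      show (↑(u ⟨z, hzD⟩) : G) ∈ W
      rw [hid ⟨z, hzD⟩]
      exact hzW
    obtain ⟨g, hgO, k, hk1, rfl⟩ :=
      (mem_closure_iff.1 (Set.mem_iInter.1 hus 1)) _ hO huO
    refine ⟨f^[k] z, ?_, k, hk1, rfl⟩
    have := hgO
    rwa [Set.mem_setOf_eq, hFcoe k ⟨z, hzD⟩] at this
  have h2 : aut σ z ∈ closure ((aut σ) '' T) :=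
    image_closure_subset_closure_image (aut_cont σ) (Set.mem_image_of_mem _ hzcl)
  have h3 : (aut σ) '' T ⊆ D := by
    rintro - ⟨w, ⟨k, hk1, rfl⟩, rfl⟩
    obtain ⟨k', rfl⟩ : ∃ k', k = k' + 1 := ⟨k - 1, (Nat.succ_pred_eq_of_pos hk1).symm⟩
    rw [Function.iterate_succ_apply', hf_def, aut_aut_inv]
    refine (hmemD _).2 fun m => ?_
    rw [← Function.iterate_add_apply]
    exact hz (m + k')
  exact closure_minimal h3 hDclosed h2

end Ellis

section Step
variable {G : Type*} [Group G] [TopologicalSpace G] [IsTopologicalGroup G]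

private lemma iter_inv_iter (σ : ↥(TopAut G)) :
    ∀ (k : ℕ) (w : G), (aut σ⁻¹)^[k] ((aut σ)^[k] w) = w := by
  intro k
  induction k with
  | zero => intro w; rfl
  | succ k ih =>
    intro w
    rw [Function.iterate_succ_apply' (aut σ), Function.iterate_succ_apply (aut σ⁻¹),
      aut_inv_aut, ih]

private lemma iter_cancel (σ : ↥(TopAut G)) {k m : ℕ} (h : k ≤ m) (w : G) :
    (aut σ⁻¹)^[k] ((aut σ)^[m] w) = (aut σ)^[m - k] w := by
  conv_lhs => rw [← Nat.add_sub_cancel' h, Function.iterate_add_apply, iter_inv_iter]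

private def Vsub (σ : ↥(TopAut G)) (U : Subgroup G) : Subgroup G where
  carrier := ⋂ k : ℕ, (aut σ)^[k] ⁻¹' (U : Set G)
  one_mem' := Set.mem_iInter.2 fun k => by
    have : (aut σ)^[k] (1 : G) = 1 := by rw [← aut_pow]; exact aut_map_one _
    rw [Set.mem_preimage, this]; exact U.one_mem
  mul_mem' := fun {a b} ha hb => Set.mem_iInter.2 fun k => by
    have : (aut σ)^[k] (a * b) = (aut σ)^[k] a * (aut σ)^[k] b := by
      rw [← aut_pow]; exact aut_map_mul _ a b
    rw [Set.mem_preimage, this]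
    exact U.mul_mem (Set.mem_iInter.1 ha k) (Set.mem_iInter.1 hb k)
  inv_mem' := fun {a} ha => Set.mem_iInter.2 fun k => by
    have : (aut σ)^[k] a⁻¹ = ((aut σ)^[k] a)⁻¹ := by
      rw [← aut_pow]; exact aut_map_inv _ a
    rw [Set.mem_preimage, this]
    exact U.inv_mem (Set.mem_iInter.1 ha k)

private lemma Vsub_mem (σ : ↥(TopAut G)) (U : Subgroup G) (x : G) :
    x ∈ (Vsub σ U : Set G) ↔ ∀ k : ℕ, (aut σ)^[k] x ∈ (U : Set G) :=
  Set.mem_iInter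

set_option maxHeartbeats 1000000 in
private lemma step [T2Space G] (Λ : Subgroup ↥(TopAut G)) (σ : ↥(TopAut G)) (hσ : IsDistalAut σ)
    (hc : ∀ h ∈ Λ, σ * h * σ⁻¹ * h⁻¹ ∈ Λ)
    (U : Subgroup G) (hUc : IsCompact (U : Set G)) (hUo : IsOpen (U : Set G))
    (hUinv : ∀ γ ∈ Λ, (γ : MulAut G) '' (U : Set G) = U) :
    ∃ V : Subgroup G, IsCompact (V : Set G) ∧ IsOpen (V : Set G) ∧ (V : Set G) ⊆ (U : Set G) ∧
      ((σ : MulAut G) '' (V : Set G) = V) ∧ ∀ γ ∈ Λ, (γ : MulAut G) '' (V : Set G) = V := by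
  have hUcl : IsClosed (U : Set G) := hUc.isClosed
  set V : Subgroup G := Vsub σ U with hV_def
  have hVmem := Vsub_mem σ U
  have hVU : (V : Set G) ⊆ (U : Set G) := fun x hx => (hVmem x).1 hx 0
  have hVcl : IsClosed (V : Set G) :=
    isClosed_iInter fun k => hUcl.preimage ((aut_cont σ).iterate k)
  have hVcomp : IsCompact (V : Set G) := hUc.of_isClosed_subset hVcl hVU
  have hgV : ∀ x ∈ (V : Set G), aut σ x ∈ (V : Set G) := by
    intro x hx
    refine (hVmem _).2 fun k => ?_
    rw [← Function.iterate_succ_apply]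
    exact (hVmem x).1 hx (k + 1)
  have hfV : ∀ x ∈ (V : Set G), aut σ⁻¹ x ∈ (V : Set G) := by
    intro x hx
    have h := ellis (G := G) σ⁻¹ (distal_inv hσ) hUc (z := x)
      (fun k => by rw [inv_inv]; exact (hVmem x).1 hx k)
    refine (hVmem _).2 fun k => ?_
    have h2 := h k
    rwa [inv_inv] at h2
  have hσV : (σ : MulAut G) '' (V : Set G) = V := by
    apply Set.Subset.antisymm
    · rintro - ⟨x, hx, rfl⟩
      exact hgV x hx
    · intro x hx
      exact ⟨aut σ⁻¹ x, hfV x hx, aut_aut_inv σ x⟩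
  -- stabilization implies openness
  have hstab : ∃ n : ℕ, ∀ y : G, (∀ k ≤ n, (aut σ)^[k] y ∈ (U : Set G)) →
      (aut σ)^[n + 1] y ∈ (U : Set G) := by
    by_contra hcon
    push_neg at hcon
    set A : ℕ → Set G := fun n =>
      (⋂ k ∈ Set.Iic n, (aut σ⁻¹)^[k] ⁻¹' (U : Set G)) ∩ (aut σ) ⁻¹' (U : Set G)ᶜ
      with hA_def
    have hAmem : ∀ (n : ℕ) (x : G), x ∈ A n ↔
        (∀ k ≤ n, (aut σ⁻¹)^[k] x ∈ (U : Set G)) ∧ aut σ x ∉ (U : Set G) := by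
      intro n x
      rw [hA_def]
      simp [Set.mem_iInter, Set.mem_Iic]
    have hAclosed : ∀ n, IsClosed (A n) := by
      intro n
      refine IsClosed.inter ?_ ?_
      · exact isClosed_biInter fun k _ => hUcl.preimage ((aut_cont σ⁻¹).iterate k)
      · exact (hUo.isClosed_compl).preimage (aut_cont σ)
    have hAdec : ∀ n, A (n + 1) ⊆ A n := by
      intro n x hx
      obtain ⟨h1, h2⟩ := (hAmem (n + 1) x).1 hx
      exact (hAmem n x).2 ⟨fun k hk => h1 k (hk.trans (Nat.le_succ n)), h2⟩
    have hAnon : ∀ n, (A n).Nonempty := by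
      intro n
      obtain ⟨y, hy1, hy2⟩ := hcon n
      refine ⟨(aut σ)^[n] y, (hAmem n _).2 ⟨fun k hk => ?_, ?_⟩⟩
      · rw [iter_cancel σ hk]
        exact hy1 (n - k) (Nat.sub_le n k)
      · rw [← Function.iterate_succ_apply' (aut σ)]
        exact hy2
    have hA0U : A 0 ⊆ (U : Set G) := by
      intro x hx
      have := ((hAmem 0 x).1 hx).1 0 le_rfl
      simpa using this
    have hA0comp : IsCompact (A 0) := hUc.of_isClosed_subset (hAclosed 0) hA0U
    obtain ⟨z, hzA⟩ :=
      IsCompact.nonempty_iInter_of_sequence_nonempty_isCompact_isClosed A hAdec hAnon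
        hA0comp hAclosed
    have hz1 : ∀ k : ℕ, (aut σ⁻¹)^[k] z ∈ (U : Set G) := fun k =>
      ((hAmem k z).1 (Set.mem_iInter.1 hzA k)).1 k le_rfl
    have hz2 : aut σ z ∉ (U : Set G) := ((hAmem 0 z).1 (Set.mem_iInter.1 hzA 0)).2
    have := ellis (G := G) σ hσ hUc (z := z) hz1 0
    exact hz2 (by simpa using this)
  obtain ⟨n, hn⟩ := hstab
  have hWV : ∀ y : G, (∀ k ≤ n, (aut σ)^[k] y ∈ (U : Set G)) → y ∈ (V : Set G) := by
    intro y hy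
    have key : ∀ m : ℕ, ∀ k ≤ n, (aut σ)^[k] ((aut σ)^[m] y) ∈ (U : Set G) := by
      intro m
      induction m with
      | zero => intro k hk; simpa using hy k hk
      | succ m ih =>
        intro k hk
        rw [Function.iterate_succ_apply' (aut σ) m y, ← Function.iterate_succ_apply (aut σ)]
        rcases Nat.lt_or_ge k n with h | h
        · exact ih (k + 1) (Nat.succ_le_of_lt h)
        · have hkn : k = n := le_antisymm hk h
          subst hkn
          exact hn _ ih
    refine (hVmem y).2 fun m => ?_
    have := key m 0 (Nat.zero_le n)
    simpa using this
  have hVopen : IsOpen (V : Set G) := by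
    have hEq : (V : Set G) = ⋂ k ∈ Set.Iic n, (aut σ)^[k] ⁻¹' (U : Set G) := by
      apply Set.Subset.antisymm
      · intro x hx
        exact Set.mem_iInter₂.2 fun k _ => (hVmem x).1 hx k
      · intro x hx
        exact hWV x fun k hk => Set.mem_iInter₂.1 hx k hk
    rw [hEq]
    exact (Set.finite_Iic n).isOpen_biInter fun k _ => hUo.preimage ((aut_cont σ).iterate k)
  -- invariance under Λ
  have hconj : ∀ (k : ℕ), ∀ h ∈ Λ, σ ^ k * h * (σ ^ k)⁻¹ ∈ Λ := by
    intro k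
    induction k with
    | zero => intro h hh; simpa using hh
    | succ k ih =>
      intro h hh
      have h1 : σ ^ k * h * (σ ^ k)⁻¹ ∈ Λ := ih h hh
      have h2 := hc _ h1
      have h3 : σ * (σ ^ k * h * (σ ^ k)⁻¹) * σ⁻¹ ∈ Λ := by
        have h4 := Λ.mul_mem h2 h1
        have heq : σ * (σ ^ k * h * (σ ^ k)⁻¹) * σ⁻¹ * (σ ^ k * h * (σ ^ k)⁻¹)⁻¹ *
            (σ ^ k * h * (σ ^ k)⁻¹) = σ * (σ ^ k * h * (σ ^ k)⁻¹) * σ⁻¹ := by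
          group
        rwa [heq] at h4
      have heq2 : σ ^ (k + 1) * h * (σ ^ (k + 1))⁻¹
          = σ * (σ ^ k * h * (σ ^ k)⁻¹) * σ⁻¹ := by
        group
      rw [heq2]
      exact h3
  have hΛV : ∀ γ ∈ Λ, ∀ x ∈ (V : Set G), aut γ x ∈ (V : Set G) := by
    intro γ hγ x hx
    refine (hVmem _).2 fun k => ?_
    have hkey : σ ^ k * γ = (σ ^ k * γ * (σ ^ k)⁻¹) * σ ^ k :=
      (inv_mul_cancel_right _ _).symm
    have heq : (aut σ)^[k] (aut γ x) = aut (σ ^ k * γ * (σ ^ k)⁻¹) ((aut σ)^[k] x) := by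
      calc (aut σ)^[k] (aut γ x) = aut (σ ^ k) (aut γ x) := by rw [aut_pow]
        _ = aut (σ ^ k * γ) x := by rw [aut_mul]; rfl
        _ = aut ((σ ^ k * γ * (σ ^ k)⁻¹) * σ ^ k) x := by rw [← hkey]
        _ = aut (σ ^ k * γ * (σ ^ k)⁻¹) (aut (σ ^ k) x) := by rw [aut_mul]; rfl
        _ = aut (σ ^ k * γ * (σ ^ k)⁻¹) ((aut σ)^[k] x) := by rw [aut_pow]
    rw [heq]
    have hU' := hUinv _ (hconj k γ hγ)
    have hmem : aut (σ ^ k * γ * (σ ^ k)⁻¹) ((aut σ)^[k] x)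
        ∈ aut (σ ^ k * γ * (σ ^ k)⁻¹) '' (U : Set G) :=
      Set.mem_image_of_mem _ ((hVmem x).1 hx k)
    rwa [show aut (σ ^ k * γ * (σ ^ k)⁻¹) '' (U : Set G)
        = ((σ ^ k * γ * (σ ^ k)⁻¹ : ↥(TopAut G)) : MulAut G) '' (U : Set G) from rfl,
      hU'] at hmem
  have hΛV' : ∀ γ ∈ Λ, (γ : MulAut G) '' (V : Set G) = V := by
    intro γ hγ
    apply Set.Subset.antisymm
    · rintro - ⟨x, hx, rfl⟩
      exact hΛV γ hγ x hx
    · intro x hx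
      exact ⟨aut γ⁻¹ x, hΛV γ⁻¹ (Λ.inv_mem hγ) x hx, aut_aut_inv γ x⟩
  exact ⟨V, hVcomp, hVopen, hVU, hσV, hΛV'⟩

end Step

section Main
variable {G : Type*} [Group G] [TopologicalSpace G] [IsTopologicalGroup G]

private def stab (W : Subgroup G) : Subgroup ↥(TopAut G) where
  carrier := {γ : ↥(TopAut G) | (γ : MulAut G) '' (W : Set G) = W}
  one_mem' := by
    show ((1 : ↥(TopAut G)) : MulAut G) '' (W : Set G) = W
    rw [show ((1 : ↥(TopAut G)) : MulAut G) = 1 from rfl, MulAut.coe_one, Set.image_id]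
  mul_mem' := fun {a b} ha hb => by
    show ((a * b : ↥(TopAut G)) : MulAut G) '' (W : Set G) = W
    rw [show ((a * b : ↥(TopAut G)) : MulAut G) = (a : MulAut G) * (b : MulAut G) from rfl,
      MulAut.coe_mul, Set.image_comp]
    rw [show (⇑(b : MulAut G) '' (W : Set G)) = W from hb]
    exact ha
  inv_mem' := fun {a} ha => by
    show ((a⁻¹ : ↥(TopAut G)) : MulAut G) '' (W : Set G) = W
    have h1 : ((a⁻¹ : ↥(TopAut G)) : MulAut G) = (a : MulAut G)⁻¹ := rfl
    rw [h1]
    conv_lhs => rw [← ha]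
    rw [← Set.image_comp]
    have h2 : ⇑((a : MulAut G)⁻¹) ∘ ⇑(a : MulAut G) = id :=
      funext fun x => MulAut.inv_apply_self G (a : MulAut G) x
    rw [h2, Set.image_id]

end Main



/-- **Lemma 2.2.** Let `G` be a totally disconnected metrizable locally compact group, `Γ` a
subgroup of `Aut(G)`, and `τ₁, …, τₙ` distal automorphisms such that for every `j`,
`[τ_j, ⟨Γ ∪ {τ₁,…,τ_{j-1}}⟩] ⊆ ⟨Γ ∪ {τ₁,…,τ_{j-1}}⟩`. Then every compact open subgroup `U`
invariant under `Γ` contains a compact open subgroup `V` invariant under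
`⟨Γ ∪ {τ₁,…,τₙ}⟩`. -/
theorem lemma_2_2 {G : Type*} [Group G] [TopologicalSpace G] [IsTopologicalGroup G]
    [TotallyDisconnectedSpace G] [TopologicalSpace.MetrizableSpace G] [LocallyCompactSpace G]
    (Γ : Subgroup ↥(TopAut G)) (n : ℕ) (τ : Fin n → ↥(TopAut G))
    (hdistal : ∀ j : Fin n, IsDistalAut (τ j))
    (hcomm : ∀ j : Fin n, ∀ h ∈ Subgroup.closure ((Γ : Set ↥(TopAut G)) ∪ τ '' {i : Fin n | i < j}),
      τ j * h * (τ j)⁻¹ * h⁻¹ ∈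
        Subgroup.closure ((Γ : Set ↥(TopAut G)) ∪ τ '' {i : Fin n | i < j}))
    (U : Subgroup G) (hUcomp : IsCompact (U : Set G)) (hUopen : IsOpen (U : Set G))
    (hUinv : ∀ γ ∈ Γ, (γ : MulAut G) '' (U : Set G) = U) :
    ∃ V : Subgroup G, IsCompact (V : Set G) ∧ IsOpen (V : Set G) ∧ (V : Set G) ⊆ (U : Set G) ∧
      ∀ γ ∈ Subgroup.closure ((Γ : Set ↥(TopAut G)) ∪ Set.range τ),
        (γ : MulAut G) '' (V : Set G) = V := by
  suffices H : ∀ j : ℕ, j ≤ n → ∃ V : Subgroup G, IsCompact (V : Set G) ∧ IsOpen (V : Set G) ∧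
      (V : Set G) ⊆ (U : Set G) ∧
      ∀ γ ∈ Subgroup.closure ((Γ : Set ↥(TopAut G)) ∪ τ '' {i : Fin n | (i : ℕ) < j}),
        (γ : MulAut G) '' (V : Set G) = V by
    obtain ⟨V, h1, h2, h3, h4⟩ := H n le_rfl
    have hset : τ '' {i : Fin n | (i : ℕ) < n} = Set.range τ := by
      apply Set.Subset.antisymm
      · rintro - ⟨i, -, rfl⟩; exact ⟨i, rfl⟩
      · rintro - ⟨i, rfl⟩; exact ⟨i, i.isLt, rfl⟩
    exact ⟨V, h1, h2, h3, by rw [← hset]; exact h4⟩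
  intro j
  induction j with
  | zero =>
    intro _
    refine ⟨U, hUcomp, hUopen, subset_rfl, ?_⟩
    have hempty : {i : Fin n | (i : ℕ) < 0} = ∅ := by
      ext i; simp
    rw [hempty, Set.image_empty, Set.union_empty, Subgroup.closure_eq]
    exact hUinv
  | succ j ih =>
    intro hj
    obtain ⟨V, hVc, hVo, hVU, hVinv⟩ := ih (Nat.le_of_succ_le hj)
    have hjn : j < n := hj
    have hcommJ : ∀ h ∈ Subgroup.closure ((Γ : Set ↥(TopAut G)) ∪
        τ '' {i : Fin n | (i : ℕ) < j}),
        τ ⟨j, hjn⟩ * h * (τ ⟨j, hjn⟩)⁻¹ * h⁻¹ ∈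
          Subgroup.closure ((Γ : Set ↥(TopAut G)) ∪ τ '' {i : Fin n | (i : ℕ) < j}) :=
      hcomm ⟨j, hjn⟩
    obtain ⟨W, hWc, hWo, hWV, hWσ, hWΛ⟩ :=
      step (Subgroup.closure ((Γ : Set ↥(TopAut G)) ∪ τ '' {i : Fin n | (i : ℕ) < j}))
        (τ ⟨j, hjn⟩) (hdistal ⟨j, hjn⟩) hcommJ V hVc hVo hVinv
    refine ⟨W, hWc, hWo, hWV.trans hVU, ?_⟩
    have hle : Subgroup.closure ((Γ : Set ↥(TopAut G)) ∪
        τ '' {i : Fin n | (i : ℕ) < j + 1}) ≤ stab W := by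
      rw [Subgroup.closure_le]
      rintro γ (hγ | ⟨i, hi, rfl⟩)
      · exact hWΛ γ (Subgroup.subset_closure (Or.inl hγ))
      · rcases Nat.lt_or_ge (i : ℕ) j with h | h
        · exact hWΛ (τ i) (Subgroup.subset_closure (Or.inr ⟨i, h, rfl⟩))
        · have hij : i = ⟨j, hjn⟩ := Fin.ext (le_antisymm (Nat.lt_succ_iff.1 hi) h)
          rw [hij]
          exact hWσ
    intro γ hγ
    exact hle hγ
end

section
/- Let G be a totally disconnected metrizable locally compact group and Γ a subgroup of Aut(G). Suppose that every γ ∈ Γ is distal and that Γ has a normal equicontinuous subgroup Γ₁ such that the quotient group Γ/Γ₁ contains a polycyclic subgroup of finite index. Then Γ is equicontinuous. -/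
open Filter Topology MeasureTheory Pointwise

/-- A group is polycyclic: it has a finite subnormal series with cyclic factors. -/
def IsPolycyclic (H : Type*) [Group H] : Prop :=
  ∃ (n : ℕ) (s : Fin (n + 1) → Subgroup H),
    s 0 = ⊥ ∧ s (Fin.last n) = ⊤ ∧
    ∀ i : Fin n, s i.castSucc ≤ s i.succ ∧
      ∃ hn : ((s i.castSucc).subgroupOf (s i.succ)).Normal,
        letI := hn
        IsCyclic (↥(s i.succ) ⧸ (s i.castSucc).subgroupOf (s i.succ))

/-- A group contains a polycyclic subgroup of finite index. -/
def HasPolycyclicFiniteIndex (H : Type*) [Group H] : Prop :=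
  ∃ P : Subgroup H, IsPolycyclic ↥P ∧ P.FiniteIndex

section Helpers

variable {G : Type*} [Group G] [TopologicalSpace G]

/-- The subgroup of `TopAut G` of automorphisms mapping a given set onto itself. -/
def autSetStab (M : Set G) : Subgroup ↥(TopAut G) where
  carrier := {γ : ↥(TopAut G) | (γ : MulAut G) '' M = M}
  one_mem' := by
    show ⇑((1 : ↥(TopAut G)) : MulAut G) '' M = M
    simp
  mul_mem' := by
    intro a b ha hb
    show ⇑((a * b : ↥(TopAut G)) : MulAut G) '' M = M
    have hab : ⇑((a * b : ↥(TopAut G)) : MulAut G)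
        = ⇑((a : MulAut G)) ∘ ⇑((b : MulAut G)) := rfl
    rw [hab, Set.image_comp]
    rw [show ⇑((b : MulAut G)) '' M = M from hb]
    exact ha
  inv_mem' := by
    intro a ha
    show ⇑((a⁻¹ : ↥(TopAut G)) : MulAut G) '' M = M
    conv_lhs => rw [← show ⇑((a : MulAut G)) '' M = M from ha]
    rw [← Set.image_comp]
    have : ⇑((a⁻¹ : ↥(TopAut G)) : MulAut G) ∘ ⇑((a : MulAut G)) = id := by
      funext x
      show ((a⁻¹ : ↥(TopAut G)) : MulAut G) (((a : MulAut G)) x) = x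
      have : (((a⁻¹ * a : ↥(TopAut G)) : MulAut G)) x = x := by
        rw [inv_mul_cancel]; simp
      simpa using this
    rw [this, Set.image_id]

lemma mem_autSetStab {M : Set G} {γ : ↥(TopAut G)} :
    γ ∈ autSetStab M ↔ (γ : MulAut G) '' M = M := Iff.rfl

lemma autSetStab_mem_of_maps {M : Set G} {γ : ↥(TopAut G)}
    (h1 : ∀ x ∈ M, (γ : MulAut G) x ∈ M) (h2 : ∀ x ∈ M, ((γ⁻¹ : ↥(TopAut G)) : MulAut G) x ∈ M) :
    γ ∈ autSetStab M := by
  rw [mem_autSetStab]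
  apply Set.Subset.antisymm
  · rintro y ⟨x, hx, rfl⟩; exact h1 x hx
  · intro x hx
    refine ⟨((γ⁻¹ : ↥(TopAut G)) : MulAut G) x, h2 x hx, ?_⟩
    have : (((γ * γ⁻¹ : ↥(TopAut G)) : MulAut G)) x = x := by
      rw [mul_inv_cancel]; simp
    simpa using this

lemma isEquicontinuousAutGroup_iff {Γ : Subgroup ↥(TopAut G)} :
    IsEquicontinuousAutGroup Γ ↔
      ∀ U ∈ nhds (1 : G), ∃ V ∈ nhds (1 : G), V ⊆ U ∧ Γ ≤ autSetStab V := by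
  constructor
  · intro h U hU
    obtain ⟨V, hV, hVU, hinv⟩ := h U hU
    exact ⟨V, hV, hVU, fun γ hγ => hinv γ hγ⟩
  · intro h U hU
    obtain ⟨V, hV, hVU, hinv⟩ := h U hU
    exact ⟨V, hV, hVU, fun γ hγ => hinv hγ⟩

lemma isEquicontinuousAutGroup_mono {Γ' Γ : Subgroup ↥(TopAut G)} (h : Γ' ≤ Γ)
    (hΓ : IsEquicontinuousAutGroup Γ) : IsEquicontinuousAutGroup Γ' := by
  intro U hU
  obtain ⟨V, hV, hVU, hinv⟩ := hΓ U hU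
  exact ⟨V, hV, hVU, fun γ hγ => hinv γ (h hγ)⟩

end Helpers

section EllisTrap

variable {G : Type*} [Group G] [TopologicalSpace G] [IsTopologicalGroup G] [T2Space G]

private lemma mulAut_pow_apply_succ (σ : MulAut G) (s : ℕ) (x : G) :
    ⇑(σ ^ (s + 1)) x = σ (⇑(σ ^ s) x) := by
  rw [pow_succ']
  rfl

private lemma mulAut_pow_continuous (σ : MulAut G) (hσ : Continuous ⇑σ) (s : ℕ) :
    Continuous ⇑(σ ^ s) := by
  induction s with
  | zero => simpa using continuous_id
  | succ s ih =>
    have : ⇑(σ ^ (s + 1)) = ⇑σ ∘ ⇑(σ ^ s) := funext fun x => mulAut_pow_apply_succ σ s x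
    rw [this]
    exact hσ.comp ih

/-- **Core recurrence argument** via the Ellis–Numakura idempotent lemma. If all forward
iterates of `u` under a bicontinuous automorphism `σ` stay in a compact open set `K`, the
action of `σ` is (uniformly) distal, and `σ⁻¹ u ∉ K`, we reach a contradiction: by distality
every element of the enveloping semigroup is injective, so an idempotent of it is the
identity, hence `u` is recurrent for `σ` and `σ⁻¹ u` is a limit of forward iterates of `u`,
all of which lie in `K`. -/
private lemma ellis_trap (σ : MulAut G) (hσ : Continuous ⇑σ) (hσ' : Continuous ⇑σ.symm)
    (hdist : ∀ c : G, c ≠ 1 → ∃ B : Set G, IsOpen B ∧ (1 : G) ∈ B ∧ ∀ s : ℕ, ⇑(σ ^ s) c ∉ B)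
    (K : Set G) (hKcomp : IsCompact K)
    (u : G) (hu : ∀ s : ℕ, ⇑(σ ^ s) u ∈ K) (hexit : ⇑σ.symm u ∉ K) : False := by
  classical
  set R : Set G := Set.range (fun s : ℕ => ⇑(σ ^ s) u) with hR
  set X : Set G := closure R with hXdef
  have hRK : R ⊆ K := by rintro _ ⟨s, rfl⟩; exact hu s
  have hXK : X ⊆ K := closure_minimal hRK hKcomp.isClosed
  have hXcomp : IsCompact X := hKcomp.of_isClosed_subset isClosed_closure hXK
  have huX : u ∈ X := subset_closure ⟨0, by simp⟩
  have hmaps : Set.MapsTo ⇑σ X X := by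
    have h1 : ⇑σ '' X ⊆ closure (⇑σ '' R) := image_closure_subset_closure_image hσ
    have h2 : ⇑σ '' R ⊆ R := by
      rintro _ ⟨_, ⟨s, rfl⟩, rfl⟩
      exact ⟨s + 1, by simpa using mulAut_pow_apply_succ σ s u⟩
    intro x hx
    exact (h1.trans (closure_mono h2)) (Set.mem_image_of_mem _ hx)
  haveI : CompactSpace ↥X := isCompact_iff_compactSpace.mp hXcomp
  haveI : Nonempty ↥X := ⟨⟨u, huX⟩⟩
  set σm : ↥X → ↥X := fun x => ⟨σ x, hmaps x.2⟩ with hσm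
  have hσmc : Continuous σm := (hσ.comp continuous_subtype_val).subtype_mk _
  have hitc : ∀ (s : ℕ) (x : ↥X), ((σm^[s] x : ↥X) : G) = ⇑(σ ^ s) (x : G) := by
    intro s
    induction s with
    | zero => intro x; simp
    | succ s ih =>
      intro x
      rw [Function.iterate_succ_apply', mulAut_pow_apply_succ]
      show σ ((σm^[s] x : ↥X) : G) = _
      rw [ih]
  -- the enveloping semigroup
  set S : Set (↥X → ↥X) := {f | ∃ s : ℕ, 1 ≤ s ∧ f = σm^[s]} with hS
  set E : Set (↥X → ↥X) := closure S with hE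
  have hcont_right : ∀ g : ↥X → ↥X, Continuous fun f : ↥X → ↥X => f ∘ g :=
    fun g => continuous_pi fun x => continuous_apply (g x)
  have hcont_left : ∀ s : ℕ, Continuous fun f : ↥X → ↥X => σm^[s] ∘ f :=
    fun s => continuous_pi fun x => (hσmc.iterate s).comp (continuous_apply x)
  have hE_left : ∀ s : ℕ, 1 ≤ s → ∀ g ∈ E, σm^[s] ∘ g ∈ E := by
    intro s hs g hg
    have h1 : (fun f : ↥X → ↥X => σm^[s] ∘ f) '' E ⊆
        closure ((fun f : ↥X → ↥X => σm^[s] ∘ f) '' S) :=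
      image_closure_subset_closure_image (hcont_left s)
    have h2 : (fun f : ↥X → ↥X => σm^[s] ∘ f) '' S ⊆ S := by
      rintro _ ⟨_, ⟨b, hb, rfl⟩, rfl⟩
      exact ⟨s + b, le_trans hs (Nat.le_add_right s b), (Function.iterate_add σm s b).symm⟩
    exact (h1.trans (closure_mono h2)) (Set.mem_image_of_mem _ hg)
  have hEmul : ∀ f ∈ E, ∀ g ∈ E, f ∘ g ∈ E := by
    intro f hf g hg
    have hcl : IsClosed {f : ↥X → ↥X | f ∘ g ∈ E} :=
      IsClosed.preimage (hcont_right g) isClosed_closure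
    have hSsub : S ⊆ {f : ↥X → ↥X | f ∘ g ∈ E} := by
      rintro _ ⟨s, hs, rfl⟩
      exact hE_left s hs g hg
    exact closure_minimal hSsub hcl hf
  haveI : Nonempty ↥E := ⟨⟨σm^[1], subset_closure ⟨1, le_refl 1, rfl⟩⟩⟩
  letI : Mul ↥E := ⟨fun f g => ⟨f.1 ∘ g.1, hEmul _ f.2 _ g.2⟩⟩
  letI : Semigroup ↥E := { mul_assoc := fun _ _ _ => Subtype.ext rfl }
  haveI : CompactSpace ↥E := isCompact_iff_compactSpace.mp
    (isClosed_closure.isCompact)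
  have hmul_left : ∀ r : ↥E, Continuous (· * r) := by
    intro r
    exact ((hcont_right r.1).comp continuous_subtype_val).subtype_mk _
  obtain ⟨η, hη⟩ := exists_idempotent_of_compact_t2_of_continuous_mul_left hmul_left
  -- every element of E is injective by distality
  have hinj : ∀ f ∈ E, Function.Injective f := by
    intro f hf x y hfxy
    by_contra hne
    have hcne : ((x : G)⁻¹ * (y : G)) ≠ 1 := by
      intro h
      exact hne (Subtype.ext (by
        have := inv_mul_eq_one.mp h
        exact this))
    obtain ⟨B, hBopen, hB1, hBavoid⟩ := hdist _ hcne
    obtain ⟨W, hWopen, hW1, hWB⟩ : ∃ W : Set G, IsOpen W ∧ (1 : G) ∈ W ∧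
        ∀ a ∈ W, ∀ b ∈ W, a⁻¹ * b ∈ B := by
      have hcm : Continuous fun p : G × G => p.1⁻¹ * p.2 :=
        (continuous_fst.inv).mul continuous_snd
      have hmem : {p : G × G | p.1⁻¹ * p.2 ∈ B} ∈ nhds ((1 : G), (1 : G)) :=
        hcm.continuousAt.preimage_mem_nhds (by simpa using hBopen.mem_nhds hB1)
      rw [nhds_prod_eq, Filter.mem_prod_iff] at hmem
      obtain ⟨W₁, hW₁, W₂, hW₂, hsub⟩ := hmem
      obtain ⟨W₁', hW₁s, hW₁o, hW₁1⟩ := mem_nhds_iff.mp hW₁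
      obtain ⟨W₂', hW₂s, hW₂o, hW₂1⟩ := mem_nhds_iff.mp hW₂
      refine ⟨W₁' ∩ W₂', hW₁o.inter hW₂o, ⟨hW₁1, hW₂1⟩, ?_⟩
      intro a ha b hb
      exact hsub (Set.mk_mem_prod (hW₁s ha.1) (hW₂s hb.2))
    set z : G := ((f x : ↥X) : G) with hz
    have hzy : ((f y : ↥X) : G) = z := by rw [← hfxy]
    set O : Set (↥X → ↥X) :=
      {g | z⁻¹ * ((g x : ↥X) : G) ∈ W ∧ z⁻¹ * ((g y : ↥X) : G) ∈ W} with hO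
    have hOopen : IsOpen O := by
      apply IsOpen.inter
      · exact hWopen.preimage
          (continuous_const.mul (continuous_subtype_val.comp (continuous_apply x)))
      · exact hWopen.preimage
          (continuous_const.mul (continuous_subtype_val.comp (continuous_apply y)))
    have hfO : f ∈ O := by
      constructor
      · rw [← hz]; simpa using hW1
      · rw [hzy]; simpa using hW1
    obtain ⟨g, hgO, hgS⟩ := mem_closure_iff.mp hf O hOopen hfO
    obtain ⟨s, _hs, rfl⟩ := hgS
    apply hBavoid s
    have hmapmul : ⇑(σ ^ s) ((x : G)⁻¹ * (y : G))
        = (⇑(σ ^ s) (x : G))⁻¹ * ⇑(σ ^ s) (y : G) := by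
      rw [map_mul, map_inv]
    rw [hmapmul]
    have h1 : z⁻¹ * ⇑(σ ^ s) (x : G) ∈ W := by rw [← hitc s x]; exact hgO.1
    have h2 : z⁻¹ * ⇑(σ ^ s) (y : G) ∈ W := by rw [← hitc s y]; exact hgO.2
    have heq : (⇑(σ ^ s) (x : G))⁻¹ * ⇑(σ ^ s) (y : G)
        = (z⁻¹ * ⇑(σ ^ s) (x : G))⁻¹ * (z⁻¹ * ⇑(σ ^ s) (y : G)) := by group
    rw [heq]
    exact hWB _ h1 _ h2
  -- the idempotent is the identity
  have hid : ∀ x : ↥X, η.1 x = x := by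
    intro x
    have h1 : η.1 (η.1 x) = η.1 x := congrFun (congrArg Subtype.val hη) x
    exact hinj η.1 η.2 h1
  -- recurrence of u
  have hurec : u ∈ closure {w : G | ∃ s : ℕ, 1 ≤ s ∧ ⇑(σ ^ s) u = w} := by
    rw [mem_closure_iff]
    intro O hOopen hOu
    have hopen : IsOpen {g : ↥X → ↥X | ((g ⟨u, huX⟩ : ↥X) : G) ∈ O} :=
      hOopen.preimage (continuous_subtype_val.comp (continuous_apply _))
    have hηin : η.1 ∈ {g : ↥X → ↥X | ((g ⟨u, huX⟩ : ↥X) : G) ∈ O} := by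
      show ((η.1 ⟨u, huX⟩ : ↥X) : G) ∈ O
      rw [hid]
      exact hOu
    obtain ⟨g, hgmem, hgS⟩ := mem_closure_iff.mp η.2 _ hopen hηin
    obtain ⟨s, hs, rfl⟩ := hgS
    exact ⟨((σm^[s] ⟨u, huX⟩ : ↥X) : G), hgmem, ⟨s, hs, (hitc s ⟨u, huX⟩).symm⟩⟩
  -- conclusion
  have hfin : ⇑σ.symm u ∈ X := by
    have h1 : ⇑σ.symm u ∈ ⇑σ.symm '' closure {w : G | ∃ s : ℕ, 1 ≤ s ∧ ⇑(σ ^ s) u = w} :=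
      ⟨u, hurec, rfl⟩
    have h2 : ⇑σ.symm '' closure {w : G | ∃ s : ℕ, 1 ≤ s ∧ ⇑(σ ^ s) u = w} ⊆
        closure (⇑σ.symm '' {w : G | ∃ s : ℕ, 1 ≤ s ∧ ⇑(σ ^ s) u = w}) :=
      image_closure_subset_closure_image hσ'
    have h3 : ⇑σ.symm '' {w : G | ∃ s : ℕ, 1 ≤ s ∧ ⇑(σ ^ s) u = w} ⊆ R := by
      rintro _ ⟨_, ⟨s, hs, rfl⟩, rfl⟩
      obtain ⟨t, rfl⟩ : ∃ t, s = t + 1 := ⟨s - 1, by omega⟩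
      refine ⟨t, ?_⟩
      rw [mulAut_pow_apply_succ, MulEquiv.symm_apply_apply]
    exact (h2.trans (closure_mono h3)) h1
  exact hexit (hXK hfin)

end EllisTrap

section TrapFamily

variable {G : Type*} [Group G] [TopologicalSpace G] [IsTopologicalGroup G] [T2Space G]

private lemma trap_family (σ : MulAut G) (hσ : Continuous ⇑σ) (hσ' : Continuous ⇑σ.symm)
    (hdist : ∀ c : G, c ≠ 1 → ∃ B : Set G, IsOpen B ∧ (1 : G) ∈ B ∧ ∀ s : ℕ, ⇑(σ ^ s) c ∉ B)
    (K : Set G) (hKcomp : IsCompact K) (hKopen : IsOpen K)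
    (hfam : ∀ k : ℕ, ∃ w : G, (∀ s : ℕ, s ≤ k → ⇑(σ ^ s) w ∈ K) ∧ ⇑σ.symm w ∉ K) : False := by
  set T : ℕ → Set G := fun k =>
    {w : G | (∀ s : ℕ, s ≤ k → ⇑(σ ^ s) w ∈ K) ∧ ⇑σ.symm w ∈ Kᶜ} with hT
  have hTclosed : ∀ k, IsClosed (T k) := by
    intro k
    apply IsClosed.inter
    · show IsClosed {w : G | ∀ s : ℕ, s ≤ k → ⇑(σ ^ s) w ∈ K}
      have : {w : G | ∀ s : ℕ, s ≤ k → ⇑(σ ^ s) w ∈ K}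
          = ⋂ (s : ℕ) (_ : s ≤ k), (⇑(σ ^ s)) ⁻¹' K := by
        ext w; simp [Set.mem_iInter]
      rw [this]
      exact isClosed_iInter fun s => isClosed_iInter fun _ =>
        hKcomp.isClosed.preimage (mulAut_pow_continuous σ hσ s)
    · exact (hKopen.isClosed_compl).preimage hσ'
  have hTsub : ∀ k, T k ⊆ K := by
    intro k w hw
    have := hw.1 0 (Nat.zero_le k)
    simpa using this
  have hTcomp : ∀ k, IsCompact (T k) := fun k =>
    hKcomp.of_isClosed_subset (hTclosed k) (hTsub k)
  have hTanti : ∀ {k l : ℕ}, k ≤ l → T l ⊆ T k := by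
    intro k l hkl w hw
    exact ⟨fun s hs => hw.1 s (hs.trans hkl), hw.2⟩
  have hdir : Directed (· ⊇ ·) T := by
    intro i j
    exact ⟨max i j, hTanti (le_max_left i j), hTanti (le_max_right i j)⟩
  have hTne : ∀ k, (T k).Nonempty := by
    intro k
    obtain ⟨w, h1, h2⟩ := hfam k
    exact ⟨w, h1, h2⟩
  obtain ⟨u, hu⟩ := IsCompact.nonempty_iInter_of_directed_nonempty_isCompact_isClosed
    T hdir hTne hTcomp hTclosed
  rw [Set.mem_iInter] at hu
  exact ellis_trap σ hσ hσ' hdist K hKcomp u (fun s => (hu s).1 s le_rfl) (hu 0).2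

end TrapFamily

section MainCore

variable {G : Type*} [Group G] [TopologicalSpace G] [IsTopologicalGroup G]
    [TotallyDisconnectedSpace G] [TopologicalSpace.MetrizableSpace G] [LocallyCompactSpace G]

/-- **Key single-automorphism theorem**: a distal automorphism of a totally disconnected
metrizable locally compact group generates an equicontinuous group of automorphisms. -/
theorem equicont_zpowers_of_distal (τ : ↥(TopAut G)) (hτ : IsDistalAut τ) :
    IsEquicontinuousAutGroup (Subgroup.zpowers τ) := by
  intro U hU
  set e : MulAut G := (τ : MulAut G) with he
  have hec : Continuous ⇑e := τ.2.1
  have hec' : Continuous ⇑e.symm := τ.2.2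
  have hcoez : ∀ n : ℤ, ((τ ^ n : ↥(TopAut G)) : MulAut G) = e ^ n := fun n =>
    SubgroupClass.coe_zpow τ n
  have hecz : ∀ n : ℤ, Continuous ⇑(e ^ n) := by
    intro n
    have h := (τ ^ n).2.1
    rwa [hcoez n] at h
  have happ : ∀ (a b : ℤ) (x : G), ⇑(e ^ (a + b)) x = ⇑(e ^ a) (⇑(e ^ b) x) := by
    intro a b x
    rw [zpow_add]
    rfl
  have happ1 : ∀ x : G, ⇑(e ^ (1 : ℤ)) x = ⇑e x := fun x => by simp
  have happm1 : ∀ x : G, ⇑(e ^ (-1 : ℤ)) x = ⇑e.symm x := fun x => by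
    rw [zpow_neg_one, MulAut.inv_def]
  have hshift : ∀ (i : ℤ) (x : G), ⇑(e ^ i) (⇑e x) = ⇑(e ^ (i + 1)) x := by
    intro i x
    have h := happ i 1 x
    rw [happ1 x] at h
    exact h.symm
  have hshift' : ∀ (i : ℤ) (x : G), ⇑(e ^ i) (⇑e.symm x) = ⇑(e ^ (i - 1)) x := by
    intro i x
    have h := happ i (-1) x
    rw [happm1 x] at h
    rw [show i + -1 = i - 1 by ring] at h
    exact h.symm
  -- distality gives uniform avoidance over all of ℤ
  have hdistz : ∀ c : G, c ≠ 1 → ∃ B : Set G, IsOpen B ∧ (1 : G) ∈ B ∧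
      ∀ n : ℤ, ⇑(e ^ n) c ∉ B := by
    intro c hc
    have h1 := hτ c hc
    rw [mem_closure_iff] at h1
    push_neg at h1
    obtain ⟨B, hBopen, hB1, hBdisj⟩ := h1
    refine ⟨B, hBopen, hB1, fun n hmem => ?_⟩
    have hin : ⇑(e ^ n) c ∈ B ∩ {y : G | ∃ γ ∈ Subgroup.zpowers τ, (γ : MulAut G) c = y} :=
      ⟨hmem, ⟨τ ^ n, Subgroup.zpow_mem_zpowers τ n, by rw [hcoez n]⟩⟩
    rw [hBdisj] at hin
    exact hin
  -- a compact open neighbourhood of 1 inside U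
  obtain ⟨s, hscomp, hs1, hsU⟩ :=
    exists_compact_subset isOpen_interior (mem_interior_iff_mem_nhds.mpr hU)
  obtain ⟨K₀, hK₀clopen, hK₀1, hK₀sub⟩ :=
    (loc_compact_Haus_tot_disc_of_zero_dim).mem_nhds_iff.mp
      (isOpen_interior.mem_nhds hs1)
  have hK₀comp : IsCompact K₀ :=
    hscomp.of_isClosed_subset hK₀clopen.1 (hK₀sub.trans interior_subset)
  have hK₀open : IsOpen K₀ := hK₀clopen.2
  have hK₀U : K₀ ⊆ U := (hK₀sub.trans interior_subset).trans (hsU.trans interior_subset)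
  -- the candidate invariant neighbourhood
  set V : Set G := {x : G | ∀ n : ℤ, ⇑(e ^ n) x ∈ K₀} with hV
  have hVU : V ⊆ U := fun x hx => hK₀U (by simpa using hx 0)
  have hVinv : ∀ γ, γ ∈ Subgroup.zpowers τ → (γ : MulAut G) '' V = V := by
    intro γ hγ
    obtain ⟨k, hk⟩ := Subgroup.mem_zpowers_iff.mp hγ
    subst hk
    rw [hcoez k]
    apply Set.Subset.antisymm
    · rintro _ ⟨x, hx, rfl⟩
      intro n
      have h := hx (n + k)
      rwa [happ n k x] at h
    · intro x hx
      refine ⟨⇑(e ^ (-k)) x, fun n => ?_, ?_⟩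
      · have h := hx (n + -k)
        rwa [happ n (-k) x] at h
      · have h := (happ k (-k) x).symm
        simpa using h
  by_cases hstab : ∃ m : ℕ, ∀ x : G, (∀ i : ℤ, |i| ≤ (m : ℤ) → ⇑(e ^ i) x ∈ K₀) →
      ∀ i : ℤ, |i| ≤ (m : ℤ) + 1 → ⇑(e ^ i) x ∈ K₀
  · -- good case: the chain of neighbourhoods stabilizes and V is a neighbourhood
    obtain ⟨m, hm⟩ := hstab
    set C : Set G := {x : G | ∀ i : ℤ, |i| ≤ (m : ℤ) → ⇑(e ^ i) x ∈ K₀} with hC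
    have hCopen : IsOpen C := by
      have hCeq : C = ⋂ i ∈ Finset.Icc (-(m : ℤ)) (m : ℤ), (⇑(e ^ i)) ⁻¹' K₀ := by
        ext x
        simp only [hC, Set.mem_setOf_eq, Set.mem_iInter, Finset.mem_Icc, Set.mem_preimage]
        constructor
        · intro h i hi
          exact h i (abs_le.mpr hi)
        · intro h i hi
          exact h i (abs_le.mp hi)
      rw [hCeq]
      exact isOpen_biInter_finset fun i _ => hK₀open.preimage (hecz i)
    have hC1 : (1 : G) ∈ C := fun i _ => by simpa using hK₀1
    have hstep : ∀ j : ℕ, ∀ x ∈ C, ∀ i : ℤ, |i| ≤ (m : ℤ) + j → ⇑(e ^ i) x ∈ K₀ := by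
      intro j
      induction j with
      | zero =>
        intro x hx i hi
        exact hx i (by simpa using hi)
      | succ j ih =>
        intro x hx i hi
        have hxC1 : ∀ i : ℤ, |i| ≤ (m : ℤ) + 1 → ⇑(e ^ i) x ∈ K₀ := hm x hx
        have hex : ⇑e x ∈ C := by
          intro i' hi'
          have h1 : |i' + 1| ≤ (m : ℤ) + 1 := by
            have h2 := abs_le.mp hi'
            rw [abs_le]
            omega
          have h2 := hxC1 (i' + 1) h1
          rwa [← hshift i' x] at h2
        have hex' : ⇑e.symm x ∈ C := by
          intro i' hi'
          have h1 : |i' - 1| ≤ (m : ℤ) + 1 := by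
            have h2 := abs_le.mp hi'
            rw [abs_le]
            omega
          have h2 := hxC1 (i' - 1) h1
          rwa [← hshift' i' x] at h2
        rcases lt_trichotomy i 0 with hneg | hzero | hpos
        · have h1 : |i + 1| ≤ (m : ℤ) + j := by
            have h2 := abs_le.mp hi
            rw [abs_le]
            push_cast at *
            omega
          have h2 := ih (⇑e.symm x) hex' (i + 1) h1
          rw [hshift' (i + 1) x] at h2
          rwa [show i + 1 - 1 = i by ring] at h2
        · subst hzero
          exact hx 0 (by simp)
        · have h1 : |i - 1| ≤ (m : ℤ) + j := by
            have h2 := abs_le.mp hi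
            rw [abs_le]
            push_cast at *
            omega
          have h2 := ih (⇑e x) hex (i - 1) h1
          rw [hshift (i - 1) x] at h2
          rwa [show i - 1 + 1 = i by ring] at h2
    have hCV : C ⊆ V := by
      intro x hx n
      have h1 : |n| ≤ (m : ℤ) + n.natAbs := by
        have h2 : |n| = (n.natAbs : ℤ) := Int.abs_eq_natAbs n
        omega
      exact hstep n.natAbs x hx n h1
    exact ⟨V, Filter.mem_of_superset (hCopen.mem_nhds hC1) hCV, hVU, hVinv⟩
  · -- bad case: contradiction with distality
    exfalso
    push_neg at hstab
    have hwit : ∀ k : ℕ, ∃ x : G, (∀ i : ℤ, |i| ≤ (k : ℤ) → ⇑(e ^ i) x ∈ K₀) ∧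
        ∃ i : ℤ, (i = (k : ℤ) + 1 ∨ i = -((k : ℤ) + 1)) ∧ ⇑(e ^ i) x ∉ K₀ := by
      intro k
      obtain ⟨x, hx, i, hile, hinot⟩ := hstab k
      refine ⟨x, hx, i, ?_, hinot⟩
      have h1 : ¬(|i| ≤ (k : ℤ)) := fun h => hinot (hx i h)
      have h2 := abs_le.mp hile
      have h3 : ¬(-(k : ℤ) ≤ i ∧ i ≤ (k : ℤ)) := fun h => h1 (abs_le.mpr h)
      omega
    set P1 : ℕ → Prop := fun k => ∃ w : G,
      (∀ s : ℕ, s ≤ k → ⇑(e ^ (-(s : ℤ))) w ∈ K₀) ∧ ⇑e w ∉ K₀ with hP1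
    set P2 : ℕ → Prop := fun k => ∃ w : G,
      (∀ s : ℕ, s ≤ k → ⇑(e ^ ((s : ℤ))) w ∈ K₀) ∧ ⇑e.symm w ∉ K₀ with hP2
    have hP1anti : ∀ {k l : ℕ}, k ≤ l → P1 l → P1 k := by
      intro k l hkl h
      obtain ⟨w, h1, h2⟩ := h
      exact ⟨w, fun s hs => h1 s (hs.trans hkl), h2⟩
    have hP2anti : ∀ {k l : ℕ}, k ≤ l → P2 l → P2 k := by
      intro k l hkl h
      obtain ⟨w, h1, h2⟩ := h
      exact ⟨w, fun s hs => h1 s (hs.trans hkl), h2⟩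
    have hPK : ∀ K : ℕ, P1 K ∨ P2 K := by
      intro K
      obtain ⟨x, hx, i, hcase, hnot⟩ := hwit K
      rcases hcase with h | h
      · left
        refine ⟨⇑(e ^ (K : ℤ)) x, ?_, ?_⟩
        · intro s hs
          have h1 : ⇑(e ^ (-(s : ℤ))) (⇑(e ^ (K : ℤ)) x) = ⇑(e ^ ((K : ℤ) - s)) x := by
            have h2 := happ (-(s : ℤ)) (K : ℤ) x
            rw [show -(s : ℤ) + K = (K : ℤ) - s by ring] at h2
            exact h2.symm
          rw [h1]
          apply hx
          rw [abs_le]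
          constructor <;> [skip; skip] <;> push_cast <;> omega
        · have h2 : ⇑e (⇑(e ^ (K : ℤ)) x) = ⇑(e ^ ((K : ℤ) + 1)) x := by
            rw [← happ1 (⇑(e ^ (K : ℤ)) x)]
            have h3 := happ 1 (K : ℤ) x
            rw [show (1 : ℤ) + K = (K : ℤ) + 1 by ring] at h3
            exact h3.symm
          rw [h2, ← h]
          exact hnot
      · right
        refine ⟨⇑(e ^ (-(K : ℤ))) x, ?_, ?_⟩
        · intro s hs
          have h1 : ⇑(e ^ ((s : ℤ))) (⇑(e ^ (-(K : ℤ))) x) = ⇑(e ^ ((s : ℤ) - K)) x := by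
            have h2 := happ ((s : ℤ)) (-(K : ℤ)) x
            rw [show (s : ℤ) + -(K : ℤ) = (s : ℤ) - K by ring] at h2
            exact h2.symm
          rw [h1]
          apply hx
          rw [abs_le]
          constructor <;> push_cast <;> omega
        · have h2 : ⇑e.symm (⇑(e ^ (-(K : ℤ))) x) = ⇑(e ^ (-((K : ℤ) + 1))) x := by
            rw [← happm1 (⇑(e ^ (-(K : ℤ))) x)]
            have h3 := happ (-1 : ℤ) (-(K : ℤ)) x
            rw [show (-1 : ℤ) + -(K : ℤ) = -((K : ℤ) + 1) by ring] at h3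
            exact h3.symm
          rw [h2, ← h]
          exact hnot
    have hdicho : (∀ k, P1 k) ∨ (∀ k, P2 k) := by
      by_contra hcon
      push_neg at hcon
      obtain ⟨⟨k₁, hk₁⟩, ⟨k₂, hk₂⟩⟩ := hcon
      rcases hPK (max k₁ k₂) with h | h
      · exact hk₁ (hP1anti (le_max_left k₁ k₂) h)
      · exact hk₂ (hP2anti (le_max_right k₁ k₂) h)
    have hinvpow : ∀ s : ℕ, ((e⁻¹ : MulAut G) ^ s) = e ^ (-(s : ℤ)) := by
      intro s
      rw [inv_pow, ← zpow_natCast e s, ← zpow_neg]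
    have hnatpow : ∀ s : ℕ, (e ^ ((s : ℤ))) = e ^ s := fun s => zpow_natCast e s
    have hco1 : ⇑(e⁻¹ : MulAut G) = ⇑e.symm := by rw [MulAut.inv_def]
    have hco2 : ⇑((e⁻¹ : MulAut G).symm) = ⇑e := by rw [MulAut.inv_def, MulEquiv.symm_symm]
    rcases hdicho with hP | hP
    · refine trap_family (e⁻¹) (by rw [hco1]; exact hec') (by rw [hco2]; exact hec)
        ?_ K₀ hK₀comp hK₀open ?_
      · intro c hc
        obtain ⟨B, h1, h2, h3⟩ := hdistz c hc
        exact ⟨B, h1, h2, fun s => by rw [hinvpow s]; exact h3 _⟩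
      · intro k
        obtain ⟨w, h1, h2⟩ := hP k
        refine ⟨w, fun s hs => by rw [hinvpow s]; exact h1 s hs, ?_⟩
        rw [show ⇑((e⁻¹ : MulAut G).symm) w = ⇑e w from congrFun hco2 w]
        exact h2
    · refine trap_family e hec hec' ?_ K₀ hK₀comp hK₀open ?_
      · intro c hc
        obtain ⟨B, h1, h2, h3⟩ := hdistz c hc
        refine ⟨B, h1, h2, fun s => ?_⟩
        rw [← hnatpow s]
        exact h3 _
      · intro k
        obtain ⟨w, h1, h2⟩ := hP k
        refine ⟨w, fun s hs => ?_, h2⟩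
        rw [← hnatpow s]
        exact h1 s hs

end MainCore

section Core

variable {G : Type*} [Group G] [TopologicalSpace G] [IsTopologicalGroup G]
    [TotallyDisconnectedSpace G] [TopologicalSpace.MetrizableSpace G] [LocallyCompactSpace G]

/-- Extension step (Lemma 2.2): an equicontinuous group extended by a
distal automorphism normalizing it is equicontinuous. -/
theorem equicont_sup_zpowers (Δ : Subgroup ↥(TopAut G)) (τ : ↥(TopAut G))
    (hτ : IsDistalAut τ)
    (hc : ∀ δ ∈ Δ, τ⁻¹ * δ * τ ∈ Δ) (hc' : ∀ δ ∈ Δ, τ * δ * τ⁻¹ ∈ Δ)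
    (hΔ : IsEquicontinuousAutGroup Δ) :
    IsEquicontinuousAutGroup (Δ ⊔ Subgroup.zpowers τ) := by
  rw [isEquicontinuousAutGroup_iff]
  intro U hU
  obtain ⟨L, hL, hLU, hLinv⟩ := equicont_zpowers_of_distal τ hτ U hU
  have hLτ : ∀ σ ∈ Subgroup.zpowers τ, (σ : MulAut G) '' L = L := hLinv
  -- M := points whose Δ-orbit stays in L
  set M : Set G := {g : G | ∀ δ : ↥(TopAut G), δ ∈ Δ → (δ : MulAut G) g ∈ L} with hM
  have hML : M ⊆ L := by
    intro g hg
    have := hg 1 (one_mem Δ)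
    simpa using this
  have hMnhds : M ∈ nhds (1 : G) := by
    obtain ⟨V, hV, hVL, hVinv⟩ := hΔ L hL
    refine Filter.mem_of_superset hV ?_
    intro g hg δ hδ
    have : (δ : MulAut G) g ∈ (δ : MulAut G) '' V := ⟨g, hg, rfl⟩
    rw [hVinv δ hδ] at this
    exact hVL this
  refine ⟨M, hMnhds, hML.trans hLU, ?_⟩
  refine sup_le ?_ ?_
  · -- Δ stabilizes M
    intro δ₀ hδ₀
    have key : ∀ δ₀' ∈ Δ, ∀ x ∈ M, (δ₀' : MulAut G) x ∈ M := by
      intro δ₀' hδ₀' x hx δ hδ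
      have h1 : ((δ * δ₀' : ↥(TopAut G)) : MulAut G) x ∈ L := hx (δ * δ₀') (mul_mem hδ hδ₀')
      simpa using h1
    exact autSetStab_mem_of_maps (key δ₀ hδ₀) (key δ₀⁻¹ (inv_mem hδ₀))
  · -- zpowers τ stabilizes M
    rw [Subgroup.zpowers_le]
    have keyτ : ∀ (σ : ↥(TopAut G)), σ ∈ Subgroup.zpowers τ →
        (∀ δ ∈ Δ, σ⁻¹ * δ * σ ∈ Δ) → ∀ x ∈ M, (σ : MulAut G) x ∈ M := by
      intro σ hσz hσ x hx δ hδ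
      have hmem : σ⁻¹ * δ * σ ∈ Δ := hσ δ hδ
      have h1 : ((σ⁻¹ * δ * σ : ↥(TopAut G)) : MulAut G) x ∈ L := hx _ hmem
      have h2 : ((σ : ↥(TopAut G)) : MulAut G) (((σ⁻¹ * δ * σ : ↥(TopAut G)) : MulAut G) x)
          ∈ (σ : MulAut G) '' L := ⟨_, h1, rfl⟩
      rw [hLτ σ hσz] at h2
      have h3 : ((σ : ↥(TopAut G)) : MulAut G) (((σ⁻¹ * δ * σ : ↥(TopAut G)) : MulAut G) x)
          = ((δ : ↥(TopAut G)) : MulAut G) (((σ : ↥(TopAut G)) : MulAut G) x) := by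
        have : ((σ * (σ⁻¹ * δ * σ) : ↥(TopAut G)) : MulAut G) x
            = ((δ * σ : ↥(TopAut G)) : MulAut G) x := by
          congr 1
          push_cast [show σ * (σ⁻¹ * δ * σ) = δ * σ by group]
          rfl
        simpa using this
      rwa [h3] at h2
    refine autSetStab_mem_of_maps (keyτ τ (Subgroup.mem_zpowers τ) hc) ?_
    exact keyτ τ⁻¹ (inv_mem (Subgroup.mem_zpowers τ)) (by
      intro δ hδ
      have := hc' δ hδ
      simpa [mul_assoc] using this)

end Core

section Main

variable {G : Type*} [Group G] [TopologicalSpace G] [IsTopologicalGroup G]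
    [TotallyDisconnectedSpace G] [TopologicalSpace.MetrizableSpace G] [LocallyCompactSpace G]

set_option maxHeartbeats 4000000 in
theorem lemma_2_3' (Γ : Subgroup ↥(TopAut G)) (hdistal : ∀ γ : ↥(TopAut G), γ ∈ Γ → IsDistalAut γ)
    (Γ₁ : Subgroup ↥Γ) [Γ₁.Normal]
    (hequi : IsEquicontinuousAutGroup (Γ₁.map Γ.subtype))
    (hpoly : HasPolycyclicFiniteIndex (↥Γ ⧸ Γ₁)) :
    IsEquicontinuousAutGroup Γ := by
  classical
  obtain ⟨P, ⟨n, s, h0, hlast, hstep⟩, hPfin⟩ := hpoly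
  set π : ↥Γ →* ↥Γ ⧸ Γ₁ := QuotientGroup.mk' Γ₁ with hπ
  set φ : ↥Γ →* ↥(TopAut G) := Γ.subtype with hφ
  -- the ascending chain of subgroups of TopAut G coming from the polycyclic series
  have main : ∀ i : Fin (n + 1),
      IsEquicontinuousAutGroup ((((s i).map P.subtype).comap π).map φ) := by
    intro i
    induction i using Fin.induction with
    | zero =>
      have hbase : (((s 0).map P.subtype).comap π).map φ = Γ₁.map Γ.subtype := by
        rw [h0, Subgroup.map_bot, MonoidHom.comap_bot, QuotientGroup.ker_mk']
      rw [hbase]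
      exact hequi
    | succ i ih =>
      obtain ⟨hle, hn, hcyc⟩ := hstep i
      haveI := hn
      obtain ⟨gbar, hgen⟩ := hcyc.exists_generator
      obtain ⟨g0, hg0⟩ := QuotientGroup.mk'_surjective ((s i.castSucc).subgroupOf (s i.succ)) gbar
      obtain ⟨τhat, hτhat⟩ := QuotientGroup.mk'_surjective Γ₁ (P.subtype (g0 : ↥P))
      set τ : ↥(TopAut G) := φ τhat with hτdef
      have hτΓ : τ ∈ Γ := by
        rw [hτdef, hφ]
        exact SetLike.coe_mem τhat
      set Δ : Subgroup ↥(TopAut G) := (((s i.castSucc).map P.subtype).comap π).map φ with hΔdef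
      -- conjugation of the lower term by elements of `s i.succ`
      have hconjP : ∀ (e : ↥(s i.succ)) (z : ↥P), z ∈ s i.castSucc →
          (e : ↥P) * z * (e : ↥P)⁻¹ ∈ s i.castSucc := by
        intro e z hz
        have hz' : (⟨z, hle hz⟩ : ↥(s i.succ)) ∈ (s i.castSucc).subgroupOf (s i.succ) := by
          rw [Subgroup.mem_subgroupOf]; exact hz
        have h2 := hn.conj_mem _ hz' e
        rw [Subgroup.mem_subgroupOf] at h2
        simpa using h2
      have hconjQ : ∀ y ∈ (s i.castSucc).map P.subtype, ∀ (e : ↥(s i.succ)),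
          (P.subtype (e : ↥P)) * y * (P.subtype (e : ↥P))⁻¹ ∈ (s i.castSucc).map P.subtype := by
        rintro y ⟨z, hz, rfl⟩ e
        exact ⟨(e : ↥P) * z * (e : ↥P)⁻¹, hconjP e z hz, by simp [map_mul, map_inv]⟩
      have hnorm : ∀ (t : ↥Γ) (e : ↥(s i.succ)), π t = P.subtype (e : ↥P) →
          ∀ δ ∈ Δ, (φ t) * δ * (φ t)⁻¹ ∈ Δ := by
        intro t e ht δ hδ
        rw [hΔdef, Subgroup.mem_map] at hδ
        obtain ⟨y, hy, rfl⟩ := hδ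
        rw [Subgroup.mem_comap] at hy
        refine Subgroup.mem_map.mpr ⟨t * y * t⁻¹, ?_, by simp [map_mul, map_inv]⟩
        rw [Subgroup.mem_comap]
        have hπt : π (t * y * t⁻¹) = (P.subtype (e : ↥P)) * π y * (P.subtype (e : ↥P))⁻¹ := by
          simp [map_mul, map_inv, ht]
        rw [hπt]
        exact hconjQ _ hy e
      have hc : ∀ δ ∈ Δ, τ⁻¹ * δ * τ ∈ Δ := by
        intro δ hδ
        have hπ' : π τhat⁻¹ = P.subtype ((g0⁻¹ : ↥(s i.succ)) : ↥P) := by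
          rw [map_inv, hτhat]
          simp [map_inv]
        have := hnorm τhat⁻¹ g0⁻¹ hπ' δ hδ
        simpa [map_inv, hτdef] using this
      have hc' : ∀ δ ∈ Δ, τ * δ * τ⁻¹ ∈ Δ := by
        intro δ hδ
        have := hnorm τhat g0 hτhat δ hδ
        simpa [hτdef, map_inv] using this
      have hsup := equicont_sup_zpowers Δ τ (hdistal τ hτΓ) hc hc' ih
      refine isEquicontinuousAutGroup_mono ?_ hsup
      -- (s i.succ) lifted is contained in Δ ⊔ ⟨τ⟩
      intro x hx
      rw [Subgroup.mem_map] at hx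
      obtain ⟨y, hy, rfl⟩ := hx
      rw [Subgroup.mem_comap, Subgroup.mem_map] at hy
      obtain ⟨z, hz, hzq⟩ := hy
      obtain ⟨k, hk⟩ := Subgroup.mem_zpowers_iff.mp
        (hgen (QuotientGroup.mk' ((s i.castSucc).subgroupOf (s i.succ)) ⟨z, hz⟩))
      have hq1 : QuotientGroup.mk' ((s i.castSucc).subgroupOf (s i.succ))
          ((g0 ^ k)⁻¹ * ⟨z, hz⟩) = 1 := by
        rw [map_mul, map_inv, map_zpow, hg0, hk]
        group
      have hc0 : ((g0 ^ k)⁻¹ * (⟨z, hz⟩ : ↥(s i.succ))) ∈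
          (s i.castSucc).subgroupOf (s i.succ) := by
        rwa [← QuotientGroup.ker_mk' ((s i.castSucc).subgroupOf (s i.succ)),
          MonoidHom.mem_ker]
      rw [Subgroup.mem_subgroupOf] at hc0
      have hc0' : ((g0 : ↥P) ^ k)⁻¹ * z ∈ s i.castSucc := by
        simpa using hc0
      have hwmem : τhat ^ (-k) * y ∈ ((s i.castSucc).map P.subtype).comap π := by
        rw [Subgroup.mem_comap]
        refine Subgroup.mem_map.mpr ⟨((g0 : ↥P) ^ k)⁻¹ * z, hc0', ?_⟩
        have e1 : π (τhat ^ (-k) * y) = (P.subtype ((g0 : ↥P))) ^ (-k) * π y := by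
          rw [map_mul, map_zpow, hτhat]
        have e2 : P.subtype (((g0 : ↥P) ^ k)⁻¹ * z)
            = ((P.subtype ((g0 : ↥P))) ^ k)⁻¹ * P.subtype z := by
          rw [map_mul, map_inv, map_zpow]
        rw [e1, e2, hzq, zpow_neg]
      have hyw : φ y = τ ^ k * φ (τhat ^ (-k) * y) := by
        have hyy : τhat ^ k * (τhat ^ (-k) * y) = y := by group
        calc φ y = φ (τhat ^ k * (τhat ^ (-k) * y)) := by rw [hyy]
          _ = τ ^ k * φ (τhat ^ (-k) * y) := by rw [map_mul, map_zpow, hτdef]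
      rw [hyw]
      exact mul_mem
        ((le_sup_right : Subgroup.zpowers τ ≤ Δ ⊔ Subgroup.zpowers τ)
          (Subgroup.zpow_mem_zpowers τ k))
        ((le_sup_left : Δ ≤ Δ ⊔ Subgroup.zpowers τ)
          (Subgroup.mem_map.mpr ⟨_, hwmem, rfl⟩))
  -- top of the chain: the pullback of P
  have htop : (⊤ : Subgroup ↥P).map P.subtype = P := by
    rw [← MonoidHom.range_eq_map, Subgroup.range_subtype]
  have hmain : IsEquicontinuousAutGroup ((P.comap π).map φ) := by
    have := main (Fin.last n)
    rwa [hlast, htop] at this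
  -- finite index step
  set Λ : Subgroup ↥Γ := P.comap π with hΛ
  haveI hΛfin : Λ.FiniteIndex := by
    constructor
    rw [hΛ, Subgroup.index_comap_of_surjective _ (QuotientGroup.mk'_surjective Γ₁)]
    exact hPfin.index_ne_zero
  haveI : Finite (↥Γ ⧸ Λ) := Subgroup.finite_quotient_of_finiteIndex (H := Λ)
  rw [isEquicontinuousAutGroup_iff]
  intro U hU
  obtain ⟨V, hV, hVU, hVinv⟩ := hmain U hU
  set F : (↥Γ ⧸ Λ) → Set G := fun c => ((φ c.out : MulAut G)) '' V with hFdef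
  have hFV : ∀ (c : ↥Γ ⧸ Λ) (x : ↥Γ), QuotientGroup.mk x = c → ((φ x : MulAut G)) '' V = F c := by
    intro c x hx
    have hmem : (c.out)⁻¹ * x ∈ Λ := by
      apply QuotientGroup.eq.mp
      rw [QuotientGroup.out_eq', ← hx]
    have hxeq : x = c.out * ((c.out)⁻¹ * x) := by group
    rw [hFdef]
    rw [hxeq, map_mul]
    have hcomp : ⇑((φ c.out * φ ((c.out)⁻¹ * x) : ↥(TopAut G)) : MulAut G)
        = ⇑((φ c.out : MulAut G)) ∘ ⇑((φ ((c.out)⁻¹ * x) : MulAut G)) := rfl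
    rw [hcomp, Set.image_comp, hVinv _ (Subgroup.mem_map_of_mem φ hmem)]
  refine ⟨⋂ c, F c, ?_, ?_, ?_⟩
  · rw [Filter.iInter_mem]
    intro c
    have hcont : Continuous ⇑(((φ c.out : ↥(TopAut G)) : MulAut G)).symm := (φ c.out).2.2
    have himg : F c = ⇑(((φ c.out : ↥(TopAut G)) : MulAut G)).symm ⁻¹' V := by
      rw [hFdef]
      exact Equiv.image_eq_preimage_symm _ _
    rw [himg]
    exact hcont.continuousAt.preimage_mem_nhds (by rwa [map_one])
  · have h1 : (⋂ c, F c) ⊆ F (QuotientGroup.mk (1 : ↥Γ)) := Set.iInter_subset _ _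
    have h2 : F (QuotientGroup.mk (1 : ↥Γ)) = V := by
      rw [← hFV (QuotientGroup.mk (1 : ↥Γ)) 1 rfl]
      simp
    exact h1.trans (h2 ▸ hVU)
  · intro γ₀ hγ₀
    rw [mem_autSetStab]
    set g : ↥Γ := ⟨γ₀, hγ₀⟩ with hg
    have hbij : Function.Bijective ⇑((γ₀ : MulAut G)) := (γ₀ : MulAut G).bijective
    rw [Set.image_iInter hbij]
    have hkey : ∀ c : ↥Γ ⧸ Λ, ⇑((γ₀ : MulAut G)) '' F c = F (QuotientGroup.mk (g * c.out)) := by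
      intro c
      have hcomp : ⇑((γ₀ : MulAut G)) ∘ ⇑((φ c.out : MulAut G))
          = ⇑((φ (g * c.out) : MulAut G)) := by
        rw [map_mul]
        rfl
      rw [hFdef]
      show ⇑((γ₀ : MulAut G)) '' (⇑((φ c.out : MulAut G)) '' V) = _
      rw [← Set.image_comp, hcomp]
      exact hFV _ _ rfl
    rw [Set.iInter_congr hkey]
    apply Set.Subset.antisymm
    · intro x hx
      rw [Set.mem_iInter] at hx ⊢
      intro d
      have hd : QuotientGroup.mk (g * (QuotientGroup.mk (g⁻¹ * d.out) : ↥Γ ⧸ Λ).out) = d := by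
        set e := (QuotientGroup.mk (g⁻¹ * d.out) : ↥Γ ⧸ Λ).out with he
        have h1 : e⁻¹ * (g⁻¹ * d.out) ∈ Λ := by
          apply QuotientGroup.eq.mp
          rw [he, QuotientGroup.out_eq']
        have h2 : (g * e)⁻¹ * d.out ∈ Λ := by
          rw [mul_inv_rev, mul_assoc]
          exact h1
        rw [← QuotientGroup.out_eq' d]
        exact (QuotientGroup.eq.mpr h2)
      have := hx (QuotientGroup.mk (g⁻¹ * d.out))
      rwa [hd] at this
    · intro x hx
      rw [Set.mem_iInter] at hx ⊢
      intro c
      exact hx _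

end Main

/-- **Lemma 2.3.** Let `G` be a totally disconnected metrizable locally compact group and `Γ` a
subgroup of `Aut(G)` all of whose elements are distal. If `Γ` has a normal equicontinuous
subgroup `Γ₁` with `Γ/Γ₁` containing a polycyclic subgroup of finite index, then `Γ` is
equicontinuous. -/
theorem lemma_2_3 {G : Type*} [Group G] [TopologicalSpace G] [IsTopologicalGroup G]
    [TotallyDisconnectedSpace G] [TopologicalSpace.MetrizableSpace G] [LocallyCompactSpace G]
    (Γ : Subgroup ↥(TopAut G)) (hdistal : ∀ γ : ↥(TopAut G), γ ∈ Γ → IsDistalAut γ)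
    (Γ₁ : Subgroup ↥Γ) [Γ₁.Normal]
    (hequi : IsEquicontinuousAutGroup (Γ₁.map Γ.subtype))
    (hpoly : HasPolycyclicFiniteIndex (↥Γ ⧸ Γ₁)) :
    IsEquicontinuousAutGroup Γ := by
  exact lemma_2_3' Γ hdistal Γ₁ hequi hpoly
end

section
/- If a locally compact group G contains a normal finitely generated subgroup N and a compact set K such that KN = G, then G is a SIN group. -/
open Filter Topology MeasureTheory Pointwise

section GroupDefs
variable (G : Type*) [Group G] [TopologicalSpace G]

/-- `G` is distal: the group of inner automorphisms acts distally, i.e. for every `x ≠ 1`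
the identity is not in the closure of the conjugacy class of `x`. -/
def IsDistalGroup : Prop :=
  ∀ x : G, x ≠ 1 → (1 : G) ∉ closure {y : G | ∃ g : G, g * x * g⁻¹ = y}

variable {G} in
/-- An element `z` of `G` is distal: the cyclic group generated by the inner automorphism
`x ↦ z x z⁻¹` acts distally on `G`. -/
def IsDistalElement (z : G) : Prop :=
  ∀ x : G, x ≠ 1 → (1 : G) ∉ closure {y : G | ∃ n : ℤ, z ^ n * x * (z ^ n)⁻¹ = y}

/-- `G` is a SIN group: there is a neighbourhood base at the identity consisting of
conjugation-invariant sets. -/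
def IsSINGroup : Prop :=
  ∀ U ∈ nhds (1 : G), ∃ V ∈ nhds (1 : G), V ⊆ U ∧ ∀ g : G, (fun x => g * x * g⁻¹) '' V = V

variable {G} in
/-- The contraction subgroup of an element `z`:
all `x` with `zⁿ x z⁻ⁿ → 1` as `n → ∞`. -/
def ContractionElt (z : G) : Set G :=
  {x : G | Tendsto (fun n : ℕ => z ^ n * x * (z ^ n)⁻¹) atTop (nhds 1)}

/-- A topological group is compactly generated:
some compact subset generates it as a group. -/
def IsCompactlyGeneratedGroup : Prop :=
  ∃ K : Set G, IsCompact K ∧ Subgroup.closure K = ⊤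

end GroupDefs

section AuxSIN

variable {G : Type*} [Group G] [TopologicalSpace G] [IsTopologicalGroup G]

/-- In a topological group, the closure of `{1}` is contained in every
neighbourhood of `1`. -/
lemma aux_closure_one_subset {U : Set G} (hU : U ∈ nhds (1 : G)) :
    closure ({1} : Set G) ⊆ U := by
  intro x hx
  obtain ⟨U', hU'sub, hU'open, hU'1⟩ := mem_nhds_iff.mp hU
  have h1inv : (1 : G) ∈ U'⁻¹ := by simpa using Set.inv_mem_inv.mpr hU'1
  have hWopen : IsOpen (U'⁻¹ * {x}) := hU'open.inv.mul_right
  have hxW : x ∈ U'⁻¹ * {x} := by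
    simpa using Set.mul_mem_mul h1inv (Set.mem_singleton x)
  obtain ⟨z, hzW, hz1⟩ := mem_closure_iff.mp hx _ hWopen hxW
  rw [Set.mem_singleton_iff] at hz1
  subst hz1
  obtain ⟨u, hu, y, hy, huy⟩ := hzW
  rw [hy] at huy
  have hux : u = x⁻¹ := eq_inv_of_mul_eq_one_left huy
  rw [hux] at hu
  exact hU'sub (by simpa using hu)

/-- Uniform conjugation control over a compact set. -/
lemma aux_conj_compact {K U : Set G} (hK : IsCompact K) (hU : U ∈ nhds (1 : G)) :
    ∃ V ∈ nhds (1 : G), ∀ k ∈ K, ∀ v ∈ V, k * v * k⁻¹ ∈ U := by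
  have hc : ∀ k : G, ∃ O ∈ nhds k, ∃ V ∈ nhds (1 : G),
      ∀ a ∈ O, ∀ v ∈ V, a * v * a⁻¹ ∈ U := by
    intro k
    have hcont : Continuous fun p : G × G => p.1 * p.2 * p.1⁻¹ := by continuity
    have h1 : (fun p : G × G => p.1 * p.2 * p.1⁻¹) ⁻¹' U ∈ nhds ((k, 1) : G × G) :=
      hcont.continuousAt.preimage_mem_nhds (by simpa using hU)
    rw [mem_nhds_prod_iff] at h1
    obtain ⟨O, hO, V, hV, h⟩ := h1
    exact ⟨O, hO, V, hV, fun a ha v hv => h (Set.mk_mem_prod ha hv)⟩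
  choose O hO V hV h using hc
  obtain ⟨t, _, ht⟩ := hK.elim_nhds_subcover O (fun k _ => hO k)
  refine ⟨⋂ k ∈ t, V k, ?_, ?_⟩
  · exact (Filter.biInter_mem t.finite_toSet).mpr fun k _ => hV k
  · intro k hk v hv
    obtain ⟨k₀, hk₀t, hk₀⟩ := Set.mem_iUnion₂.mp (ht hk)
    exact h k₀ k hk₀ v (Set.mem_iInter₂.mp hv k₀ hk₀t)

/-- The "centralizer of `x` modulo the closure of the identity" is an open subgroup,
when `x` lies in a countable normal subgroup of a locally compact group. -/
lemma aux_centralizer_mod_open [LocallyCompactSpace G]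
    (N : Subgroup G) [hN : N.Normal] [Countable ↥N] {x : G} (hxN : x ∈ N) :
    IsOpen {g : G | g * x * g⁻¹ * x⁻¹ ∈ (⊥ : Subgroup G).topologicalClosure} := by
  set H : Subgroup G := (⊥ : Subgroup G).topologicalClosure with hHdef
  haveI hHn : H.Normal := Subgroup.is_normal_topologicalClosure ⊥
  have hHclosed : IsClosed (H : Set G) := Subgroup.isClosed_topologicalClosure ⊥
  -- the subgroup Z
  set Z : Subgroup G :=
    { carrier := {g : G | g * x * g⁻¹ * x⁻¹ ∈ H}
      one_mem' := by simp [Set.mem_setOf_eq, one_mem]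
      mul_mem' := by
        intro a b ha hb
        simp only [Set.mem_setOf_eq] at ha hb ⊢
        have hid : (a * b) * x * (a * b)⁻¹ * x⁻¹
            = (a * (b * x * b⁻¹ * x⁻¹) * a⁻¹) * (a * x * a⁻¹ * x⁻¹) := by group
        rw [hid]
        exact mul_mem (hHn.conj_mem _ hb a) ha
      inv_mem' := by
        intro a ha
        simp only [Set.mem_setOf_eq] at ha ⊢
        have hid : a⁻¹ * x * a⁻¹⁻¹ * x⁻¹ = a⁻¹ * (a * x * a⁻¹ * x⁻¹)⁻¹ * a⁻¹⁻¹ := by group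
        rw [hid]
        exact hHn.conj_mem _ (inv_mem ha) a⁻¹ } with hZdef
  -- the fibers
  set C : ↥N → Set G := fun y => {g : G | (y : G)⁻¹ * (g * x * g⁻¹) ∈ H} with hCdef
  have hCclosed : ∀ y : ↥N, IsClosed (C y) := by
    intro y
    have : C y = (fun g : G => (y : G)⁻¹ * (g * x * g⁻¹)) ⁻¹' (H : Set G) := rfl
    rw [this]
    exact hHclosed.preimage (by continuity)
  have hCcover : (⋃ y : ↥N, C y) = Set.univ := by
    ext g
    simp only [Set.mem_iUnion, Set.mem_univ, iff_true]
    refine ⟨⟨g * x * g⁻¹, hN.conj_mem x hxN g⟩, ?_⟩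
    show (g * x * g⁻¹)⁻¹ * (g * x * g⁻¹) ∈ H
    rw [inv_mul_cancel]
    exact one_mem H
  obtain ⟨y, g₀, hg₀⟩ := nonempty_interior_of_iUnion_of_closed hCclosed hCcover
  have hg₀y : g₀ ∈ C y := interior_subset hg₀
  -- translation of the fiber lands in Z
  have hcoset : ∀ g ∈ C y, g₀⁻¹ * g ∈ Z := by
    intro g hg
    simp only [hCdef, Set.mem_setOf_eq] at hg hg₀y
    show (g₀⁻¹ * g) * x * (g₀⁻¹ * g)⁻¹ * x⁻¹ ∈ H
    have hid : (g₀⁻¹ * g) * x * (g₀⁻¹ * g)⁻¹ * x⁻¹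
        = x * (g₀⁻¹ * (((y : G)⁻¹ * (g₀ * x * g₀⁻¹))⁻¹ * ((y : G)⁻¹ * (g * x * g⁻¹))) * g₀⁻¹⁻¹)
          * x⁻¹ := by group
    rw [hid]
    exact hHn.conj_mem _ (hHn.conj_mem _ (mul_mem (inv_mem hg₀y) hg) g₀⁻¹) x
  -- Z is a neighbourhood of 1
  have hZnhds : (Z : Set G) ∈ nhds (1 : G) := by
    have hCy : C y ∈ nhds g₀ := mem_interior_iff_mem_nhds.mp hg₀
    have hcont : ContinuousAt (fun g : G => g₀ * g) 1 := by fun_prop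
    have hpre : (fun g : G => g₀ * g) ⁻¹' (C y) ∈ nhds (1 : G) :=
      hcont.preimage_mem_nhds (by simpa using hCy)
    refine Filter.mem_of_superset hpre ?_
    intro g hg
    have := hcoset (g₀ * g) hg
    simpa using this
  have hZopen : IsOpen (Z : Set G) := Subgroup.isOpen_of_mem_nhds Z hZnhds
  exact hZopen

/-- A finitely generated subgroup of a group is countable. -/
lemma aux_countable_of_fg {N : Subgroup G} (hNfg : Group.FG ↥N) : Countable ↥N := by
  obtain ⟨T, hTc, hTfin⟩ := Monoid.fg_iff.mp (Group.fg_iff_monoid_fg.mp hNfg)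
  haveI : Finite ↥T := hTfin.to_subtype
  have hsurj : Function.Surjective (fun l : List ↥T => (l.map Subtype.val).prod) := by
    intro n
    have hn : n ∈ Submonoid.closure T := by rw [hTc]; exact Submonoid.mem_top n
    obtain ⟨l, hl, hprod⟩ := Submonoid.exists_list_of_mem_closure hn
    refine ⟨l.attach.map (fun z => (⟨z.1, hl z.1 z.2⟩ : ↥T)), ?_⟩
    simp only [List.map_map]
    rw [show (Subtype.val ∘ fun z : {y // y ∈ l} => (⟨z.1, hl z.1 z.2⟩ : ↥T)) =
      (fun z : {y // y ∈ l} => z.1) from rfl]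
    rw [List.attach_map_val (l := l) (f := fun y => y)]
    simpa using hprod
  exact hsurj.countable

end AuxSIN

/-- **Lemma 2.11.** If a locally compact group `G` contains a normal finitely generated
subgroup `N` and a compact set `K` such that `K * N = G`, then `G` is a SIN group. -/
theorem lemma_2_11 {G : Type*} [Group G] [TopologicalSpace G] [IsTopologicalGroup G]
    [LocallyCompactSpace G]
    (N : Subgroup G) [N.Normal] (hNfg : Group.FG ↥N)
    (K : Set G) (hK : IsCompact K) (hKN : K * (N : Set G) = Set.univ) :
    IsSINGroup G := by
  classical
  haveI hNc : Countable ↥N := aux_countable_of_fg hNfg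
  obtain ⟨S, hSclos, hSfin⟩ := (Subgroup.fg_iff N).mp ((Group.fg_iff_subgroup_fg N).mp hNfg)
  set H : Subgroup G := (⊥ : Subgroup G).topologicalClosure with hHdef
  haveI hHn : H.Normal := Subgroup.is_normal_topologicalClosure ⊥
  have hHsub : ∀ {W : Set G}, W ∈ nhds (1 : G) → (H : Set G) ⊆ W := by
    intro W hW
    have hcoe : (H : Set G) = closure ({1} : Set G) := by
      rw [hHdef, Subgroup.topologicalClosure_coe, Subgroup.coe_bot]
    rw [hcoe]
    exact aux_closure_one_subset hW
  have hSN : ∀ s ∈ S, s ∈ N := fun s hs => hSclos ▸ Subgroup.subset_closure hs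
  have hCopen : IsOpen (⋂ s ∈ S, {g : G | g * s * g⁻¹ * s⁻¹ ∈ H}) :=
    hSfin.isOpen_biInter fun s hs => aux_centralizer_mod_open N (hSN s hs)
  have hC1 : (1 : G) ∈ ⋂ s ∈ S, {g : G | g * s * g⁻¹ * s⁻¹ ∈ H} := by
    refine Set.mem_iInter₂.mpr fun s hs => ?_
    show 1 * s * 1⁻¹ * s⁻¹ ∈ H
    have h1 : 1 * s * 1⁻¹ * s⁻¹ = (1 : G) := by group
    rw [h1]; exact one_mem H
  have hCcomm : ∀ v ∈ (⋂ s ∈ S, {g : G | g * s * g⁻¹ * s⁻¹ ∈ H}),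
      ∀ n ∈ N, v * n * v⁻¹ * n⁻¹ ∈ H := by
    intro v hv
    set Sv : Subgroup G :=
      { carrier := {n : G | v * n * v⁻¹ * n⁻¹ ∈ H}
        one_mem' := by
          show v * 1 * v⁻¹ * 1⁻¹ ∈ H
          have h1 : v * 1 * v⁻¹ * (1 : G)⁻¹ = 1 := by group
          rw [h1]; exact one_mem H
        mul_mem' := by
          intro a b ha hb
          simp only [Set.mem_setOf_eq] at ha hb ⊢
          have hid : v * (a * b) * v⁻¹ * (a * b)⁻¹
              = (v * a * v⁻¹ * a⁻¹) * (a * (v * b * v⁻¹ * b⁻¹) * a⁻¹) := by group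
          rw [hid]
          exact mul_mem ha (hHn.conj_mem _ hb a)
        inv_mem' := by
          intro a ha
          simp only [Set.mem_setOf_eq] at ha ⊢
          have hid : v * a⁻¹ * v⁻¹ * a⁻¹⁻¹ = a⁻¹ * (v * a * v⁻¹ * a⁻¹)⁻¹ * a⁻¹⁻¹ := by group
          rw [hid]
          exact hHn.conj_mem _ (inv_mem ha) a⁻¹ } with hSvdef
    have hle : N ≤ Sv := by
      rw [← hSclos]
      refine (Subgroup.closure_le Sv).mpr fun s hs => ?_
      exact Set.mem_iInter₂.mp hv s hs
    exact fun n hn => hle hn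
  intro U hU
  obtain ⟨U₀, hU₀o, hU₀1, hU₀sq⟩ := exists_open_nhds_one_mul_subset hU
  have hU₀nhds : U₀ ∈ nhds (1 : G) := hU₀o.mem_nhds hU₀1
  obtain ⟨V₂, hV₂, hV₂conj⟩ := aux_conj_compact hK hU₀nhds
  set V : Set G := V₂ ∩ ⋂ s ∈ S, {g : G | g * s * g⁻¹ * s⁻¹ ∈ H} with hVdef
  have hVnhds : V ∈ nhds (1 : G) := Filter.inter_mem hV₂ (hCopen.mem_nhds hC1)
  have hVU : ∀ g : G, ∀ v ∈ V, g * v * g⁻¹ ∈ U := by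
    intro g v hv
    have hg : g ∈ K * (N : Set G) := by rw [hKN]; exact Set.mem_univ g
    obtain ⟨k, hk, n, hn, rfl⟩ := hg
    have h₁ : v * n * v⁻¹ * n⁻¹ ∈ H := hCcomm v hv.2 n hn
    have hident : (k * n) * v * (k * n)⁻¹
        = (k * (v * n * v⁻¹ * n⁻¹)⁻¹ * k⁻¹) * (k * v * k⁻¹) := by group
    rw [hident]
    refine hU₀sq (Set.mul_mem_mul ?_ (hV₂conj k hk v hv.1))
    exact hHsub hU₀nhds (hHn.conj_mem _ (inv_mem h₁) k)
  refine ⟨⋃ g : G, (fun x => g * x * g⁻¹) '' V, ?_, ?_, ?_⟩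
  · refine Filter.mem_of_superset hVnhds fun v hv => ?_
    refine Set.mem_iUnion.mpr ⟨1, ⟨v, hv, ?_⟩⟩
    group
  · intro w hw
    obtain ⟨g, x, hx, rfl⟩ := Set.mem_iUnion.mp hw
    exact hVU g x hx
  · intro a
    ext w
    simp only [Set.mem_image, Set.mem_iUnion]
    constructor
    · rintro ⟨x, ⟨g, v, hv, rfl⟩, rfl⟩
      refine ⟨a * g, v, hv, ?_⟩
      group
    · rintro ⟨g, v, hv, rfl⟩
      refine ⟨(a⁻¹ * g) * v * (a⁻¹ * g)⁻¹, ⟨a⁻¹ * g, v, hv, rfl⟩, ?_⟩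
      group
end

section
/- If a compactly generated totally disconnected locally compact group G contains a closed cocompact normal SIN subgroup, then G is a SIN group. -/
open Filter Topology MeasureTheory Pointwise

section SINAux

open Set

variable {G : Type*} [Group G] [TopologicalSpace G] [IsTopologicalGroup G]

set_option linter.unusedSectionVars false

/-- Tube lemma helper. -/
lemma sin_tube {C O : Set G} (hC : IsCompact C) (hO : IsOpen O) {f : G × G → G}
    (hf : Continuous f) (h1 : ∀ c ∈ C, f (c, 1) ∈ O) :
    {x : G | ∀ c ∈ C, f (c, x) ∈ O} ∈ 𝓝 (1 : G) := by
  obtain ⟨u, v, hu, hv, hCu, h1v, huv⟩ :=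
    generalized_tube_lemma hC (isCompact_singleton (x := (1 : G))) (hO.preimage hf)
      (by rintro ⟨c, x⟩ ⟨hc, hx⟩
          rcases mem_singleton_iff.mp hx with rfl
          exact h1 c hc)
  refine Filter.mem_of_superset (hv.mem_nhds (h1v rfl)) ?_
  intro x hx c hc
  exact huv (Set.mk_mem_prod (hCu hc) hx)

/-- van Dantzig: small open symmetric submonoids (i.e. open subgroups as sets). -/
lemma sin_vanDantzig [LocallyCompactSpace G] [T2Space G] [TotallyDisconnectedSpace G]
    {U : Set G} (hU : U ∈ 𝓝 (1 : G)) :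
    ∃ H : Set G, IsOpen H ∧ (1 : G) ∈ H ∧ H ⊆ U ∧
      (∀ a ∈ H, ∀ b ∈ H, a * b ∈ H) ∧ (∀ a ∈ H, a⁻¹ ∈ H) := by
  obtain ⟨K, hKn, hKU, hKc⟩ := local_compact_nhds hU
  obtain ⟨W, hWcl, h1W, hWK⟩ :=
    loc_compact_Haus_tot_disc_of_zero_dim.mem_nhds_iff.mp
      ((isOpen_interior).mem_nhds (mem_interior_iff_mem_nhds.mpr hKn))
  have hWcomp : IsCompact W :=
    IsCompact.of_isClosed_subset hKc hWcl.isClosed (hWK.trans interior_subset)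
  set A : Set G := {g : G | ∀ w ∈ W, g * w ∈ W} with hA
  have hAopen : IsOpen A := by
    rw [isOpen_iff_mem_nhds]
    intro g hg
    obtain ⟨u, v, hu, hv, hgu, hWv, huv⟩ :=
      generalized_tube_lemma (isCompact_singleton (x := g)) hWcomp
        (hWcl.isOpen.preimage (continuous_mul))
        (by rintro ⟨a, w⟩ ⟨ha, hw⟩
            rcases mem_singleton_iff.mp ha with rfl
            exact hg w hw)
    refine Filter.mem_of_superset (hu.mem_nhds (hgu rfl)) ?_
    intro a ha w hw
    exact huv (Set.mk_mem_prod ha (hWv hw))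
  refine ⟨A ∩ (Inv.inv ⁻¹' A), hAopen.inter (hAopen.preimage continuous_inv),
    ⟨by simp [hA, mem_setOf_eq], by simp [hA, mem_setOf_eq]⟩, ?_, ?_, ?_⟩
  · intro g hg
    have : g * 1 ∈ W := hg.1 1 h1W
    rw [mul_one] at this
    exact hKU (interior_subset (hWK this))
  · rintro a ⟨ha1, ha2⟩ b ⟨hb1, hb2⟩
    constructor
    · intro w hw
      rw [mul_assoc]
      exact ha1 _ (hb1 w hw)
    · intro w hw
      simp only [mem_preimage, mul_inv_rev] at *
      rw [mul_assoc]
      exact hb2 _ (ha2 w hw)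
  · rintro a ⟨ha1, ha2⟩
    exact ⟨ha2, by simpa using ha1⟩

/-- Cocompact subgroups admit a compact set of coset representatives. -/
lemma sin_cocompact [LocallyCompactSpace G] (N : Subgroup G)
    (h : CompactSpace (G ⧸ N)) :
    ∃ C : Set G, IsCompact C ∧ (1 : G) ∈ C ∧ ∀ g : G, ∃ c ∈ C, ∃ n ∈ (N : Set G), g = c * n := by
  obtain ⟨B, hBc, hBn⟩ := exists_compact_mem_nhds (1 : G)
  have h1B : (1 : G) ∈ interior B := mem_interior_iff_mem_nhds.mpr hBn
  have hcover : (Set.univ : Set (G ⧸ N)) ⊆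
      ⋃ g : G, (QuotientGroup.mk '' ((fun x => g * x) '' interior B)) := by
    intro q _
    obtain ⟨g, rfl⟩ := QuotientGroup.mk_surjective q
    exact mem_iUnion.mpr ⟨g, ⟨g, ⟨1, h1B, by simp⟩, rfl⟩⟩
  obtain ⟨t, ht⟩ := isCompact_univ.elim_finite_subcover
    (fun g : G => QuotientGroup.mk '' ((fun x => g * x) '' interior B))
    (fun g => QuotientGroup.isOpenMap_coe _
      (((Homeomorph.mulLeft g).isOpenMap) _ isOpen_interior)) hcover
  refine ⟨(⋃ g ∈ t, (fun x => g * x) '' B) ∪ {1}, ?_, by simp, ?_⟩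
  · exact (t.isCompact_biUnion (fun g _ => hBc.image (continuous_mul_left g))).union
      isCompact_singleton
  · intro x
    have hx := ht (mem_univ (QuotientGroup.mk (s := N) x))
    obtain ⟨g, hgt, b, hb, hq⟩ := by
      simpa only [mem_iUnion, mem_image, exists_prop] using hx
    obtain ⟨b', hb', rfl⟩ := hb
    have hmem : (g * b')⁻¹ * x ∈ N := QuotientGroup.eq.mp hq
    refine ⟨g * b', Or.inl (mem_biUnion hgt ⟨b', interior_subset hb', rfl⟩),
      (g * b')⁻¹ * x, hmem, by group⟩

end SINAux

open Set

/-- **Proposition 2.12.** If a compactly generated totally disconnected locally compact group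
`G` contains a closed cocompact normal SIN subgroup, then `G` is a SIN group. -/
theorem proposition_2_12 {G : Type*} [Group G] [TopologicalSpace G] [IsTopologicalGroup G]
    [TotallyDisconnectedSpace G] [LocallyCompactSpace G]
    (hcg : IsCompactlyGeneratedGroup G)
    (N : Subgroup G) [N.Normal] (hNclosed : IsClosed (N : Set G))
    (hNcocompact : CompactSpace (G ⧸ N)) (hNsin : IsSINGroup ↥N) :
    IsSINGroup G := by
  have hNn : N.Normal := inferInstance
  haveI : T1Space G := ⟨fun x => by
    have h := totallyDisconnectedSpace_iff_connectedComponent_singleton.mp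
      inferInstance x
    rw [← h]; exact isClosed_connectedComponent⟩
  haveI : T2Space G := inferInstance
  intro U hU
  obtain ⟨U₁, hU₁n, hU₁U⟩ := exists_nhds_one_split hU
  obtain ⟨C, hCc, h1C, hdec⟩ := sin_cocompact N hNcocompact
  have hdec' : ∀ g : G, ∃ c ∈ C, ∃ n ∈ (N : Set G), g = n * c := by
    intro g
    obtain ⟨c, hc, n, hn, rfl⟩ := hdec g
    exact ⟨c, hc, c * n * c⁻¹, hNn.conj_mem n hn c, by group⟩
  -- instances on ↥N
  haveI : LocallyCompactSpace ↥N := hNclosed.locallyCompactSpace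
  -- van Dantzig inside N
  have hU₁N : ((↑) ⁻¹' U₁ : Set ↥N) ∈ 𝓝 (1 : ↥N) :=
    ContinuousAt.preimage_mem_nhds continuous_subtype_val.continuousAt (by simpa using hU₁n)
  obtain ⟨HK, hHKopen, hHK1, hHKU₁, hHKmul, hHKinv⟩ := sin_vanDantzig (G := ↥N) hU₁N
  set K : Set G := (↑) '' HK with hKdef
  have hKN : K ⊆ (N : Set G) := by rintro _ ⟨x, -, rfl⟩; exact x.2
  have hKU₁ : K ⊆ U₁ := by rintro _ ⟨x, hx, rfl⟩; exact hHKU₁ hx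
  have h1K : (1 : G) ∈ K := ⟨1, hHK1, rfl⟩
  have hKmul : ∀ a ∈ K, ∀ b ∈ K, a * b ∈ K := by
    rintro _ ⟨a, ha, rfl⟩ _ ⟨b, hb, rfl⟩; exact ⟨a * b, hHKmul a ha b hb, rfl⟩
  have hKinv : ∀ a ∈ K, a⁻¹ ∈ K := by rintro _ ⟨a, ha, rfl⟩; exact ⟨a⁻¹, hHKinv a ha, rfl⟩
  -- SIN property of N
  obtain ⟨Vh, hVhn, hVhHK, hVhconj⟩ := hNsin HK (hHKopen.mem_nhds hHK1)
  set V : Set G := (↑) '' Vh with hVdef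
  have hVK : V ⊆ K := Set.image_mono hVhHK
  obtain ⟨O, hOn, hON⟩ : ∃ O ∈ 𝓝 (1 : G), O ∩ (N : Set G) ⊆ V := by
    obtain ⟨O, hO, hpre⟩ := (mem_nhds_subtype _ _ _).mp hVhn
    refine ⟨O, by simpa using hO, ?_⟩
    rintro x ⟨hxO, hxN⟩
    exact ⟨⟨x, hxN⟩, hpre hxO, rfl⟩
  have hVconj : ∀ n ∈ (N : Set G), (fun x => n * x * n⁻¹) '' V = V := by
    intro n hn
    rw [hVdef]
    conv_rhs => rw [← hVhconj ⟨n, hn⟩]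
    rw [image_image, image_image]
    rfl
  -- the G-invariant core M of K
  set M : Set G := {x : G | ∀ g : G, g * x * g⁻¹ ∈ K} with hMdef
  have hM1 : (1 : G) ∈ M := fun g => by simpa using h1K
  have hMK : M ⊆ K := fun x hx => by simpa using hx 1
  have hMN : M ⊆ (N : Set G) := fun x hx => hKN (hMK hx)
  have hMmul : ∀ a ∈ M, ∀ b ∈ M, a * b ∈ M := by
    intro a ha b hb g
    have h2 : g * (a * b) * g⁻¹ = (g * a * g⁻¹) * (g * b * g⁻¹) := by group
    rw [h2]; exact hKmul _ (ha g) _ (hb g)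
  have hMinv : ∀ a ∈ M, a⁻¹ ∈ M := by
    intro a ha g
    have h2 : g * a⁻¹ * g⁻¹ = (g * a * g⁻¹)⁻¹ := by group
    rw [h2]; exact hKinv _ (ha g)
  have hMconj : ∀ h : G, ∀ x ∈ M, h * x * h⁻¹ ∈ M := by
    intro h x hx g
    have h2 : g * (h * x * h⁻¹) * g⁻¹ = (g * h) * x * (g * h)⁻¹ := by group
    rw [h2]; exact hx (g * h)
  -- M is a neighbourhood of 1 within N
  have htube := sin_tube (G := G) hCc isOpen_interior (f := fun p => p.1 * p.2 * p.1⁻¹)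
    (by fun_prop) (fun c hc => by
      have : (fun p : G × G => p.1 * p.2 * p.1⁻¹) (c, 1) = 1 := by simp
      simp only [mul_one, mul_inv_cancel]; exact mem_interior_iff_mem_nhds.mpr hOn)
  rw [mem_nhds_iff] at htube
  obtain ⟨T, hTsub, hTopen, h1T⟩ := htube
  have hTM : T ∩ (N : Set G) ⊆ M := by
    rintro x ⟨hxT, hxN⟩ g
    obtain ⟨c, hc, n, hn, rfl⟩ := hdec' g
    have hmemN : c * x * c⁻¹ ∈ (N : Set G) := hNn.conj_mem x hxN c
    have h1 : c * x * c⁻¹ ∈ V := hON ⟨interior_subset (hTsub hxT c hc), hmemN⟩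
    have h2 : n * (c * x * c⁻¹) * n⁻¹ ∈ V := by
      rw [← hVconj n hn]; exact ⟨_, h1, rfl⟩
    have h3 : (n * c) * x * (n * c)⁻¹ = n * (c * x * c⁻¹) * n⁻¹ := by group
    rw [h3]; exact hVK h2
  obtain ⟨OM, hOMopen, hOMeq⟩ : ∃ OM : Set G, IsOpen OM ∧ M = OM ∩ (N : Set G) := by
    refine ⟨⋃ m ∈ M, (fun x => m * x) '' T,
      isOpen_biUnion (fun m _ => (Homeomorph.mulLeft m).isOpenMap _ hTopen), ?_⟩
    apply Subset.antisymm
    · intro m hm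
      exact ⟨mem_biUnion hm ⟨1, h1T, mul_one m⟩, hMN hm⟩
    · rintro x ⟨hxU, hxN⟩
      rw [mem_iUnion₂] at hxU
      obtain ⟨m, hm, hxm⟩ := hxU
      obtain ⟨y, hy, rfl⟩ := hxm
      have hyN : y ∈ (N : Set G) := by
        have h4 : m⁻¹ * (m * y) ∈ N := N.mul_mem (N.inv_mem (hMN hm)) hxN
        simpa using h4
      exact hMmul m hm y (hTM ⟨hy, hyN⟩)
  have h1OM : (1 : G) ∈ OM := (hOMeq ▸ hM1).1
  -- Schreier: N is generated by M together with finitely many elements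
  obtain ⟨E, hEc, hEtop⟩ := hcg
  set E' : Set G := (E ∪ E⁻¹) ∪ {1} with hE'def
  have hE'c : IsCompact E' := (hEc.union hEc.inv).union isCompact_singleton
  set Z : Set G := C * E' * C⁻¹ with hZdef
  have hZc : IsCompact Z := (hCc.mul hE'c).mul hCc.inv
  have hPN : Subgroup.closure ((N : Set G) ∩ Z) ≤ N :=
    (Subgroup.closure_le N).mpr inter_subset_left
  have hZmem : ∀ c ∈ C, ∀ e ∈ E', ∀ c' ∈ C, c * e * c'⁻¹ ∈ Z := by
    intro c hc e he c' hc'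
    exact Set.mul_mem_mul (Set.mul_mem_mul hc he) (Set.inv_mem_inv.mpr hc')
  have key : ∀ x ∈ Submonoid.closure (E ∪ E⁻¹),
      ∀ p ∈ Subgroup.closure ((N : Set G) ∩ Z), ∀ c ∈ C,
      ∃ p' ∈ Subgroup.closure ((N : Set G) ∩ Z), ∃ c' ∈ C, p * c * x = p' * c' := by
    intro x hx
    refine Submonoid.closure_induction ?_ ?_ ?_ hx
    · intro e he p hp c hc
      obtain ⟨c', hc', n, hn, hce⟩ := hdec' (c * e)
      have hnz : n ∈ Z := by
        have h5 : n = c * e * c'⁻¹ := by rw [hce]; group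
        rw [h5]; exact hZmem c hc e (Or.inl he) c' hc'
      refine ⟨p * n, mul_mem hp (Subgroup.subset_closure ⟨hn, hnz⟩), c', hc', ?_⟩
      rw [mul_assoc p c e, hce]; group
    · intro p hp c hc; exact ⟨p, hp, c, hc, by rw [mul_one]⟩
    · intro a b _ _ iha ihb p hp c hc
      obtain ⟨p1, hp1, c1, hc1, h1⟩ := iha p hp c hc
      obtain ⟨p2, hp2, c2, hc2, h2⟩ := ihb p1 hp1 c1 hc1
      exact ⟨p2, hp2, c2, hc2, by rw [← mul_assoc, h1, h2]⟩
  have hNP : (N : Set G) ⊆ (Subgroup.closure ((N : Set G) ∩ Z) : Set G) := by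
    intro x hxN
    have hxTop : x ∈ Subgroup.closure E := by rw [hEtop]; trivial
    have hxSub : x ∈ (Subgroup.closure E).toSubmonoid := hxTop
    rw [Subgroup.closure_toSubmonoid] at hxSub
    obtain ⟨p', hp', c', hc', h⟩ := key x hxSub 1 (one_mem _) 1 h1C
    rw [one_mul, one_mul] at h
    have hc'N : c' ∈ N := by
      have h6 : c' = p'⁻¹ * x := by rw [h]; group
      rw [h6]; exact N.mul_mem (N.inv_mem (hPN hp')) hxN
    have hc'P : c' ∈ Subgroup.closure ((N : Set G) ∩ Z) := by
      refine Subgroup.subset_closure ⟨hc'N, ?_⟩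
      have h7 : c' = c' * 1 * (1 : G)⁻¹ := by group
      rw [h7]; exact hZmem c' hc' 1 (Or.inr rfl) 1 h1C
    rw [h]; exact mul_mem hp' hc'P
  -- extract a finite set of generators mod M
  have hNZc : IsCompact ((N : Set G) ∩ Z) := hZc.inter_left hNclosed
  obtain ⟨t, htsub, htcover⟩ := hNZc.elim_nhds_subcover (fun x => (fun y => x * y) '' OM)
    (fun x _ => ((Homeomorph.mulLeft x).isOpenMap _ hOMopen).mem_nhds ⟨1, h1OM, mul_one x⟩)
  -- if g almost-commutes with the finite set t, it almost-commutes with all of N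
  have genM : ∀ g : G, (∀ y ∈ t, g * y * g⁻¹ * y⁻¹ ∈ M) →
      ∀ n ∈ (N : Set G), g * n * g⁻¹ * n⁻¹ ∈ M := by
    intro g hg n hn
    have hQM : ∀ m ∈ M, g * m * g⁻¹ * m⁻¹ ∈ M := fun m hm =>
      hMmul _ (hMconj g m hm) _ (hMinv m hm)
    have hmem : n ∈ Subgroup.closure ((N : Set G) ∩ Z) := hNP hn
    refine Subgroup.closure_induction ?_ ?_ ?_ ?_ hmem
    · rintro x ⟨hxN, hxZ⟩
      have hx := htcover ⟨hxN, hxZ⟩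
      rw [mem_iUnion₂] at hx
      obtain ⟨y, hyt, hxy⟩ := hx
      obtain ⟨o, ho, rfl⟩ := hxy
      have hoN : o ∈ (N : Set G) := by
        have h8 : y⁻¹ * (y * o) ∈ N := N.mul_mem (N.inv_mem (htsub y hyt).1) hxN
        simpa using h8
      have hoM : o ∈ M := by rw [hOMeq]; exact ⟨ho, hoN⟩
      have hy : g * y * g⁻¹ * y⁻¹ ∈ M := hg y hyt
      have hm : g * o * g⁻¹ * o⁻¹ ∈ M := hQM o hoM
      have h9 : g * (y * o) * g⁻¹ * (y * o)⁻¹ =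
          (g * y * g⁻¹ * y⁻¹) * (y * (g * o * g⁻¹ * o⁻¹) * y⁻¹) := by group
      rw [h9]; exact hMmul _ hy _ (hMconj y _ hm)
    · have h10 : g * 1 * g⁻¹ * (1 : G)⁻¹ = 1 := by group
      rw [h10]; exact hM1
    · intro a b _ _ ha hb
      have h11 : g * (a * b) * g⁻¹ * (a * b)⁻¹ =
          (g * a * g⁻¹ * a⁻¹) * (a * (g * b * g⁻¹ * b⁻¹) * a⁻¹) := by group
      rw [h11]; exact hMmul _ ha _ (hMconj a _ hb)
    · intro a _ ha
      have h12 := hMconj a⁻¹ _ ha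
      have h13 : g * a⁻¹ * g⁻¹ * a⁻¹⁻¹ = (a⁻¹ * (g * a * g⁻¹ * a⁻¹) * a⁻¹⁻¹)⁻¹ := by group
      rw [h13]; exact hMinv _ h12
  -- the open almost-centralizer
  set A : Set G := ⋂ y ∈ t, {g : G | g * y * g⁻¹ * y⁻¹ ∈ OM} with hAdef
  have hAopen : IsOpen A := isOpen_biInter_finset (fun y _ =>
    hOMopen.preimage (((continuous_mul_right y).mul continuous_inv).mul continuous_const))
  have h1A : (1 : G) ∈ A := by
    refine mem_iInter₂.mpr fun y _ => ?_
    have h14 : (1 : G) * y * (1 : G)⁻¹ * y⁻¹ = 1 := by group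
    simp only [mem_setOf_eq, h14]
    exact h1OM
  have hACstar : ∀ g ∈ A, ∀ n ∈ (N : Set G), g * n * g⁻¹ * n⁻¹ ∈ M := by
    intro g hg
    refine genM g (fun y hy => ?_)
    have hOMy := mem_iInter₂.mp hg y hy
    have hyN : y ∈ (N : Set G) := (htsub y hy).1
    have hN1 : g * y * g⁻¹ * y⁻¹ ∈ (N : Set G) :=
      N.mul_mem (hNn.conj_mem y hyN g) (N.inv_mem hyN)
    rw [hOMeq]; exact ⟨hOMy, hN1⟩
  have hCstarInv : ∀ g : G, (∀ n ∈ (N : Set G), g * n * g⁻¹ * n⁻¹ ∈ M) →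
      ∀ n ∈ (N : Set G), g⁻¹ * n * g * n⁻¹ ∈ M := by
    intro g hg n hn
    have hn' : g⁻¹ * n * g ∈ (N : Set G) := by simpa using hNn.conj_mem n hn g⁻¹
    have h := hg _ hn'
    have e1 : n * g⁻¹ * n⁻¹ * g = g * (g⁻¹ * n * g) * g⁻¹ * (g⁻¹ * n * g)⁻¹ := by group
    have h2 : n * g⁻¹ * n⁻¹ * g ∈ M := by rw [e1]; exact h
    have e2 : g⁻¹ * n * g * n⁻¹ = (n * g⁻¹ * n⁻¹ * g)⁻¹ := by group
    rw [e2]; exact hMinv _ h2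
  -- small open subgroup inside the almost-centralizer
  obtain ⟨Q, hQopen, h1Q, hQsub, hQmul, hQinv⟩ :=
    sin_vanDantzig (G := G) (Filter.inter_mem (hAopen.mem_nhds h1A) hU₁n)
  -- PS = Q * M, an open set normalized by N
  set PS : Set G := {x : G | ∃ q ∈ Q, ∃ m ∈ M, x = q * m} with hPSdef
  have hPSopen : IsOpen PS := by
    have hPSeq : PS = ⋃ m ∈ M, (fun x => x * m) '' Q := by
      ext x
      simp only [hPSdef, mem_setOf_eq, mem_iUnion₂, mem_image]
      constructor
      · rintro ⟨q, hq, m, hm, rfl⟩; exact ⟨m, hm, q, hq, rfl⟩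
      · rintro ⟨m, hm, q, hq, rfl⟩; exact ⟨q, hq, m, hm, rfl⟩
    rw [hPSeq]
    exact isOpen_biUnion fun m _ => (Homeomorph.mulRight m).isOpenMap _ hQopen
  have h1PS : (1 : G) ∈ PS := ⟨1, h1Q, 1, hM1, by rw [mul_one]⟩
  have hPSU : PS ⊆ U := by
    rintro x ⟨q, hq, m, hm, rfl⟩
    exact hU₁U q (hQsub hq).2 m (hKU₁ (hMK hm))
  have hPSconjN : ∀ n ∈ (N : Set G), ∀ x ∈ PS, n * x * n⁻¹ ∈ PS := by
    rintro n hn x ⟨q, hq, m, hm, rfl⟩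
    have hqA : q ∈ A := (hQsub hq).1
    have hq' : q⁻¹ * n * q * n⁻¹ ∈ M := hCstarInv q (hACstar q hqA) n hn
    refine ⟨q, hq, (q⁻¹ * n * q * n⁻¹) * (n * m * n⁻¹),
      hMmul _ hq' _ (hMconj n m hm), by group⟩
  -- the conjugation-invariant neighbourhood
  set W : Set G := {x : G | ∀ c ∈ C, c * x * c⁻¹ ∈ PS} with hWdef
  have hWn : W ∈ 𝓝 (1 : G) := by
    refine sin_tube hCc hPSopen (f := fun p => p.1 * p.2 * p.1⁻¹) (by fun_prop) ?_
    intro c hc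
    have h15 : (fun p : G × G => p.1 * p.2 * p.1⁻¹) (c, 1) = 1 := by simp
    simp only [mul_one, mul_inv_cancel]; exact h1PS
  have hWconj : ∀ h : G, ∀ x ∈ W, h * x * h⁻¹ ∈ PS := by
    intro h x hx
    obtain ⟨c, hc, n, hn, rfl⟩ := hdec' h
    have e : (n * c) * x * (n * c)⁻¹ = n * (c * x * c⁻¹) * n⁻¹ := by group
    rw [e]; exact hPSconjN n hn _ (hx c hc)
  have hWinv : ∀ g : G, ∀ x ∈ W, g * x * g⁻¹ ∈ W := by
    intro g x hx c hc
    have e : c * (g * x * g⁻¹) * c⁻¹ = (c * g) * x * (c * g)⁻¹ := by group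
    rw [e]; exact hWconj (c * g) x hx
  refine ⟨W, hWn, ?_, ?_⟩
  · intro x hx
    have h16 := hx 1 h1C
    have e : (1 : G) * x * (1 : G)⁻¹ = x := by group
    rw [e] at h16
    exact hPSU h16
  · intro g
    apply Subset.antisymm
    · rintro _ ⟨x, hx, rfl⟩; exact hWinv g x hx
    · intro x hx
      refine ⟨g⁻¹ * x * g, ?_, by group⟩
      have h17 := hWinv g⁻¹ x hx
      simpa using h17
end

section
/- Let G be a locally compact compactly generated totally disconnected solvable group. Then there exists a closed normal cocompact subgroup N of G such that the closure of the commutator subgroup [G,G] is contained in N and the quotient N/cl([G,G]) is topologically isomorphic to ℤ^d (with the discrete topology) for some integer d ≥ 0. -/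
open Filter Topology MeasureTheory Pointwise

section AuxLemma214
open Set Filter Topology Pointwise


/-- van Dantzig ingredient: a compact clopen neighbourhood of 1 contains a
compact open subgroup. -/
theorem aux_exist_mul_closure_nhd {G : Type*} [Group G] [TopologicalSpace G]
    [IsTopologicalGroup G] {W : Set G} (hWc : IsCompact W) (WClopen : IsClopen W) :
    ∃ T ∈ 𝓝 (1 : G), W * T ⊆ W := by
  apply hWc.induction_on (p := fun S ↦ ∃ T ∈ 𝓝 (1 : G), S * T ⊆ W)
    ⟨Set.univ, by simp only [univ_mem, empty_mul, empty_subset, and_self]⟩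
    (fun _ _ huv ⟨T, hT, mem⟩ ↦ ⟨T, hT, (mul_subset_mul_right huv).trans mem⟩)
    fun U V ⟨T₁, hT₁, mem1⟩ ⟨T₂, hT₂, mem2⟩ ↦ ⟨T₁ ∩ T₂, inter_mem hT₁ hT₂, by
      rw [union_mul]
      exact union_subset (mul_subset_mul_left inter_subset_left |>.trans mem1)
        (mul_subset_mul_left inter_subset_right |>.trans mem2)⟩
  intro x memW
  have : (x, 1) ∈ (fun p : G × G ↦ p.1 * p.2) ⁻¹' W := by simp [memW]
  rcases isOpen_prod_iff.mp (continuous_mul.isOpen_preimage W <| WClopen.2) x 1 this with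
    ⟨U, V, Uopen, Vopen, xmemU, onememV, prodsub⟩
  have h6 : U * V ⊆ W := mul_subset_iff.mpr (fun _ hx _ hy ↦ prodsub (mk_mem_prod hx hy))
  exact ⟨U ∩ W, ⟨U, Uopen.mem_nhds xmemU, W, fun _ a ↦ a, rfl⟩,
    V, IsOpen.mem_nhds Vopen onememV, fun _ a ↦ h6 ((mul_subset_mul_right inter_subset_left) a)⟩

theorem aux_vanDantzig_core {G : Type*} [Group G] [TopologicalSpace G]
    [IsTopologicalGroup G] {W : Set G} (hWc : IsCompact W) (WClopen : IsClopen W)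
    (einW : 1 ∈ W) :
    ∃ U : Subgroup G, IsOpen (U : Set G) ∧ (U : Set G) ⊆ W := by
  obtain ⟨S, Smemnhds, mulclose⟩ := aux_exist_mul_closure_nhd hWc WClopen
  obtain ⟨U0, UsubS, Uopen, onememU⟩ := mem_nhds_iff.mp Smemnhds
  set V : Set G := U0 ∩ U0⁻¹ with hVdef
  have hVnhd : V ∈ 𝓝 (1 : G) := by
    simp [hVdef, Uopen.mem_nhds onememU, inv_mem_nhds_one]
  have hVinv : V⁻¹ = V := by simp [hVdef, inter_comm]
  have hVopen : IsOpen V := Uopen.inter Uopen.inv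
  have hVmul : W * V ⊆ W := fun a ha ↦
    mulclose (mul_subset_mul_left UsubS (mul_subset_mul_left inter_subset_left ha))
  let S' : Subgroup G :=
  { carrier := ⋃ n, V ^ (n + 1)
    mul_mem' := fun ha hb ↦ by
      rcases mem_iUnion.mp ha with ⟨k, hk⟩
      rcases mem_iUnion.mp hb with ⟨l, hl⟩
      apply mem_iUnion.mpr
      use k + 1 + l
      rw [add_assoc, pow_add]
      exact Set.mul_mem_mul hk hl
    one_mem' := by
      apply mem_iUnion.mpr
      use 0
      simp [mem_of_mem_nhds hVnhd]
    inv_mem' := fun ha ↦ by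
      rcases mem_iUnion.mp ha with ⟨k, hk⟩
      apply mem_iUnion.mpr
      use k
      rw [← hVinv]
      simpa only [inv_pow, Set.mem_inv, inv_inv] using hk }
  have hopen : IsOpen (⋃ n, V ^ (n + 1)) := by
    refine isOpen_iUnion fun n ↦ ?_
    rw [pow_succ]
    exact hVopen.mul_left
  refine ⟨S', hopen, ?_⟩
  have mulVpow (n : ℕ) : W * V ^ (n + 1) ⊆ W := by
    induction' n with n ih
    · simp [hVmul]
    · rw [pow_succ, ← mul_assoc]
      exact (Set.mul_subset_mul_right ih).trans hVmul
  have subW (n : ℕ) : V ^ (n + 1) ⊆ W * V ^ (n + 1) := by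
    intro x xin
    rw [Set.mem_mul]
    exact ⟨1, einW, x, xin, one_mul x⟩
  exact iUnion_subset fun i a hi ↦ mulVpow i (subW i hi)

/-- **van Dantzig**: a locally compact totally disconnected group has a compact
open subgroup. -/
theorem aux_vanDantzig (G : Type*) [Group G] [TopologicalSpace G]
    [IsTopologicalGroup G] [TotallyDisconnectedSpace G] [LocallyCompactSpace G]
    [T2Space G] :
    ∃ U : Subgroup G, IsOpen (U : Set G) ∧ IsCompact (U : Set G) := by
  obtain ⟨K, hKc, hKnhds⟩ := exists_compact_mem_nhds (1 : G)
  obtain ⟨W, hWclopen, h1W, hWK⟩ :=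
    (loc_compact_Haus_tot_disc_of_zero_dim (H := G)).exists_subset_of_mem_open
      (mem_interior_iff_mem_nhds.mpr hKnhds) isOpen_interior
  have hWc : IsCompact W :=
    hKc.of_isClosed_subset hWclopen.isClosed (hWK.trans interior_subset)
  obtain ⟨U, hUopen, hUW⟩ := aux_vanDantzig_core hWc hWclopen h1W
  exact ⟨U, hUopen, hWc.of_isClosed_subset
    (Subgroup.isClosed_of_isOpen U hUopen) hUW⟩


/-- An open continuous surjection from a locally compact space lifts compact sets. -/
theorem aux_compact_lift {X Y : Type*} [TopologicalSpace X] [TopologicalSpace Y]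
    [LocallyCompactSpace X] {f : X → Y} (hcont : Continuous f) (hopen : IsOpenMap f)
    (hsurj : Function.Surjective f) {S : Set Y} (hS : IsCompact S) :
    ∃ K : Set X, IsCompact K ∧ S ⊆ f '' K := by
  choose x hx using hsurj
  choose V hVc hVn using fun p : X ↦ exists_compact_mem_nhds p
  have hcover : S ⊆ ⋃ s ∈ S, f '' interior (V (x s)) := by
    intro s hs
    refine mem_biUnion hs ⟨x s, ?_, hx s⟩
    exact mem_interior_iff_mem_nhds.mpr (hVn (x s))
  obtain ⟨t, hts, htfin, hcov⟩ := hS.elim_finite_subcover_image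
    (fun s _ ↦ hopen _ isOpen_interior) hcover
  refine ⟨⋃ s ∈ t, V (x s), htfin.isCompact_biUnion (fun s _ ↦ hVc (x s)), ?_⟩
  intro s hs
  obtain ⟨u, hu, hsu⟩ := mem_iUnion₂.mp (hcov hs)
  obtain ⟨z, hz, rfl⟩ := hsu
  exact ⟨z, mem_biUnion hu (interior_subset hz), rfl⟩


theorem aux_abelian {Q : Type*} [CommGroup Q] [TopologicalSpace Q] [IsTopologicalGroup Q]
    (hcg : ∃ K : Set Q, IsCompact K ∧ Subgroup.closure K = ⊤)
    (Ub : Subgroup Q) (hUo : IsOpen (Ub : Set Q)) (hUc : IsCompact (Ub : Set Q)) :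
    ∃ (d : ℕ) (χ : Q →* Multiplicative (Fin d → ℤ)) (g : Multiplicative (Fin d → ℤ) →* Q),
      (∀ v, χ (g v) = v) ∧ IsOpen ((χ.ker : Subgroup Q) : Set Q) ∧
        IsCompact ((χ.ker : Subgroup Q) : Set Q) := by
  classical
  obtain ⟨Kset, hKc, hKgen⟩ := hcg
  let σ : Q →* Q ⧸ Ub := QuotientGroup.mk' Ub
  have hσsurj : Function.Surjective σ := QuotientGroup.mk'_surjective Ub
  -- fibers of σ are compact open (cosets of Ub)
  have hfiber : ∀ b : Q ⧸ Ub, IsCompact (σ ⁻¹' {b}) ∧ IsOpen (σ ⁻¹' {b}) := by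
    intro b
    obtain ⟨s, rfl⟩ := hσsurj b
    have heq : σ ⁻¹' {σ s} = (s * ·) '' (Ub : Set Q) := by
      ext q
      simp only [mem_preimage, mem_singleton_iff, Set.image_mul_left]
      constructor
      · intro h
        have : s⁻¹ * q ∈ Ub := (QuotientGroup.eq ).mp h.symm
        simpa using this
      · intro h
        exact ((QuotientGroup.eq).mpr (by simpa using h)).symm
    rw [heq, Set.image_mul_left]
    exact ⟨by rw [← Set.image_mul_left]; exact hUc.image (continuous_mul_left s),
      hUo.preimage (continuous_mul_left s⁻¹)⟩
  -- Q ⧸ Ub is finitely generated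
  have hcov : Kset ⊆ ⋃ q : Q, (q * ·) '' (Ub : Set Q) := fun k _ =>
    mem_iUnion.mpr ⟨k, ⟨1, Ub.one_mem, mul_one k⟩⟩
  obtain ⟨t, ht⟩ := hKc.elim_finite_subcover (fun q : Q => (q * ·) '' (Ub : Set Q))
    (fun q => by
      show IsOpen ((q * ·) '' (Ub : Set Q))
      rw [Set.image_mul_left]; exact hUo.preimage (continuous_mul_left q⁻¹)) hcov
  have himgsub : ⇑σ '' Kset ⊆ ⇑σ '' (t : Set Q) := by
    rintro _ ⟨k, hk, rfl⟩
    obtain ⟨q, hqt, hk'⟩ := mem_iUnion₂.mp (ht hk)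
    obtain ⟨u, hu, rfl⟩ := hk'
    refine ⟨q, hqt, ?_⟩
    have : σ u = 1 := (QuotientGroup.eq_one_iff u).mpr hu
    simp [map_mul, this]
  have hBfg : Group.FG (Q ⧸ Ub) := by
    rw [Group.fg_iff]
    refine ⟨⇑σ '' (t : Set Q), ?_, (t.finite_toSet.image _)⟩
    have h1 : Subgroup.closure (⇑σ '' Kset) = ⊤ := by
      rw [← MonoidHom.map_closure, hKgen]
      exact Subgroup.map_top_of_surjective σ hσsurj
    exact top_le_iff.mp (h1 ▸ Subgroup.closure_mono himgsub)
  haveI : Module.Finite ℤ (Additive (Q ⧸ Ub)) :=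
    Module.Finite.iff_addGroup_fg.mpr (GroupFG.iff_add_fg.mp hBfg)
  set M := Additive (Q ⧸ Ub) with hM
  set T : Submodule ℤ M := Submodule.torsion ℤ M with hT
  haveI : Module.Finite ℤ (M ⧸ T) := Module.Finite.quotient ℤ T
  obtain ⟨d, b⟩ := Module.basisOfFiniteTypeTorsionFree' (R := ℤ) (M := M ⧸ T)
  -- the additive projection
  let βlin : M →ₗ[ℤ] (Fin d → ℤ) := (b.equivFun.toLinearMap).comp T.mkQ
  have hβsurj : Function.Surjective βlin := by
    intro v
    obtain ⟨m, hm⟩ := T.mkQ_surjective (b.equivFun.symm v)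
    refine ⟨m, ?_⟩
    show b.equivFun (T.mkQ m) = v
    rw [hm]; exact b.equivFun.apply_symm_apply v
  have hβker : ∀ m : M, βlin m = 0 ↔ m ∈ T := by
    intro m
    simp only [βlin, LinearMap.comp_apply, LinearEquiv.coe_coe, EmbeddingLike.map_eq_zero_iff,
      Submodule.mkQ_apply, Submodule.Quotient.mk_eq_zero]
  let χ₂ : (Q ⧸ Ub) →* Multiplicative (Fin d → ℤ) :=
    AddMonoidHom.toMultiplicativeRight βlin.toAddMonoidHom
  let χ : Q →* Multiplicative (Fin d → ℤ) := χ₂.comp σ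
  have hχ : ∀ q : Q, χ q = Multiplicative.ofAdd (βlin (Additive.ofMul (σ q))) := fun q => rfl
  have hχsurj : Function.Surjective χ := by
    intro v
    obtain ⟨m, hm⟩ := hβsurj v.toAdd
    obtain ⟨q, hq⟩ := hσsurj m.toMul
    exact ⟨q, by simp [hχ, hq, hm]⟩
  -- choose lifts of the standard basis vectors
  have hlift : ∀ i : Fin d, ∃ a : Q, χ a = Multiplicative.ofAdd (Pi.single i 1) := fun i =>
    hχsurj _
  choose a ha using hlift
  let gpre : (∀ _ : Fin d, Multiplicative ℤ) →* Q :=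
    MonoidHom.noncommPiCoprod (fun i => zpowersHom Q (a i))
      (fun ⦃i j⦄ _ x y => Commute.all _ _)
  let g : Multiplicative (Fin d → ℤ) →* Q :=
    gpre.comp (MulEquiv.piMultiplicative (fun _ : Fin d => ℤ)).toMonoidHom
  have hg_single : ∀ (i : Fin d) (x : ℤ), g (Multiplicative.ofAdd (Pi.single i x)) = a i ^ x := by
    intro i x
    have h1 : (MulEquiv.piMultiplicative (fun _ : Fin d => ℤ))
        (Multiplicative.ofAdd (Pi.single i x)) = Pi.mulSingle i (Multiplicative.ofAdd x) := by
      funext j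
      by_cases h : j = i
      · subst h; simp [MulEquiv.piMultiplicative, Pi.mulSingle]
      · simp [MulEquiv.piMultiplicative, Pi.mulSingle, Pi.single, Function.update,
          h]
    have h2 : g (Multiplicative.ofAdd (Pi.single i x))
        = gpre (Pi.mulSingle i (Multiplicative.ofAdd x)) := by
      show gpre ((MulEquiv.piMultiplicative fun _ : Fin d => ℤ)
        (Multiplicative.ofAdd (Pi.single i x))) = _
      rw [h1]
    rw [h2, show gpre (Pi.mulSingle i (Multiplicative.ofAdd x)) = zpowersHom Q (a i)
        (Multiplicative.ofAdd x) from MonoidHom.noncommPiCoprod_mulSingle ..]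
    rfl
  have hsec : ∀ v, χ (g v) = v := by
    have key : ∀ w : Fin d → ℤ, χ (g (Multiplicative.ofAdd w)) = Multiplicative.ofAdd w := by
      -- compare two additive monoid homs out of (Fin d → ℤ)
      let F : (Fin d → ℤ) →+ (Fin d → ℤ) :=
        { toFun := fun w => (χ (g (Multiplicative.ofAdd w))).toAdd
          map_zero' := by simp
          map_add' := fun w₁ w₂ => by
            simp [ofAdd_add, map_mul] }
      have : F = AddMonoidHom.id _ := by
        refine AddMonoidHom.functions_ext (Fin d → ℤ) F (AddMonoidHom.id _) fun i x => ?_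
        show (χ (g (Multiplicative.ofAdd (Pi.single i x)))).toAdd = Pi.single i x
        rw [hg_single, map_zpow, ha]
        have : (Multiplicative.ofAdd (Pi.single i (1:ℤ)) : Multiplicative (Fin d → ℤ)) ^ x
            = Multiplicative.ofAdd (Pi.single i x) := by
          rw [← ofAdd_zsmul]
          congr 1
          funext j
          by_cases h : j = i
          · subst h; simp
          · simp [Pi.single, Function.update, h]
        rw [this]
        rfl
      intro w
      have := DFunLike.congr_fun this w
      have h' : (χ (g (Multiplicative.ofAdd w))).toAdd = w := by simpa [F] using this
      exact congrArg Multiplicative.ofAdd h'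
    intro v
    simpa using key v.toAdd
  -- the kernel of χ
  have hkerdecomp : ((χ.ker : Subgroup Q) : Set Q) = ⋃ b ∈ ⇑σ '' ((χ.ker : Subgroup Q) : Set Q),
      σ ⁻¹' {b} := by
    ext q
    simp only [mem_iUnion, mem_preimage, mem_singleton_iff, exists_prop]
    constructor
    · intro hq; exact ⟨σ q, ⟨q, hq, rfl⟩, rfl⟩
    · rintro ⟨b, ⟨s, hs, rfl⟩, hqs⟩
      have : χ q = χ s := by
        show χ₂ (σ q) = χ₂ (σ s)
        rw [hqs]
      show q ∈ χ.ker
      rw [MonoidHom.mem_ker, this]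
      exact hs
  have himgfin : (⇑σ '' ((χ.ker : Subgroup Q) : Set Q)).Finite := by
    haveI : IsNoetherian ℤ M := isNoetherian_of_isNoetherianRing_of_finite ℤ M
    haveI : Module.Finite ℤ ↥T := Module.Finite.iff_fg.mpr (IsNoetherian.noetherian T)
    haveI : Finite ↥T := Module.finite_of_fg_torsion ↥T (Submodule.torsion_isTorsion)
    have hTfin : (T : Set M).Finite := T.carrier.toFinite
    have hsub : ⇑σ '' ((χ.ker : Subgroup Q) : Set Q) ⊆ Additive.toMul '' (T : Set M) := by
      rintro _ ⟨q, hq, rfl⟩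
      have h0 : βlin (Additive.ofMul (σ q)) = 0 := by
        have := MonoidHom.mem_ker.mp hq
        have h2 : Multiplicative.ofAdd (βlin (Additive.ofMul (σ q))) = 1 := by
          rw [← hχ q, this]
        simpa using h2
      exact ⟨Additive.ofMul (σ q), (hβker _).mp h0, rfl⟩
    exact (hTfin.image _).subset hsub
  refine ⟨d, χ, g, hsec, ?_, ?_⟩
  · rw [hkerdecomp]
    exact isOpen_biUnion (fun b _ => (hfiber b).2)
  · rw [hkerdecomp]
    exact himgfin.isCompact_biUnion (fun b _ => (hfiber b).1)

end AuxLemma214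

section MainLemma214
open Set Filter Topology Pointwise
open scoped commutatorElement

/-- **Lemma 2.14.** Let `G` be a locally compact compactly generated totally disconnected
solvable group. Then there exists a closed normal cocompact subgroup `N` containing the closure
of the commutator subgroup, such that `N / cl([G,G])` is topologically isomorphic to `ℤ^d`
(with the discrete topology) for some `d ≥ 0`. -/
theorem lemma_2_14 {G : Type*} [Group G] [TopologicalSpace G] [IsTopologicalGroup G]
    [TotallyDisconnectedSpace G] [LocallyCompactSpace G]
    (hcg : IsCompactlyGeneratedGroup G) (hsolv : IsSolvable G) :
    ∃ N : Subgroup G, N.Normal ∧ IsClosed (N : Set G) ∧ CompactSpace (G ⧸ N) ∧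
      (commutator G).topologicalClosure ≤ N ∧
      ∃ (d : ℕ)
        (e : (↥N ⧸ ((commutator G).topologicalClosure.subgroupOf N)) ≃*
          Multiplicative (Fin d → ℤ)),
        Continuous ⇑e ∧ Continuous ⇑e.symm := by
    classical
  haveI : T1Space G := ⟨fun x => by
    have h := totallyDisconnectedSpace_iff_connectedComponent_singleton.mp ‹_› x
    rw [← h]; exact isClosed_connectedComponent⟩
  haveI : T2Space G := IsTopologicalGroup.t2Space_iff_one_closed.mpr isClosed_singleton
  set C := (commutator G).topologicalClosure with hCdef
  haveI hCnormal : C.Normal := Subgroup.is_normal_topologicalClosure _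
  haveI hCclosed : IsClosed (C : Set G) := Subgroup.isClosed_topologicalClosure _
  haveI : T3Space (G ⧸ C) := inferInstance
  -- commutativity of the quotient
  have hQcomm : ∀ a b : G ⧸ C, a * b = b * a := by
    intro a b
    obtain ⟨x, rfl⟩ := QuotientGroup.mk'_surjective C a
    obtain ⟨y, rfl⟩ := QuotientGroup.mk'_surjective C b
    rw [← map_mul, ← map_mul]
    apply (QuotientGroup.eq (s := C)).mpr
    have : (x * y)⁻¹ * (y * x) = ⁅y⁻¹, x⁻¹⁆ := by
      group
    rw [this]
    exact Subgroup.le_topologicalClosure _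
      (Subgroup.commutator_mem_commutator (Subgroup.mem_top _) (Subgroup.mem_top _))
  letI : CommGroup (G ⧸ C) := { (inferInstance : Group (G ⧸ C)) with mul_comm := hQcomm }
  -- van Dantzig and the abelian structure lemma
  obtain ⟨U, hUopen, hUcomp⟩ := aux_vanDantzig G
  let π : G →* G ⧸ C := QuotientGroup.mk' C
  have hπcont : Continuous ⇑π := continuous_quot_mk
  have hπopen : IsOpenMap ⇑π := QuotientGroup.isOpenMap_coe
  have hπsurj : Function.Surjective ⇑π := QuotientGroup.mk'_surjective C
  let Ub : Subgroup (G ⧸ C) := Subgroup.map π U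
  have hUbo : IsOpen (Ub : Set (G ⧸ C)) := by
    rw [Subgroup.coe_map]; exact hπopen _ hUopen
  have hUbc : IsCompact (Ub : Set (G ⧸ C)) := by
    rw [Subgroup.coe_map]; exact hUcomp.image hπcont
  obtain ⟨Kg, hKgc, hKggen⟩ := hcg
  have hcgQ : ∃ K : Set (G ⧸ C), IsCompact K ∧ Subgroup.closure K = ⊤ :=
    ⟨⇑π '' Kg, hKgc.image hπcont, by
      rw [← MonoidHom.map_closure, hKggen]
      exact Subgroup.map_top_of_surjective π hπsurj⟩
  obtain ⟨d, χ, g, hsec, hkero, hkerc⟩ := aux_abelian hcgQ Ub hUbo hUbc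
  -- the lattice A and the subgroup N
  let A : Subgroup (G ⧸ C) := g.range
  haveI hAdisc : DiscreteTopology ↥A := by
    apply discreteTopology_of_isOpen_singleton_one
    have h1 : ({1} : Set ↥A) = (Subtype.val) ⁻¹' ((χ.ker : Subgroup _) : Set (G ⧸ C)) := by
      ext ⟨x, hx⟩
      simp only [mem_singleton_iff, mem_preimage, SetLike.mem_coe, MonoidHom.mem_ker]
      constructor
      · intro h
        have hx1 : x = 1 := congrArg Subtype.val h
        rw [hx1, map_one]
      · intro hker
        obtain ⟨v, rfl⟩ := hx
        have hv : v = 1 := by rw [← hsec v]; exact hker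
        have hg1 : g v = 1 := by rw [hv, map_one]
        exact Subtype.ext (by simpa using hg1)
    rw [h1]
    exact hkero.preimage continuous_subtype_val
  have hAclosed : IsClosed (A : Set (G ⧸ C)) := Subgroup.isClosed_of_discrete
  let N : Subgroup G := A.comap π
  have hmemN : ∀ x : G, x ∈ N ↔ π x ∈ A := fun x => Iff.rfl
  have hNnormal : N.Normal := by
    refine ⟨fun n hn gg => ?_⟩
    have : π (gg * n * gg⁻¹) = π n := by
      rw [map_mul, map_mul, map_inv, hQcomm (π gg) (π n), mul_assoc, mul_inv_cancel, mul_one]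
    rw [hmemN, this]
    exact hn
  have hCN : C ≤ N := fun c hc => by
    rw [hmemN, show π c = 1 from (QuotientGroup.eq_one_iff c).mpr hc]
    exact A.one_mem
  have hNclosed : IsClosed (N : Set G) := by
    have : (N : Set G) = ⇑π ⁻¹' (A : Set (G ⧸ C)) := rfl
    rw [this]
    exact hAclosed.preimage hπcont
  -- cocompactness
  obtain ⟨K, hKc2, hSsub⟩ := aux_compact_lift hπcont hπopen hπsurj hkerc
  haveI hcompact : CompactSpace (G ⧸ N) := by
    rw [← isCompact_univ_iff]
    have huniv : (Set.univ : Set (G ⧸ N)) = QuotientGroup.mk '' K := by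
      refine Set.eq_of_subset_of_subset (fun y _ => ?_) (subset_univ _)
      obtain ⟨x, rfl⟩ := QuotientGroup.mk_surjective y
      have hsker : π x * (g (χ (π x)))⁻¹ ∈ χ.ker := by
        rw [MonoidHom.mem_ker, map_mul, map_inv, hsec, mul_inv_cancel]
      obtain ⟨k, hkK, hks⟩ := hSsub hsker
      refine ⟨k, hkK, ?_⟩
      apply (QuotientGroup.eq (s := N)).mpr
      rw [hmemN, map_mul, map_inv, hks]
      have : (π x * (g (χ (π x)))⁻¹)⁻¹ * π x = g (χ (π x)) := by group
      rw [this]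
      exact ⟨_, rfl⟩
    rw [huniv]
    exact hKc2.image continuous_quot_mk
  -- the isomorphism
  let ρ : G →* Multiplicative (Fin d → ℤ) := χ.comp π
  let f : ↥N →* Multiplicative (Fin d → ℤ) := ρ.comp N.subtype
  have hfsurj : Function.Surjective ⇑f := by
    intro v
    obtain ⟨x, hx⟩ := hπsurj (g v)
    have hxN : x ∈ N := by rw [hmemN, hx]; exact ⟨v, rfl⟩
    exact ⟨⟨x, hxN⟩, by show χ (π x) = v; rw [hx, hsec]⟩
  have hker : C.subgroupOf N = f.ker := by
    ext ⟨x, hxN⟩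
    simp only [Subgroup.mem_subgroupOf, MonoidHom.mem_ker]
    constructor
    · intro hc
      show χ (π x) = 1
      rw [show π x = 1 from (QuotientGroup.eq_one_iff x).mpr hc, map_one]
    · intro h1
      obtain ⟨v, hv⟩ := (hmemN x).mp hxN
      have hfx : χ (π x) = 1 := h1
      have hv1 : v = 1 := by rw [← hsec v, hv]; exact hfx
      have : π x = 1 := by rw [← hv, hv1, map_one]
      exact (QuotientGroup.eq_one_iff x).mp this
  haveI : (C.subgroupOf N).Normal := hker ▸ f.normal_ker
  let e : (↥N ⧸ C.subgroupOf N) ≃* Multiplicative (Fin d → ℤ) :=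
    (QuotientGroup.quotientMulEquivOfEq hker).trans
      (QuotientGroup.quotientKerEquivOfSurjective f hfsurj)
  refine ⟨N, hNnormal, hNclosed, hcompact, hCN, d, e, ?_, ?_⟩
  · -- continuity of e
    have hopenker : IsOpen ((f.ker : Subgroup ↥N) : Set ↥N) := by
      have h2 : ((f.ker : Subgroup ↥N) : Set ↥N) =
          (Subtype.val) ⁻¹' (⇑π ⁻¹' ((χ.ker : Subgroup _) : Set (G ⧸ C))) := by
        ext n
        simp only [SetLike.mem_coe, MonoidHom.mem_ker, mem_preimage]
        rfl
      rw [h2]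
      exact (hkero.preimage hπcont).preimage continuous_subtype_val
    have hfc : Continuous ⇑f := by
      rw [continuous_discrete_rng]
      intro b
      by_cases hb : ∃ x0, f x0 = b
      · obtain ⟨x0, rfl⟩ := hb
        have h3 : ⇑f ⁻¹' {f x0} = (fun y => x0⁻¹ * y) ⁻¹' ((f.ker : Subgroup ↥N) : Set ↥N) := by
          ext y
          simp only [mem_preimage, mem_singleton_iff, SetLike.mem_coe, MonoidHom.mem_ker,
            map_mul, map_inv]
          constructor
          · intro h; rw [h]; simp
          · intro h; exact (inv_mul_eq_one.mp h).symm
        rw [h3]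
        exact hopenker.preimage (continuous_const.mul continuous_id)
      · have h4 : ⇑f ⁻¹' {b} = ∅ := by
          ext y; simp only [mem_preimage, mem_singleton_iff, mem_empty_iff_false, iff_false]
          exact fun h => hb ⟨y, h⟩
        rw [h4]
        exact isOpen_empty
    rw [(QuotientGroup.isQuotientMap_mk (C.subgroupOf N)).continuous_iff]
    have : ⇑e ∘ (QuotientGroup.mk : ↥N → ↥N ⧸ C.subgroupOf N) = ⇑f := by
      funext n; rfl
    rw [this]
    exact hfc
  · exact continuous_of_discreteTopology

end MainLemma214
end

section
/- Let G be a locally compact group, μ a regular Borel probability measure on G, and N a closed normal subgroup of G. If μ is a Choquet-Deny measure on G, then the projection of μ onto G/N (the pushforward of μ under the canonical homomorphism G → G/N) is a Choquet-Deny measure on G/N. -/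
open Filter Topology MeasureTheory Pointwise

section MeasDefs
variable {G : Type*} [Group G] [TopologicalSpace G] [MeasurableSpace G]

/-- The support of a measure: the set of points all of whose neighbourhoods
have positive measure. -/
def measSupport (μ : Measure G) : Set G := {x : G | ∀ U ∈ nhds x, 0 < μ U}

/-- `G_μ`: the smallest closed subgroup of `G` containing the support of `μ`. -/
def adaptedSubgroup [IsTopologicalGroup G] (μ : Measure G) : Subgroup G :=
  (Subgroup.closure (measSupport μ)).topologicalClosure

/-- `μ` is a Choquet–Deny measure: every bounded continuous `μ`-harmonic function
`h` (i.e. `h(g) = ∫ h(g g') μ(dg')` for all `g`) is constant on the left cosets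
of `G_μ`. -/
def IsChoquetDenyMeasure [IsTopologicalGroup G] (μ : Measure G) : Prop :=
  ∀ h : G → ℂ, Continuous h → (∃ C : ℝ, ∀ g : G, ‖h g‖ ≤ C) →
    (∀ g : G, h g = ∫ x, h (g * x) ∂μ) →
    ∀ g : G, ∀ y ∈ adaptedSubgroup μ, h (g * y) = h g

/-- Weak convergence of a net of measures along a filter, in the
`σ(M₁(G), C_b(G))`-topology: integrals of bounded continuous functions converge. -/
def WeaklyTendsto {ι : Type*} (l : Filter ι) (μs : ι → Measure G) (ν : Measure G) : Prop :=
  ∀ f : BoundedContinuousFunction G ℝ,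
    Tendsto (fun a => ∫ x, f x ∂(μs a)) l (nhds (∫ x, f x ∂ν))

end MeasDefs


/-- An open set disjoint from `measSupport μ` of a regular measure has measure zero. -/
lemma aux_open_zero {G : Type*} [Group G] [TopologicalSpace G] [MeasurableSpace G]
    (μ : Measure G) [μ.Regular] {V : Set G} (hV : IsOpen V)
    (hd : Disjoint V (measSupport μ)) : μ V = 0 := by
  by_contra h
  have h0 : 0 < μ V := pos_iff_ne_zero.mpr h
  obtain ⟨K, hKV, hK, hK0⟩ := Measure.Regular.innerRegular hV 0 h0
  have hex : ∀ x ∈ K, ∃ U ∈ nhds x, μ U = 0 := by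
    intro x hx
    have : x ∉ measSupport μ := fun hm => (hd.ne_of_mem (hKV hx) hm) rfl
    simp only [measSupport, Set.mem_setOf_eq, not_forall] at this
    obtain ⟨U, hU, hU0⟩ := this
    exact ⟨U, hU, le_antisymm (not_lt.mp hU0) (zero_le)⟩
  choose U hU hU0 using hex
  obtain ⟨t, htc⟩ := hK.elim_nhds_subcover' U hU
  have : μ K = 0 := by
    refine le_antisymm (((measure_mono htc).trans
      (measure_biUnion_finset_le _ _)).trans ?_) (zero_le)
    exact le_of_eq (Finset.sum_eq_zero fun x _ => hU0 x x.2)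
  exact absurd this hK0.ne'

/-- **Lemma 3.1(a).** If `μ` is a Choquet–Deny (regular Borel probability) measure on a locally
compact group `G` and `N ⊆ G` is a closed normal subgroup, then the projection of `μ` onto
`G/N` is a Choquet–Deny measure on `G/N`. -/
theorem lemma_3_1_a {G : Type*} [Group G] [TopologicalSpace G] [IsTopologicalGroup G]
    [LocallyCompactSpace G] [MeasurableSpace G] [BorelSpace G]
    (μ : Measure G) [IsProbabilityMeasure μ] [μ.Regular]
    (N : Subgroup G) [N.Normal] (hNclosed : IsClosed (N : Set G))
    [MeasurableSpace (G ⧸ N)] [BorelSpace (G ⧸ N)]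
    (hCD : IsChoquetDenyMeasure μ) :
    IsChoquetDenyMeasure (Measure.map (QuotientGroup.mk : G → G ⧸ N) μ) := by
  set π : G → G ⧸ N := QuotientGroup.mk with hπ
  have hπc : Continuous π := continuous_quotient_mk'
  have hπm : Measurable π := hπc.measurable
  set ν := Measure.map π μ with hν
  intro h hc ⟨C, hC⟩ hharm
  -- the pullback is μ-harmonic
  have hHharm : ∀ g : G, h (π g) = ∫ x, h (π (g * x)) ∂μ := by
    intro g
    rw [hharm (π g), hν, MeasureTheory.integral_map (f := fun x => h (π g * x))
      hπm.aemeasurable ((hc.comp (continuous_mul_left (π g))).aestronglyMeasurable)]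
    rfl
  have key : ∀ g : G, ∀ y ∈ adaptedSubgroup μ, h (π g * π y) = h (π g) := by
    intro g y hy
    have := hCD (h ∘ π) (hc.comp hπc) ⟨C, fun g => hC (π g)⟩ hHharm g y hy
    exact this
  -- the subgroup of periods of h
  set K : Subgroup (G ⧸ N) :=
    { carrier := {y : G ⧸ N | ∀ g : G ⧸ N, h (g * y) = h g}
      mul_mem' := fun {a b} ha hb g => by rw [← mul_assoc, hb, ha]
      one_mem' := fun g => by rw [mul_one]
      inv_mem' := fun {a} ha g => by
        have := ha (g * a⁻¹); rwa [mul_assoc, inv_mul_cancel, mul_one, eq_comm] at this }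
    with hK
  have hKclosed : IsClosed (K : Set (G ⧸ N)) := by
    have : (K : Set (G ⧸ N)) = ⋂ g : G ⧸ N, {y | h (g * y) = h g} := by
      ext y; simp [hK, Set.mem_iInter]
    rw [this]
    exact isClosed_iInter fun g =>
      isClosed_eq (hc.comp (continuous_mul_left g)) continuous_const
  have himg : π '' measSupport μ ⊆ (K : Set (G ⧸ N)) := by
    rintro _ ⟨y, hy, rfl⟩ g
    obtain ⟨g', rfl⟩ := QuotientGroup.mk_surjective g
    exact key g' y (Subgroup.le_topologicalClosure _ (Subgroup.subset_closure hy))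
  have hsupp : measSupport ν ⊆ (K : Set (G ⧸ N)) := by
    intro y hy
    by_contra hyK
    -- y is outside the closed set K, hence outside closure (π '' measSupport μ)
    have hVopen : IsOpen ((K : Set (G ⧸ N))ᶜ) := hKclosed.isOpen_compl
    have hyV : (K : Set (G ⧸ N))ᶜ ∈ nhds y := hVopen.mem_nhds hyK
    have hpos : 0 < ν ((K : Set (G ⧸ N))ᶜ) := hy _ hyV
    have hmap : ν ((K : Set (G ⧸ N))ᶜ) = μ (π ⁻¹' (K : Set (G ⧸ N))ᶜ) :=
      Measure.map_apply hπm hVopen.measurableSet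
    have hdisj : Disjoint (π ⁻¹' (K : Set (G ⧸ N))ᶜ) (measSupport μ) := by
      rw [Set.disjoint_left]
      intro x hx hxs
      exact hx (himg ⟨x, hxs, rfl⟩)
    have := aux_open_zero μ (hVopen.preimage hπc) hdisj
    rw [hmap, this] at hpos
    exact lt_irrefl 0 hpos
  intro g y hy
  have hyK : y ∈ K := by
    have hle : adaptedSubgroup ν ≤ K :=
      Subgroup.topologicalClosure_minimal _ (Subgroup.closure_le K |>.mpr hsupp) hKclosed
    exact hle hy
  exact hyK g
end

section
/- Let G be a locally compact group and μ a regular Borel probability measure on G. If every neighbourhood of the identity in G contains a compact normal subgroup N such that the projection of μ onto G/N is a Choquet-Deny measure, then μ is a Choquet-Deny measure on G. -/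
open Filter Topology MeasureTheory Pointwise

/-- Uniqueness of Haar probability measures yields invariance under bicontinuous
automorphisms on a compact group. -/
lemma aux_map_automorphism_eq {K : Type*} [Group K] [TopologicalSpace K] [IsTopologicalGroup K]
    [CompactSpace K] [MeasurableSpace K] [BorelSpace K]
    (ρ : Measure K) [IsProbabilityMeasure ρ] [ρ.IsHaarMeasure]
    (e : K ≃* K) (he : Continuous e) (he' : Continuous e.symm) :
    Measure.map (⇑e) ρ = ρ := by
  haveI : LocallyCompactSpace K :=
    isCompact_univ.locallyCompactSpace_of_mem_nhds_of_group (x := 1) Filter.univ_mem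
  haveI := e.isHaarMeasure_map ρ he he'
  haveI : IsProbabilityMeasure (Measure.map (⇑e) ρ) :=
    Measure.isProbabilityMeasure_map he.measurable.aemeasurable
  exact Measure.isHaarMeasure_eq_of_isProbabilityMeasure _ _

/-- Continuity of a parametric integral of a continuous function whose support in the
integration variable lies in a fixed compact set, via the tube lemma. -/
lemma aux_cont_param {Y X : Type*} [TopologicalSpace Y] [TopologicalSpace X]
    [MeasurableSpace X] [OpensMeasurableSpace X]
    (μ : MeasureTheory.Measure X) [IsProbabilityMeasure μ]
    (F : Y → X → ℂ) (hF : Continuous (Function.uncurry F))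
    {T : Set X} (hT : IsCompact T) (hTc : IsClosed T)
    (hsupp : ∀ y x, x ∉ T → F y x = 0) :
    Continuous fun y => ∫ x, F y x ∂μ := by
  have hint : ∀ y : Y, Integrable (F y) μ := by
    intro y
    apply Continuous.integrable_of_hasCompactSupport (hF.comp (Continuous.prodMk_right y))
    exact HasCompactSupport.intro' hT hTc (hsupp y)
  rw [continuous_iff_continuousAt]
  intro y₀
  rw [ContinuousAt, Metric.tendsto_nhds]
  intro ε hε
  have hopen : IsOpen {p : Y × X | ‖F p.1 p.2 - F y₀ p.2‖ < ε / 2} := by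
    have hc : Continuous fun p : Y × X => ‖F p.1 p.2 - F y₀ p.2‖ := by
      apply Continuous.norm
      exact ((hF.comp (continuous_fst.prodMk continuous_snd)).sub
        (hF.comp (continuous_const.prodMk continuous_snd)))
    exact isOpen_lt hc continuous_const
  have hcov : ({y₀} : Set Y) ×ˢ T ⊆ {p : Y × X | ‖F p.1 p.2 - F y₀ p.2‖ < ε / 2} := by
    rintro ⟨y', x⟩ ⟨hy', _hx⟩
    rcases hy' with rfl
    simpa using half_pos hε
  obtain ⟨u, v, hu, _hv, hyu, hTv, huv⟩ :=
    generalized_tube_lemma isCompact_singleton hT hopen hcov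
  filter_upwards [hu.mem_nhds (hyu rfl)] with y hy
  have hpt : ∀ x, ‖F y x - F y₀ x‖ ≤ ε / 2 := by
    intro x
    by_cases hx : x ∈ T
    · exact (huv (Set.mk_mem_prod hy (hTv hx))).le
    · simp [hsupp y x hx, hsupp y₀ x hx, (half_pos hε).le]
  calc dist (∫ x, F y x ∂μ) (∫ x, F y₀ x ∂μ)
      = ‖∫ x, (F y x - F y₀ x) ∂μ‖ := by
        rw [dist_eq_norm, ← integral_sub (hint y) (hint y₀)]
    _ ≤ (ε / 2) * (μ Set.univ).toReal :=
        norm_integral_le_of_norm_le_const (Filter.Eventually.of_forall hpt)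
    _ < ε := by
        simp only [measure_univ, ENNReal.toReal_one, mul_one]
        linarith

/-- A Fubini-type swap for a bounded continuous function on the product of a compact
probability space and a regular probability measure on a locally compact regular space,
assuming continuity of one of the marginal integrals. -/
lemma aux_swap {X G : Type*} [TopologicalSpace X] [CompactSpace X]
    [MeasurableSpace X] [OpensMeasurableSpace X]
    [TopologicalSpace G] [MeasurableSpace G] [OpensMeasurableSpace G]
    [LocallyCompactSpace G] [RegularSpace G]
    (ρ : MeasureTheory.Measure X) [IsProbabilityMeasure ρ]
    (μ : MeasureTheory.Measure G) [IsProbabilityMeasure μ] [μ.Regular]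
    (f : X → G → ℂ) (hf : Continuous (Function.uncurry f))
    {C : ℝ} (hC : ∀ n x, ‖f n x‖ ≤ C)
    (hC0 : 0 ≤ C)
    (hA : Continuous fun n => ∫ x, f n x ∂μ) :
    ∫ n, (∫ x, f n x ∂μ) ∂ρ = ∫ x, (∫ n, f n x ∂ρ) ∂μ := by
  -- single-variable integrability facts
  have int_f : ∀ n, Integrable (f n) μ := by
    intro n
    refine Integrable.mono' (integrable_const C)
      ((hf.comp (Continuous.prodMk_right n)).aestronglyMeasurable)
      (Filter.Eventually.of_forall fun x => hC n x)
  have int_fX : ∀ x, Integrable (fun n => f n x) ρ := by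
    intro x
    refine Integrable.mono' (integrable_const C)
      ((hf.comp (continuous_id.prodMk continuous_const)).aestronglyMeasurable)
      (Filter.Eventually.of_forall fun n => hC n x)
  have hB : Continuous fun x => ∫ n, f n x ∂ρ := by
    refine aux_cont_param ρ (fun x n => f n x) (hf.comp continuous_swap)
      isCompact_univ isClosed_univ ?_
    intro y x hx; exact absurd (Set.mem_univ x) hx
  have hBbdd : ∀ x, ‖∫ n, f n x ∂ρ‖ ≤ C := by
    intro x
    calc ‖∫ n, f n x ∂ρ‖ ≤ C * (ρ Set.univ).toReal :=
          norm_integral_le_of_norm_le_const (Filter.Eventually.of_forall fun n => hC n x)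
      _ = C := by simp
  have hAbdd : ∀ n, ‖∫ x, f n x ∂μ‖ ≤ C := by
    intro n
    calc ‖∫ x, f n x ∂μ‖ ≤ C * (μ Set.univ).toReal :=
          norm_integral_le_of_norm_le_const (Filter.Eventually.of_forall fun x => hC n x)
      _ = C := by simp
  apply eq_of_forall_dist_le
  intro ε hε
  set δ : ℝ := ε / (2 * C + 1) with hδdef
  have hδ : 0 < δ := div_pos hε (by linarith)
  -- a big closed compact set whose complement has small measure
  obtain ⟨K, -, hKcomp, hKmeas⟩ :=
    Measure.Regular.innerRegular (μ := μ) isOpen_univ (1 - ENNReal.ofReal δ)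
      (ENNReal.sub_lt_self ENNReal.one_ne_top one_ne_zero
        (by simpa using hδ) |>.trans_le (by simp))
  set L : Set G := closure K with hLdef
  have hLcomp : IsCompact L := hKcomp.closure
  have hLclosed : IsClosed L := isClosed_closure
  have hLsmall : (μ Lᶜ).toReal ≤ δ := by
    have h1 : 1 - ENNReal.ofReal δ < μ L := hKmeas.trans_le (measure_mono subset_closure)
    have h2 : μ Lᶜ = 1 - μ L := by
      rw [measure_compl hLclosed.measurableSet (measure_ne_top μ _), measure_univ]
    have h3 : μ Lᶜ ≤ ENNReal.ofReal δ := by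
      rw [h2]
      rw [tsub_le_iff_right]
      rcases le_total 1 (ENNReal.ofReal δ) with hle | hle
      · exact le_trans hle le_self_add
      · have h4 : ENNReal.ofReal δ + (1 - ENNReal.ofReal δ)
            ≤ ENNReal.ofReal δ + μ L := by
          gcongr
        rwa [add_tsub_cancel_of_le hle] at h4
    exact ENNReal.toReal_le_of_le_ofReal hδ.le h3
  -- Urysohn cutoff
  obtain ⟨χ, hχ1, -, hχsupp, hχmem⟩ :=
    exists_continuous_one_zero_of_isCompact hLcomp isClosed_empty (Set.disjoint_empty L)
  set g : X → G → ℂ := fun n x => χ x • f n x with hgdef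
  have hg : Continuous (Function.uncurry g) :=
    ((χ.continuous.comp continuous_snd).smul hf)
  have hgsupp : HasCompactSupport (Function.uncurry g) := by
    apply HasCompactSupport.intro' (isCompact_univ.prod hχsupp)
      (isClosed_univ.prod (isClosed_tsupport _))
    rintro ⟨n, x⟩ hp
    have hx : x ∉ tsupport ⇑χ := by
      intro hx; exact hp ⟨Set.mem_univ n, hx⟩
    simp [hgdef, Function.uncurry, image_eq_zero_of_notMem_tsupport hx]
  have hχ01 : ∀ x, 0 ≤ χ x ∧ χ x ≤ 1 := fun x => ⟨(hχmem x).1, (hχmem x).2⟩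
  have int_g : ∀ n, Integrable (g n) μ := by
    intro n
    refine Integrable.mono' (integrable_const C)
      ((hg.comp (Continuous.prodMk_right n)).aestronglyMeasurable)
      (Filter.Eventually.of_forall fun x => ?_)
    have : ‖g n x‖ = |χ x| * ‖f n x‖ := by rw [hgdef]; simp [norm_smul]
    rw [this, abs_of_nonneg (hχ01 x).1]
    calc χ x * ‖f n x‖ ≤ 1 * C := by
          apply mul_le_mul (hχ01 x).2 (hC n x) (norm_nonneg _) zero_le_one
      _ = C := one_mul C
  -- pointwise bound for differences, x-direction
  have hfg : ∀ n x, ‖f n x - g n x‖ ≤ Lᶜ.indicator (fun _ => C) x := by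
    intro n x
    by_cases hx : x ∈ L
    · have h1 : χ x = 1 := hχ1 hx
      have hzero : f n x - g n x = 0 := by rw [hgdef]; simp [h1]
      rw [hzero, norm_zero]
      exact Set.indicator_nonneg (fun _ _ => hC0) x
    · have hub : ‖f n x - g n x‖ ≤ C := by
        have : f n x - g n x = (1 - χ x) • f n x := by
          rw [hgdef]; simp [sub_smul]
        rw [this, norm_smul]
        have h1 : ‖(1 : ℝ) - χ x‖ ≤ 1 := by
          rw [Real.norm_eq_abs, abs_of_nonneg (by linarith [(hχ01 x).2])]
          linarith [(hχ01 x).1]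
        calc ‖(1 : ℝ) - χ x‖ * ‖f n x‖ ≤ 1 * C :=
              mul_le_mul h1 (hC n x) (norm_nonneg _) zero_le_one
          _ = C := one_mul C
      simpa [Set.indicator_of_mem (by simpa using hx : x ∈ Lᶜ)] using hub
  have int_ind : Integrable (Lᶜ.indicator (fun _ => C)) μ :=
    (integrable_const C).indicator hLclosed.measurableSet.compl
  have hind_int : ∫ x, Lᶜ.indicator (fun _ => C) x ∂μ = C * (μ Lᶜ).toReal := by
    rw [integral_indicator_const C hLclosed.measurableSet.compl]
    simp [mul_comm, Measure.real]
  -- E1 : difference of inner integrals over μ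
  have E1 : ∀ n, ‖(∫ x, f n x ∂μ) - (∫ x, g n x ∂μ)‖ ≤ C * (μ Lᶜ).toReal := by
    intro n
    rw [← integral_sub (int_f n) (int_g n)]
    calc ‖∫ x, (f n x - g n x) ∂μ‖ ≤ ∫ x, ‖f n x - g n x‖ ∂μ :=
          norm_integral_le_integral_norm _
      _ ≤ ∫ x, Lᶜ.indicator (fun _ => C) x ∂μ := by
          apply integral_mono ((int_f n).sub (int_g n)).norm int_ind
          intro x; exact hfg n x
      _ = C * (μ Lᶜ).toReal := hind_int
  -- continuity of the g-marginals
  have hAg : Continuous fun n => ∫ x, g n x ∂μ := by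
    refine aux_cont_param μ g hg hχsupp (isClosed_tsupport _) ?_
    intro n x hx
    simp [hgdef, image_eq_zero_of_notMem_tsupport hx]
  have hAgbdd : ∀ n, ‖∫ x, g n x ∂μ‖ ≤ C := by
    intro n
    calc ‖∫ x, g n x ∂μ‖ ≤ C * (μ Set.univ).toReal := by
          apply norm_integral_le_of_norm_le_const
          apply Filter.Eventually.of_forall
          intro x
          have : ‖g n x‖ = |χ x| * ‖f n x‖ := by rw [hgdef]; simp [norm_smul]
          rw [this, abs_of_nonneg (hχ01 x).1]
          calc χ x * ‖f n x‖ ≤ 1 * C :=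
                mul_le_mul (hχ01 x).2 (hC n x) (norm_nonneg _) zero_le_one
            _ = C := one_mul C
      _ = C := by simp
  have int_A : Integrable (fun n => ∫ x, f n x ∂μ) ρ :=
    Integrable.mono' (integrable_const C) hA.aestronglyMeasurable
      (Filter.Eventually.of_forall hAbdd)
  have int_Ag : Integrable (fun n => ∫ x, g n x ∂μ) ρ :=
    Integrable.mono' (integrable_const C) hAg.aestronglyMeasurable
      (Filter.Eventually.of_forall hAgbdd)
  -- first approximation
  have step1 : ‖(∫ n, (∫ x, f n x ∂μ) ∂ρ) - (∫ n, (∫ x, g n x ∂μ) ∂ρ)‖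
      ≤ C * (μ Lᶜ).toReal := by
    rw [← integral_sub int_A int_Ag]
    calc ‖∫ n, ((∫ x, f n x ∂μ) - (∫ x, g n x ∂μ)) ∂ρ‖
        ≤ (C * (μ Lᶜ).toReal) * (ρ Set.univ).toReal :=
          norm_integral_le_of_norm_le_const (Filter.Eventually.of_forall E1)
      _ = C * (μ Lᶜ).toReal := by simp
  -- swap for g
  have hswapg : ∫ n, (∫ x, g n x ∂μ) ∂ρ = ∫ x, (∫ n, g n x ∂ρ) ∂μ :=
    integral_integral_swap_of_hasCompactSupport hg hgsupp
  -- second approximation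
  have hBg_eq : ∀ x, (∫ n, g n x ∂ρ) = χ x • ∫ n, f n x ∂ρ := by
    intro x
    rw [hgdef]
    exact integral_smul (χ x) (fun n => f n x)
  have E2 : ∀ x, ‖(∫ n, f n x ∂ρ) - (∫ n, g n x ∂ρ)‖ ≤ Lᶜ.indicator (fun _ => C) x := by
    intro x
    rw [hBg_eq x]
    by_cases hx : x ∈ L
    · have h1 : χ x = 1 := hχ1 hx
      rw [h1, one_smul, sub_self, norm_zero]
      exact Set.indicator_nonneg (fun _ _ => hC0) x
    · have hub : ‖(∫ n, f n x ∂ρ) - χ x • ∫ n, f n x ∂ρ‖ ≤ C := by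
        have heq : (∫ n, f n x ∂ρ) - χ x • (∫ n, f n x ∂ρ)
            = ((1 : ℝ) - χ x) • ∫ n, f n x ∂ρ := by simp [sub_smul]
        rw [heq, norm_smul]
        have h1 : ‖(1 : ℝ) - χ x‖ ≤ 1 := by
          rw [Real.norm_eq_abs, abs_of_nonneg (by linarith [(hχ01 x).2])]
          linarith [(hχ01 x).1]
        calc ‖(1 : ℝ) - χ x‖ * ‖∫ n, f n x ∂ρ‖ ≤ 1 * C :=
              mul_le_mul h1 (hBbdd x) (norm_nonneg _) zero_le_one
          _ = C := one_mul C
      simpa [Set.indicator_of_mem (by simpa using hx : x ∈ Lᶜ)] using hub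
  have hBg : Continuous fun x => ∫ n, g n x ∂ρ := by
    have : (fun x => ∫ n, g n x ∂ρ) = fun x => χ x • ∫ n, f n x ∂ρ := funext hBg_eq
    rw [this]
    exact χ.continuous.smul hB
  have int_B : Integrable (fun x => ∫ n, f n x ∂ρ) μ :=
    Integrable.mono' (integrable_const C) hB.aestronglyMeasurable
      (Filter.Eventually.of_forall hBbdd)
  have int_Bg : Integrable (fun x => ∫ n, g n x ∂ρ) μ := by
    refine Integrable.mono' (integrable_const C) hBg.aestronglyMeasurable
      (Filter.Eventually.of_forall fun x => ?_)
    rw [hBg_eq x, norm_smul, Real.norm_eq_abs, abs_of_nonneg (hχ01 x).1]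
    calc χ x * ‖∫ n, f n x ∂ρ‖ ≤ 1 * C :=
          mul_le_mul (hχ01 x).2 (hBbdd x) (norm_nonneg _) zero_le_one
      _ = C := one_mul C
  have step2 : ‖(∫ x, (∫ n, f n x ∂ρ) ∂μ) - (∫ x, (∫ n, g n x ∂ρ) ∂μ)‖
      ≤ C * (μ Lᶜ).toReal := by
    rw [← integral_sub int_B int_Bg]
    calc ‖∫ x, ((∫ n, f n x ∂ρ) - (∫ n, g n x ∂ρ)) ∂μ‖
        ≤ ∫ x, ‖(∫ n, f n x ∂ρ) - (∫ n, g n x ∂ρ)‖ ∂μ := norm_integral_le_integral_norm _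
      _ ≤ ∫ x, Lᶜ.indicator (fun _ => C) x ∂μ := by
          apply integral_mono (int_B.sub int_Bg).norm int_ind
          intro x; exact E2 x
      _ = C * (μ Lᶜ).toReal := hind_int
  -- combine
  have htri : dist (∫ n, (∫ x, f n x ∂μ) ∂ρ) (∫ x, (∫ n, f n x ∂ρ) ∂μ)
      ≤ C * (μ Lᶜ).toReal + C * (μ Lᶜ).toReal := by
    calc dist (∫ n, (∫ x, f n x ∂μ) ∂ρ) (∫ x, (∫ n, f n x ∂ρ) ∂μ)
        ≤ dist (∫ n, (∫ x, f n x ∂μ) ∂ρ) (∫ n, (∫ x, g n x ∂μ) ∂ρ)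
          + dist (∫ n, (∫ x, g n x ∂μ) ∂ρ) (∫ x, (∫ n, f n x ∂ρ) ∂μ) := dist_triangle _ _ _
      _ ≤ C * (μ Lᶜ).toReal + C * (μ Lᶜ).toReal := by
          apply add_le_add
          · rw [dist_eq_norm]; exact step1
          · rw [hswapg, dist_comm, dist_eq_norm]; exact step2
  refine htri.trans ?_
  have : C * (μ Lᶜ).toReal + C * (μ Lᶜ).toReal ≤ 2 * C * δ := by
    have := mul_le_mul_of_nonneg_left hLsmall hC0
    nlinarith [ENNReal.toReal_nonneg (a := μ Lᶜ)]
  refine this.trans ?_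
  have h2C : (0:ℝ) < 2 * C + 1 := by linarith
  rw [hδdef, div_eq_inv_mul, ← mul_assoc]
  calc 2 * C * (2 * C + 1)⁻¹ * ε ≤ 1 * ε := by
        apply mul_le_mul_of_nonneg_right _ hε.le
        rw [← div_eq_mul_inv, div_le_one h2C]; linarith
    _ = ε := one_mul ε

set_option maxHeartbeats 1000000 in
/-- **Lemma 3.1(b).** If every neighbourhood of the identity of a locally compact group `G`
contains a compact normal subgroup `N` such that the projection of `μ` onto `G/N` is a
Choquet–Deny measure, then `μ` is a Choquet–Deny measure. -/
theorem lemma_3_1_b {G : Type*} [Group G] [TopologicalSpace G] [IsTopologicalGroup G]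
    [LocallyCompactSpace G] [MeasurableSpace G] [BorelSpace G]
    (μ : Measure G) [IsProbabilityMeasure μ] [μ.Regular]
    (hyp : ∀ U ∈ nhds (1 : G), ∃ N : Subgroup G, (N : Set G) ⊆ U ∧ IsCompact (N : Set G) ∧
      ∃ hN : N.Normal,
        letI := hN
        letI : MeasurableSpace (G ⧸ N) := borel (G ⧸ N)
        haveI : BorelSpace (G ⧸ N) := ⟨rfl⟩
        IsChoquetDenyMeasure (Measure.map (QuotientGroup.mk : G → G ⧸ N) μ)) :
    IsChoquetDenyMeasure μ := by
  intro h hcont hbdd hharm g y hy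
  obtain ⟨C, hC⟩ := hbdd
  have hC0 : (0:ℝ) ≤ C := le_trans (norm_nonneg _) (hC 1)
  have key : ∀ ε : ℝ, 0 < ε → ‖h (g * y) - h g‖ ≤ ε := by
    intro ε hε
    -- a good neighbourhood of 1
    have hU1 : {u : G | ‖h (g * u) - h g‖ < ε / 2} ∈ nhds (1 : G) := by
      have hcmap : Continuous fun u : G => ‖h (g * u) - h g‖ :=
        ((hcont.comp (continuous_const.mul continuous_id)).sub continuous_const).norm
      exact (isOpen_lt hcmap continuous_const).mem_nhds (by simp [half_pos hε])
    have hU2 : {u : G | ‖h (g * y * u) - h (g * y)‖ < ε / 2} ∈ nhds (1 : G) := by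
      have hcmap : Continuous fun u : G => ‖h (g * y * u) - h (g * y)‖ :=
        ((hcont.comp (continuous_const.mul continuous_id)).sub continuous_const).norm
      exact (isOpen_lt hcmap continuous_const).mem_nhds (by simp [half_pos hε])
    obtain ⟨N, hNU, hNc, hNnormal, hCD⟩ := hyp _ (Filter.inter_mem hU1 hU2)
    haveI := hNnormal
    letI : MeasurableSpace (G ⧸ N) := borel (G ⧸ N)
    haveI : BorelSpace (G ⧸ N) := ⟨rfl⟩
    haveI : CompactSpace ↥N := isCompact_iff_compactSpace.mp hNc
    haveI : LocallyCompactSpace ↥N :=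
      isCompact_univ.locallyCompactSpace_of_mem_nhds_of_group (x := 1) Filter.univ_mem
    haveI : BorelSpace ↥N := Subtype.borelSpace (N : Set G)
    -- normalized Haar measure on N
    set η : Measure ↥N := Measure.haar with hη
    have h0 : η Set.univ ≠ 0 := (isOpen_univ.measure_pos η ⟨1, trivial⟩).ne'
    have hT : η Set.univ ≠ ⊤ := (measure_lt_top η _).ne
    set ρ : Measure ↥N := (η Set.univ)⁻¹ • η with hρ
    haveI : IsProbabilityMeasure ρ :=
      ⟨by rw [hρ]; simp [Measure.smul_apply, ENNReal.inv_mul_cancel h0 hT]⟩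
    haveI : ρ.IsHaarMeasure :=
      Measure.IsHaarMeasure.smul (μ := η) (ENNReal.inv_ne_zero.mpr hT) (ENNReal.inv_ne_top.mpr h0)
    -- the averaged function
    set φ : G → ℂ := fun a => ∫ n : ↥N, h (a * (n : G)) ∂ρ with hφ
    have φcont : Continuous φ := by
      refine aux_cont_param ρ (fun a (n : ↥N) => h (a * (n : G)))
        (hcont.comp (continuous_fst.mul (continuous_subtype_val.comp continuous_snd)))
        isCompact_univ isClosed_univ ?_
      intro a n hn; exact absurd (Set.mem_univ n) hn
    have φbdd : ∀ a : G, ‖φ a‖ ≤ C := by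
      intro a
      calc ‖φ a‖ ≤ C * (ρ Set.univ).toReal :=
            norm_integral_le_of_norm_le_const (Filter.Eventually.of_forall fun n => hC _)
        _ = C := by simp
    -- right invariance along N
    have φinv : ∀ (a : G) (n₀ : ↥N), φ (a * (n₀ : G)) = φ a := by
      intro a n₀
      have hstep : ∫ m : ↥N, (fun m : ↥N => h (a * (m : G))) (n₀ * m) ∂ρ
          = ∫ m : ↥N, h (a * (m : G)) ∂ρ :=
        integral_mul_left_eq_self (μ := ρ) (fun m : ↥N => h (a * (m : G))) n₀
      have hl : φ (a * (n₀ : G)) = ∫ m : ↥N, (fun m : ↥N => h (a * (m : G))) (n₀ * m) ∂ρ := by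
        show (∫ n : ↥N, h (a * (n₀ : G) * (n : G)) ∂ρ) = _
        congr 1
        funext m
        simp [mul_assoc]
      rw [hl, hstep]
    -- conjugation invariance
    have φconj : ∀ a x : G,
        (∫ n : ↥N, h (a * (n : G) * x) ∂ρ) = ∫ n : ↥N, h (a * x * (n : G)) ∂ρ := by
      intro a x
      set e : ↥N ≃* ↥N := (MulAut.conjNormal x : MulAut ↥N) with he
      have hval : (fun n : ↥N => ((e n : ↥N) : G)) = fun n : ↥N => x * (n : G) * x⁻¹ := by
        funext n; exact MulAut.conjNormal_apply x n
      have hval' : (fun n : ↥N => ((e.symm n : ↥N) : G)) = fun n : ↥N => x⁻¹ * (n : G) * x := by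
        funext n; exact MulAut.conjNormal_symm_apply x n
      have hec : Continuous ⇑e := by
        apply continuous_induced_rng.mpr
        show Continuous fun n : ↥N => ((e n : ↥N) : G)
        rw [hval]
        exact (continuous_const.mul continuous_subtype_val).mul continuous_const
      have hec' : Continuous ⇑e.symm := by
        apply continuous_induced_rng.mpr
        show Continuous fun n : ↥N => ((e.symm n : ↥N) : G)
        rw [hval']
        exact (continuous_const.mul continuous_subtype_val).mul continuous_const
      have hmap : Measure.map (⇑e) ρ = ρ := aux_map_automorphism_eq ρ e hec hec'
      have hmeas : AEMeasurable (⇑e) ρ := hec.measurable.aemeasurable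
      calc (∫ n : ↥N, h (a * (n : G) * x) ∂ρ)
          = ∫ n : ↥N, h (a * (n : G) * x) ∂(Measure.map (⇑e) ρ) := by rw [hmap]
        _ = ∫ m : ↥N, h (a * ((e m : ↥N) : G) * x) ∂ρ := by
            apply integral_map hmeas
            exact (hcont.comp ((continuous_const.mul continuous_subtype_val).mul
              continuous_const)).aestronglyMeasurable
        _ = ∫ m : ↥N, h (a * x * (m : G)) ∂ρ := by
            congr 1
            funext m
            have h1 : ((e m : ↥N) : G) = x * (m : G) * x⁻¹ := MulAut.conjNormal_apply x m
            rw [h1]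
            congr 1
            group
    -- harmonicity of φ
    have φharm : ∀ a : G, φ a = ∫ x, φ (a * x) ∂μ := by
      intro a
      have hfcont : Continuous (Function.uncurry fun (n : ↥N) (x : G) => h (a * (n : G) * x)) := by
        apply hcont.comp
        exact (continuous_const.mul (continuous_subtype_val.comp continuous_fst)).mul
          continuous_snd
      have hAcont : Continuous fun n : ↥N => ∫ x, h (a * (n : G) * x) ∂μ := by
        have : (fun n : ↥N => ∫ x, h (a * (n : G) * x) ∂μ) = fun n : ↥N => h (a * (n : G)) := by
          funext n; exact (hharm (a * (n : G))).symm
        rw [this]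
        exact hcont.comp (continuous_const.mul continuous_subtype_val)
      have hswap : ∫ n : ↥N, (∫ x, h (a * (n : G) * x) ∂μ) ∂ρ
          = ∫ x, (∫ n : ↥N, h (a * (n : G) * x) ∂ρ) ∂μ := by
        exact aux_swap ρ μ (fun (n : ↥N) (x : G) => h (a * (n : G) * x)) hfcont
          (fun n x => hC _) hC0 hAcont
      calc φ a = ∫ n : ↥N, h (a * (n : G)) ∂ρ := by rw [hφ]
        _ = ∫ n : ↥N, (∫ x, h (a * (n : G) * x) ∂μ) ∂ρ := by
            congr 1
            funext n
            exact hharm (a * (n : G))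
        _ = ∫ x, (∫ n : ↥N, h (a * (n : G) * x) ∂ρ) ∂μ := hswap
        _ = ∫ x, (∫ n : ↥N, h (a * x * (n : G)) ∂ρ) ∂μ := by
            congr 1
            funext x
            exact φconj a x
        _ = ∫ x, φ (a * x) ∂μ := rfl
    -- descend to the quotient
    have hresp : ∀ a b : G, @Setoid.r G (QuotientGroup.leftRel N) a b → φ a = φ b := by
      intro a b hab
      have hmem : a⁻¹ * b ∈ N := (QuotientGroup.leftRel_apply).mp hab
      have hb : b = a * ((⟨a⁻¹ * b, hmem⟩ : ↥N) : G) := by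
        simp [mul_assoc]
      rw [hb, φinv]
    set H : G ⧸ N → ℂ := fun q => Quotient.liftOn' q φ hresp with hH
    have hHmk : ∀ a : G, H (QuotientGroup.mk a) = φ a := fun a => rfl
    have hπcont : Continuous (QuotientGroup.mk : G → G ⧸ N) := continuous_quotient_mk'
    have hπmeas : Measurable (QuotientGroup.mk : G → G ⧸ N) := hπcont.measurable
    have hHcont : Continuous H := by
      rw [(QuotientGroup.isQuotientMap_mk N).continuous_iff]
      exact φcont
    have hHbdd : ∀ q : G ⧸ N, ‖H q‖ ≤ C := by
      intro q
      obtain ⟨a, rfl⟩ := QuotientGroup.mk_surjective q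
      rw [hHmk]
      exact φbdd a
    have hHharm : ∀ q : G ⧸ N,
        H q = ∫ z, H (q * z) ∂(Measure.map (QuotientGroup.mk : G → G ⧸ N) μ) := by
      intro q
      obtain ⟨a, rfl⟩ := QuotientGroup.mk_surjective q
      have hmapint : ∫ z, H ((QuotientGroup.mk a : G ⧸ N) * z)
            ∂(Measure.map (QuotientGroup.mk : G → G ⧸ N) μ)
          = ∫ x, H ((QuotientGroup.mk a : G ⧸ N) * QuotientGroup.mk x) ∂μ :=
        integral_map hπmeas.aemeasurable
          ((hHcont.comp (continuous_const.mul continuous_id)).aestronglyMeasurable)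
      rw [hmapint]
      calc H (QuotientGroup.mk a)
          = φ a := hHmk a
        _ = ∫ x, φ (a * x) ∂μ := φharm a
        _ = ∫ x, H (QuotientGroup.mk a * QuotientGroup.mk x) ∂μ := by
            apply integral_congr_ae
            apply Filter.Eventually.of_forall
            intro x
            show φ (a * x) = H ((QuotientGroup.mk a : G ⧸ N) * QuotientGroup.mk x)
            rw [← QuotientGroup.mk_mul]
            exact (hHmk (a * x)).symm
    -- membership of the projection of y
    have hsupp : ∀ x ∈ measSupport μ,
        (QuotientGroup.mk x : G ⧸ N) ∈ measSupport (Measure.map (QuotientGroup.mk : G → G ⧸ N) μ) := by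
      intro x hx U hU
      obtain ⟨V, hVU, hVopen, hxV⟩ := mem_nhds_iff.mp hU
      have hpos : 0 < Measure.map (QuotientGroup.mk : G → G ⧸ N) μ V := by
        rw [Measure.map_apply hπmeas hVopen.measurableSet]
        exact hx _ (hπcont.continuousAt.preimage_mem_nhds (hVopen.mem_nhds hxV))
      exact hpos.trans_le (measure_mono hVU)
    have hmem : (QuotientGroup.mk y : G ⧸ N)
        ∈ adaptedSubgroup (Measure.map (QuotientGroup.mk : G → G ⧸ N) μ) := by
      have hy' : y ∈ closure ((Subgroup.closure (measSupport μ) : Subgroup G) : Set G) := hy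
      have h1 : (QuotientGroup.mk y : G ⧸ N)
          ∈ closure ((QuotientGroup.mk : G → G ⧸ N) ''
            ((Subgroup.closure (measSupport μ) : Subgroup G) : Set G)) :=
        image_closure_subset_closure_image hπcont (Set.mem_image_of_mem _ hy')
      have h2 : (QuotientGroup.mk : G → G ⧸ N) ''
            ((Subgroup.closure (measSupport μ) : Subgroup G) : Set G)
          ⊆ ((Subgroup.closure (measSupport (Measure.map (QuotientGroup.mk : G → G ⧸ N) μ)) :
              Subgroup (G ⧸ N)) : Set (G ⧸ N)) := by
        have heq : (QuotientGroup.mk : G → G ⧸ N) ''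
              ((Subgroup.closure (measSupport μ) : Subgroup G) : Set G)
            = ((Subgroup.map (QuotientGroup.mk' N) (Subgroup.closure (measSupport μ)) :
                Subgroup (G ⧸ N)) : Set (G ⧸ N)) := by
          rw [Subgroup.coe_map]
          rfl
        rw [heq, MonoidHom.map_closure]
        apply Subgroup.closure_mono
        rintro _ ⟨x, hx, rfl⟩
        exact hsupp x hx
      show (QuotientGroup.mk y : G ⧸ N) ∈ closure
        ((Subgroup.closure (measSupport (Measure.map (QuotientGroup.mk : G → G ⧸ N) μ)) :
          Subgroup (G ⧸ N)) : Set (G ⧸ N))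
      exact closure_mono h2 h1
    -- apply Choquet-Deny on the quotient
    have hquot : φ (g * y) = φ g := by
      have := hCD H hHcont ⟨C, hHbdd⟩ hHharm (QuotientGroup.mk g) (QuotientGroup.mk y) hmem
      rw [← QuotientGroup.mk_mul, hHmk, hHmk] at this
      exact this
    -- closeness of φ and h at g and at g * y
    have hint : ∀ a : G, Integrable (fun n : ↥N => h (a * (n : G)) - h a) ρ := by
      intro a
      apply Integrable.sub _ (integrable_const (h a))
      refine Integrable.mono' (integrable_const C)
        ((hcont.comp (continuous_const.mul continuous_subtype_val)).aestronglyMeasurable)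
        (Filter.Eventually.of_forall fun n => hC _)
    have hclose : ∀ a : G, (∀ u ∈ (N : Set G), ‖h (a * u) - h a‖ ≤ ε / 2)
        → ‖φ a - h a‖ ≤ ε / 2 := by
      intro a ha
      have heq : φ a - h a = ∫ n : ↥N, (h (a * (n : G)) - h a) ∂ρ := by
        rw [integral_sub _ (integrable_const (h a))]
        · rw [integral_const]
          simp [hφ]
        · refine Integrable.mono' (integrable_const C)
            ((hcont.comp (continuous_const.mul continuous_subtype_val)).aestronglyMeasurable)
            (Filter.Eventually.of_forall fun n => hC _)
      rw [heq]
      calc ‖∫ n : ↥N, (h (a * (n : G)) - h a) ∂ρ‖ ≤ (ε / 2) * (ρ Set.univ).toReal :=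
            norm_integral_le_of_norm_le_const
              (Filter.Eventually.of_forall fun n => ha (n : G) n.2)
        _ = ε / 2 := by simp
    have hclose1 : ‖φ g - h g‖ ≤ ε / 2 := by
      apply hclose
      intro u hu
      exact (hNU hu).1.le
    have hclose2 : ‖φ (g * y) - h (g * y)‖ ≤ ε / 2 := by
      apply hclose
      intro u hu
      exact (hNU hu).2.le
    calc ‖h (g * y) - h g‖
        ≤ ‖h (g * y) - φ (g * y)‖ + ‖φ (g * y) - h g‖ := by
          have := norm_sub_le (h (g * y) - φ (g * y)) (h g - φ (g * y))
          calc ‖h (g * y) - h g‖ = ‖(h (g * y) - φ (g * y)) - (h g - φ (g * y))‖ := by ring_nf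
            _ ≤ ‖h (g * y) - φ (g * y)‖ + ‖h g - φ (g * y)‖ := norm_sub_le _ _
            _ = ‖h (g * y) - φ (g * y)‖ + ‖φ (g * y) - h g‖ := by rw [norm_sub_rev (h g)]
      _ ≤ ε / 2 + ε / 2 := by
          apply add_le_add
          · rw [norm_sub_rev]; exact hclose2
          · rw [hquot]; exact hclose1
      _ = ε := by ring
  by_contra hne
  have hpos : 0 < ‖h (g * y) - h g‖ := by
    rw [norm_pos_iff, sub_ne_zero]
    exact hne
  have := key (‖h (g * y) - h g‖ / 2) (half_pos hpos)
  linarith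
end
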